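/- arXiv:1311.3737 — 9 statements merged into one kernel-verified Lean document; each statement's English description precedes it below -/
import Mathlib

section
/- Let Λ₋, Λ₊ : ℝ → ℝ be C¹ with Λ₋(x) < Λ₊(x) for all x, and let λ₋, λ₊ : [0,T) × ℝ → ℝ be a C¹ solution of the diagonal system (∗) with λ₋(0,·) = Λ₋, λ₊(0,·) = Λ₊ and with λ₋(t,x) < λ₊(t,x) on [0,T) × ℝ. Fix α ≤ β, let x⁻(·,α) be the C¹ solution of dx/dt = λ₊(t,x), x(0) = α, and x⁺(·,β) the C¹ solution of dx/dt = λ₋(t,x), x(0) = β, both defined on [0,t*] with 0 ≤ t* < T. If x⁻(t*,α) = x⁺(t*,β), then t* = ∫_α^β dζ/(Λ₊(ζ) − Λ₋(ζ)) and x⁻(t*,α) = ½[α + β + ∫_α^β (Λ₊(ζ) + Λ₋(ζ))/(Λ₊(ζ) − Λ₋(ζ)) dζ]. -/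
open Set

open MeasureTheory

private lemma clm_eval (L : ℝ × ℝ →L[ℝ] ℝ) (x y : ℝ) : L (x, y) = x * L (1, 0) + y * L (0, 1) := by
  have h : ((x, y) : ℝ × ℝ) = x • ((1:ℝ), (0:ℝ)) + y • ((0:ℝ), (1:ℝ)) := by
    simp [Prod.ext_iff]
  rw [h, L.map_add, L.map_smul, L.map_smul, smul_eq_mul, smul_eq_mul]

private lemma deriv_avg (T' : ℝ) (P Q : ℝ × ℝ → ℝ) (DP DQ : ℝ × ℝ → (ℝ × ℝ →L[ℝ] ℝ))
    (hDP : ∀ p ∈ Ioo (0:ℝ) T' ×ˢ (univ : Set ℝ), HasFDerivAt P (DP p) p)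
    (hDQ : ∀ p ∈ Ioo (0:ℝ) T' ×ˢ (univ : Set ℝ), HasFDerivAt Q (DQ p) p)
    (hDPc : ContinuousOn DP (Ioo (0:ℝ) T' ×ˢ (univ : Set ℝ)))
    (hrel : ∀ p ∈ Ioo (0:ℝ) T' ×ˢ (univ : Set ℝ), DP p (1, 0) + DQ p (0, 1) = 0)
    (a b a' b' : ℝ → ℝ) (t₀ : ℝ) (ht : t₀ ∈ Ioo (0:ℝ) T')
    (ha : ∀ t ∈ Ioo (0:ℝ) T', HasDerivAt a (a' t) t)
    (hb : ∀ t ∈ Ioo (0:ℝ) T', HasDerivAt b (b' t) t)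
    (ha' : ContinuousOn a' (Ioo 0 T')) (hb' : ContinuousOn b' (Ioo 0 T')) :
    HasDerivAt (fun t => (b t - a t) * ∫ s in (0:ℝ)..1, P (t, a t + s * (b t - a t)))
      ((b' t₀ * P (t₀, b t₀) - Q (t₀, b t₀)) - (a' t₀ * P (t₀, a t₀) - Q (t₀, a t₀))) t₀ := by
  have hUo : IsOpen (Ioo (0:ℝ) T' ×ˢ (univ : Set ℝ)) := isOpen_Ioo.prod isOpen_univ
  obtain ⟨ε, hε, hball⟩ : ∃ ε > 0, Metric.closedBall t₀ ε ⊆ Ioo 0 T' := by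
    rcases Metric.nhds_basis_closedBall.mem_iff.mp (isOpen_Ioo.mem_nhds ht) with ⟨ε, h1, h2⟩
    exact ⟨ε, h1, h2⟩
  have haC : ContinuousOn a (Ioo 0 T') := fun t htI => (ha t htI).continuousAt.continuousWithinAt
  have hbC : ContinuousOn b (Ioo 0 T') := fun t htI => (hb t htI).continuousAt.continuousWithinAt
  have hPc : ContinuousOn P (Ioo (0:ℝ) T' ×ˢ (univ : Set ℝ)) :=
    fun p hp => (hDP p hp).continuousAt.continuousWithinAt
  have hfst : MapsTo (Prod.fst : ℝ × ℝ → ℝ) (Ioo (0:ℝ) T' ×ˢ (univ : Set ℝ)) (Ioo 0 T') :=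
    fun p hp => hp.1
  -- the path
  have hγmem : ∀ t ∈ Ioo (0:ℝ) T', ∀ s : ℝ,
      ((t, a t + s * (b t - a t)) : ℝ × ℝ) ∈ Ioo (0:ℝ) T' ×ˢ (univ : Set ℝ) :=
    fun t htI s => ⟨htI, trivial⟩
  have hγcont : ContinuousOn (fun q : ℝ × ℝ => ((q.1, a q.1 + q.2 * (b q.1 - a q.1)) : ℝ × ℝ))
      (Ioo (0:ℝ) T' ×ˢ (univ : Set ℝ)) := by
    apply ContinuousOn.prodMk
    · exact continuousOn_fst
    · exact (haC.comp continuousOn_fst hfst).add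
        (continuousOn_snd.mul ((hbC.comp continuousOn_fst hfst).sub (haC.comp continuousOn_fst hfst)))
  set F' : ℝ → ℝ → ℝ :=
    fun t s => DP (t, a t + s * (b t - a t)) (1, a' t + s * (b' t - a' t)) with hF'def
  have hF'c : ContinuousOn (fun q : ℝ × ℝ => F' q.1 q.2) (Ioo (0:ℝ) T' ×ˢ (univ : Set ℝ)) := by
    apply ContinuousOn.clm_apply
    · exact hDPc.comp hγcont (fun q hq => hγmem q.1 hq.1 q.2)
    · exact continuousOn_const.prodMk ((ha'.comp continuousOn_fst hfst).add
        (continuousOn_snd.mul ((hb'.comp continuousOn_fst hfst).sub (ha'.comp continuousOn_fst hfst))))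
  -- bound on compact
  have hK : IsCompact (Metric.closedBall t₀ ε ×ˢ Icc (0:ℝ) 1) :=
    (isCompact_closedBall _ _).prod isCompact_Icc
  have hKsub : Metric.closedBall t₀ ε ×ˢ Icc (0:ℝ) 1 ⊆ Ioo (0:ℝ) T' ×ˢ (univ : Set ℝ) :=
    fun q hq => ⟨hball hq.1, trivial⟩
  obtain ⟨C, hC⟩ := hK.exists_bound_of_continuousOn (hF'c.mono hKsub)
  -- continuity in s at fixed t
  have hcont_s : ∀ t ∈ Ioo (0:ℝ) T', Continuous (fun s => P (t, a t + s * (b t - a t))) := by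
    intro t htI
    apply hPc.comp_continuous
    · exact continuous_const.prodMk (continuous_const.add (continuous_id.mul continuous_const))
    · exact fun s => hγmem t htI s
  have hcont_F' : Continuous (fun s => F' t₀ s) := by
    have hin : Continuous (fun s : ℝ => ((t₀, s) : ℝ × ℝ)) := continuous_const.prodMk continuous_id
    exact hF'c.comp_continuous hin (fun s => ⟨ht, trivial⟩)
  -- derivative in t of the integrand
  have hdiff : ∀ s : ℝ, ∀ t ∈ Metric.ball t₀ ε,
      HasDerivAt (fun u => P (u, a u + s * (b u - a u))) (F' t s) t := by
    intro s t htb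
    have htI : t ∈ Ioo 0 T' := hball (Metric.ball_subset_closedBall htb)
    have hpath : HasDerivAt (fun u => ((u, a u + s * (b u - a u)) : ℝ × ℝ))
        (1, a' t + s * (b' t - a' t)) t := by
      refine (hasDerivAt_id t).prodMk ?_
      exact (ha t htI).add (((hb t htI).sub (ha t htI)).const_mul s)
    exact (hDP _ (hγmem t htI s)).comp_hasDerivAt t hpath
  -- dominated convergence
  have key := intervalIntegral.hasDerivAt_integral_of_dominated_loc_of_deriv_le
    (μ := volume) (F := fun t s => P (t, a t + s * (b t - a t))) (F' := F')
    (a := 0) (b := 1) (x₀ := t₀) (bound := fun _ => |C|) (Metric.ball_mem_nhds t₀ hε)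
    ?_ ?_ ?_ ?_ ?_ ?_
  rotate_left
  · filter_upwards [isOpen_Ioo.mem_nhds ht] with t htI
    exact (hcont_s t htI).aestronglyMeasurable
  · exact (hcont_s t₀ ht).intervalIntegrable 0 1
  · exact hcont_F'.aestronglyMeasurable
  · refine MeasureTheory.ae_of_all _ (fun s hs t htb => ?_)
    have hs' : s ∈ Icc (0:ℝ) 1 := by
      rw [uIoc_of_le (by norm_num : (0:ℝ) ≤ 1)] at hs
      exact Ioc_subset_Icc_self hs
    calc ‖F' t s‖ ≤ C := hC (t, s) ⟨Metric.ball_subset_closedBall htb, hs'⟩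
    _ ≤ |C| := le_abs_self C
  · exact intervalIntegrable_const
  · exact MeasureTheory.ae_of_all _ (fun s _ t htb => hdiff s t htb)
  obtain ⟨hF'int, hI⟩ := key
  -- FTC in s for the relation
  have hh : ∀ s : ℝ, HasDerivAt
      (fun s => (a' t₀ + s * (b' t₀ - a' t₀)) * P (t₀, a t₀ + s * (b t₀ - a t₀))
        - Q (t₀, a t₀ + s * (b t₀ - a t₀)))
      ((b t₀ - a t₀) * F' t₀ s + (b' t₀ - a' t₀) * P (t₀, a t₀ + s * (b t₀ - a t₀))) s := by
    intro s
    have hmem₀ : ((t₀, a t₀ + s * (b t₀ - a t₀)) : ℝ × ℝ) ∈ Ioo (0:ℝ) T' ×ˢ (univ : Set ℝ) :=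
      ⟨ht, trivial⟩
    have hσ : HasDerivAt (fun s : ℝ => ((t₀, a t₀ + s * (b t₀ - a t₀)) : ℝ × ℝ))
        ((0 : ℝ), b t₀ - a t₀) s :=
      (hasDerivAt_const s t₀).prodMk ((hasDerivAt_mul_const (b t₀ - a t₀)).const_add (a t₀))
    have hP1 := (hDP _ hmem₀).comp_hasDerivAt s hσ
    have hQ1 := (hDQ _ hmem₀).comp_hasDerivAt s hσ
    have hlin : HasDerivAt (fun s : ℝ => a' t₀ + s * (b' t₀ - a' t₀)) (b' t₀ - a' t₀) s :=
      (hasDerivAt_mul_const (b' t₀ - a' t₀)).const_add (a' t₀)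
    have hcomb := (hlin.mul hP1).sub hQ1
    refine hcomb.congr_deriv (Eq.symm ?_)
    have hr := hrel _ hmem₀
    have e1 : DP (t₀, a t₀ + s * (b t₀ - a t₀)) (1, a' t₀ + s * (b' t₀ - a' t₀))
        = DP (t₀, a t₀ + s * (b t₀ - a t₀)) (1, 0)
          + (a' t₀ + s * (b' t₀ - a' t₀)) * DP (t₀, a t₀ + s * (b t₀ - a t₀)) (0, 1) := by
      rw [clm_eval]; ring
    have e2 : DP (t₀, a t₀ + s * (b t₀ - a t₀)) (0, b t₀ - a t₀)
        = (b t₀ - a t₀) * DP (t₀, a t₀ + s * (b t₀ - a t₀)) (0, 1) := by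
      rw [clm_eval]; ring
    have e3 : DQ (t₀, a t₀ + s * (b t₀ - a t₀)) (0, b t₀ - a t₀)
        = (b t₀ - a t₀) * DQ (t₀, a t₀ + s * (b t₀ - a t₀)) (0, 1) := by
      rw [clm_eval]; ring
    simp only [hF'def, Function.comp_apply]
    rw [e1, e2, e3]
    linear_combination (b t₀ - a t₀) * hr
  have hintF' : IntervalIntegrable (fun s => (b t₀ - a t₀) * F' t₀ s) volume 0 1 :=
    (continuous_const.mul hcont_F').intervalIntegrable 0 1
  have hintP : IntervalIntegrable (fun s => (b' t₀ - a' t₀) * P (t₀, a t₀ + s * (b t₀ - a t₀)))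
      volume 0 1 := (continuous_const.mul (hcont_s t₀ ht)).intervalIntegrable 0 1
  have hFTC := intervalIntegral.integral_eq_sub_of_hasDerivAt (f := fun s =>
      (a' t₀ + s * (b' t₀ - a' t₀)) * P (t₀, a t₀ + s * (b t₀ - a t₀))
        - Q (t₀, a t₀ + s * (b t₀ - a t₀)))
    (fun s _ => hh s) ((hintF'.add hintP))
  rw [intervalIntegral.integral_add hintF' hintP,
    intervalIntegral.integral_const_mul, intervalIntegral.integral_const_mul] at hFTC
  have hmul := ((hb t₀ ht).sub (ha t₀ ht)).mul hI
  refine hmul.congr_deriv (Eq.symm ?_)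
  have e1 : a t₀ + 1 * (b t₀ - a t₀) = b t₀ := by ring
  have e0 : a t₀ + 0 * (b t₀ - a t₀) = a t₀ := by ring
  have e1' : a' t₀ + 1 * (b' t₀ - a' t₀) = b' t₀ := by ring
  have e0' : a' t₀ + 0 * (b' t₀ - a' t₀) = a' t₀ := by ring
  rw [e1, e0, e1', e0'] at hFTC
  simp only [Pi.sub_apply]
  linarith [hFTC]

private lemma const_of_deriv_zero (tstar : ℝ) (hts : 0 ≤ tstar) (f : ℝ → ℝ)
    (hc : ContinuousOn f (Icc 0 tstar))
    (hd : ∀ t ∈ Ioo (0:ℝ) tstar, HasDerivAt f 0 t) : f tstar = f 0 := by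
  have hdiff : DifferentiableOn ℝ f (interior (Icc 0 tstar)) := by
    rw [interior_Icc]
    exact fun t htI => (hd t htI).differentiableAt.differentiableWithinAt
  have hderiv : ∀ x ∈ interior (Icc 0 tstar), deriv f x = 0 := by
    rw [interior_Icc]
    exact fun x hx => (hd x hx).deriv
  have hmono := monotoneOn_of_deriv_nonneg (convex_Icc (0:ℝ) tstar) hc hdiff
    (fun x hx => ge_of_eq (hderiv x hx))
  have hanti := antitoneOn_of_deriv_nonpos (convex_Icc (0:ℝ) tstar) hc hdiff
    (fun x hx => le_of_eq (hderiv x hx))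
  have h0 : (0:ℝ) ∈ Icc (0:ℝ) tstar := left_mem_Icc.mpr hts
  have h1 : tstar ∈ Icc (0:ℝ) tstar := right_mem_Icc.mpr hts
  exact le_antisymm (hanti h0 h1 hts) (hmono h0 h1 hts)

set_option maxHeartbeats 2000000

/-- Coordinates of the intersection point of two characteristics of different families,
expressed in terms of the initial data (Lemma 2.2 / Kong–Zhang formulas (2.8)–(2.9)). -/
theorem intersection_of_characteristics_coordinates
    (T : ℝ) (hT : 0 < T)
    (Lm Lp : ℝ → ℝ) (hLm : ContDiff ℝ 1 Lm) (hLp : ContDiff ℝ 1 Lp)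
    (hord : ∀ x, Lm x < Lp x)
    (lm lp : ℝ × ℝ → ℝ)
    (hlm : ContDiffOn ℝ 1 lm (Ico 0 T ×ˢ (univ : Set ℝ)))
    (hlp : ContDiffOn ℝ 1 lp (Ico 0 T ×ˢ (univ : Set ℝ)))
    (hinit : ∀ x : ℝ, lm (0, x) = Lm x ∧ lp (0, x) = Lp x)
    (hordl : ∀ t ∈ Ico (0:ℝ) T, ∀ x : ℝ, lm (t, x) < lp (t, x))
    (sys1 : ∀ t ∈ Ico (0:ℝ) T, ∀ x : ℝ,
      derivWithin (fun s => lm (s, x)) (Ico 0 T) t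
        + lp (t, x) * deriv (fun y => lm (t, y)) x = 0)
    (sys2 : ∀ t ∈ Ico (0:ℝ) T, ∀ x : ℝ,
      derivWithin (fun s => lp (s, x)) (Ico 0 T) t
        + lm (t, x) * deriv (fun y => lp (t, y)) x = 0)
    (α β tstar : ℝ) (hαβ : α ≤ β) (hts0 : 0 ≤ tstar) (htsT : tstar < T)
    (xm xp : ℝ → ℝ)
    (hxm0 : xm 0 = α) (hxp0 : xp 0 = β)
    (hxm : ∀ t ∈ Icc 0 tstar, HasDerivWithinAt xm (lp (t, xm t)) (Icc 0 tstar) t)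
    (hxp : ∀ t ∈ Icc 0 tstar, HasDerivWithinAt xp (lm (t, xp t)) (Icc 0 tstar) t)
    (hmeet : xm tstar = xp tstar) :
    tstar = ∫ ζ in α..β, 1 / (Lp ζ - Lm ζ)
    ∧ xm tstar = (α + β + ∫ ζ in α..β, (Lp ζ + Lm ζ) / (Lp ζ - Lm ζ)) / 2 := by
  rcases eq_or_lt_of_le hts0 with h0 | h0
  · -- degenerate case tstar = 0
    have hαβ' : α = β := by
      rw [← hxm0, ← hxp0, h0]; exact hmeet
    rw [← hαβ', intervalIntegral.integral_same, intervalIntegral.integral_same, ← h0, hxm0]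
    constructor <;> ring
  -- main case
  -- basic set inclusions and positivity
  have hsub1 : Ioo (0:ℝ) tstar ⊆ Ico 0 T := fun t h => ⟨h.1.le, h.2.trans htsT⟩
  have hsubT : Ioo (0:ℝ) tstar ⊆ Ioo 0 T := fun t h => ⟨h.1, h.2.trans htsT⟩
  have hIccIco : Icc (0:ℝ) tstar ⊆ Ico 0 T := fun t h => ⟨h.1, lt_of_le_of_lt h.2 htsT⟩
  have hUsub : (Ioo (0:ℝ) tstar ×ˢ (univ : Set ℝ)) ⊆ Ico 0 T ×ˢ (univ : Set ℝ) :=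
    prod_mono hsub1 subset_rfl
  have hUsub' : (Ioo (0:ℝ) tstar ×ˢ (univ : Set ℝ)) ⊆ Ioo 0 T ×ˢ (univ : Set ℝ) :=
    prod_mono hsubT subset_rfl
  have hOpenT : IsOpen (Ioo (0:ℝ) T ×ˢ (univ : Set ℝ)) := isOpen_Ioo.prod isOpen_univ
  have hsubTIco : (Ioo (0:ℝ) T ×ˢ (univ : Set ℝ)) ⊆ Ico 0 T ×ˢ (univ : Set ℝ) :=
    prod_mono Ioo_subset_Ico_self subset_rfl
  have hnhds : ∀ p ∈ Ioo (0:ℝ) tstar ×ˢ (univ : Set ℝ),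
      (Ico 0 T ×ˢ (univ : Set ℝ)) ∈ nhds p := by
    intro p hp
    exact mem_nhds_iff.mpr ⟨Ioo 0 T ×ˢ (univ : Set ℝ), hsubTIco, hOpenT, hUsub' hp⟩
  -- nonvanishing of the denominator
  have hne0 : ∀ p ∈ Ico (0:ℝ) T ×ˢ (univ : Set ℝ), lp p - lm p ≠ 0 := by
    rintro ⟨t, x⟩ hp
    exact sub_ne_zero.mpr (ne_of_gt (hordl t hp.1 x))
  have hne : ∀ p ∈ Ioo (0:ℝ) tstar ×ˢ (univ : Set ℝ), lp p - lm p ≠ 0 :=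
    fun p hp => hne0 p (hUsub hp)
  -- total derivatives of lm, lp
  have hdm : ∀ p ∈ Ioo (0:ℝ) tstar ×ˢ (univ : Set ℝ), HasFDerivAt lm (fderiv ℝ lm p) p :=
    fun p hp => ((hlm.contDiffAt (hnhds p hp)).differentiableAt one_ne_zero).hasFDerivAt
  have hdp : ∀ p ∈ Ioo (0:ℝ) tstar ×ˢ (univ : Set ℝ), HasFDerivAt lp (fderiv ℝ lp p) p :=
    fun p hp => ((hlp.contDiffAt (hnhds p hp)).differentiableAt one_ne_zero).hasFDerivAt
  -- continuity of the derivatives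
  have hDmc : ContinuousOn (fun p => fderiv ℝ lm p) (Ioo (0:ℝ) tstar ×ˢ (univ : Set ℝ)) :=
    ((hlm.mono hsubTIco).continuousOn_fderiv_of_isOpen hOpenT le_rfl).mono hUsub'
  have hDpc : ContinuousOn (fun p => fderiv ℝ lp p) (Ioo (0:ℝ) tstar ×ˢ (univ : Set ℝ)) :=
    ((hlp.mono hsubTIco).continuousOn_fderiv_of_isOpen hOpenT le_rfl).mono hUsub'
  have hlmc : ContinuousOn lm (Ico 0 T ×ˢ (univ : Set ℝ)) := hlm.continuousOn
  have hlpc : ContinuousOn lp (Ico 0 T ×ˢ (univ : Set ℝ)) := hlp.continuousOn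
  have hlmcU : ContinuousOn lm (Ioo (0:ℝ) tstar ×ˢ (univ : Set ℝ)) := hlmc.mono hUsub
  have hlpcU : ContinuousOn lp (Ioo (0:ℝ) tstar ×ˢ (univ : Set ℝ)) := hlpc.mono hUsub
  -- the system in terms of fderiv
  have hsysm : ∀ p ∈ Ioo (0:ℝ) tstar ×ˢ (univ : Set ℝ),
      fderiv ℝ lm p (1, 0) = -(lp p * fderiv ℝ lm p (0, 1)) := by
    rintro ⟨t, x⟩ hp
    have htI : t ∈ Ico 0 T := hsub1 hp.1
    have htT : t ∈ Ioo 0 T := hsubT hp.1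
    have hF := hdm _ hp
    have h1 : HasDerivAt (fun s => lm (s, x)) (fderiv ℝ lm (t, x) (1, 0)) t := by
      have hpath : HasDerivAt (fun s : ℝ => ((s, x) : ℝ × ℝ)) (1, 0) t :=
        (hasDerivAt_id t).prodMk (hasDerivAt_const t x)
      exact hF.comp_hasDerivAt t hpath
    have h2 : HasDerivAt (fun y => lm (t, y)) (fderiv ℝ lm (t, x) (0, 1)) x := by
      have hpath : HasDerivAt (fun y : ℝ => ((t, y) : ℝ × ℝ)) (0, 1) x :=
        (hasDerivAt_const x t).prodMk (hasDerivAt_id x)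
      exact hF.comp_hasDerivAt x hpath
    have e1 : derivWithin (fun s => lm (s, x)) (Ico 0 T) t = fderiv ℝ lm (t, x) (1, 0) := by
      rw [derivWithin_of_mem_nhds (Ico_mem_nhds htT.1 htT.2)]
      exact h1.deriv
    have hs := sys1 t htI x
    rw [e1, h2.deriv] at hs
    linarith
  have hsysp : ∀ p ∈ Ioo (0:ℝ) tstar ×ˢ (univ : Set ℝ),
      fderiv ℝ lp p (1, 0) = -(lm p * fderiv ℝ lp p (0, 1)) := by
    rintro ⟨t, x⟩ hp
    have htI : t ∈ Ico 0 T := hsub1 hp.1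
    have htT : t ∈ Ioo 0 T := hsubT hp.1
    have hF := hdp _ hp
    have h1 : HasDerivAt (fun s => lp (s, x)) (fderiv ℝ lp (t, x) (1, 0)) t := by
      have hpath : HasDerivAt (fun s : ℝ => ((s, x) : ℝ × ℝ)) (1, 0) t :=
        (hasDerivAt_id t).prodMk (hasDerivAt_const t x)
      exact hF.comp_hasDerivAt t hpath
    have h2 : HasDerivAt (fun y => lp (t, y)) (fderiv ℝ lp (t, x) (0, 1)) x := by
      have hpath : HasDerivAt (fun y : ℝ => ((t, y) : ℝ × ℝ)) (0, 1) x :=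
        (hasDerivAt_const x t).prodMk (hasDerivAt_id x)
      exact hF.comp_hasDerivAt x hpath
    have e1 : derivWithin (fun s => lp (s, x)) (Ico 0 T) t = fderiv ℝ lp (t, x) (1, 0) := by
      rw [derivWithin_of_mem_nhds (Ico_mem_nhds htT.1 htT.2)]
      exact h1.deriv
    have hs := sys2 t htI x
    rw [e1, h2.deriv] at hs
    linarith
  -- derivative of W = (lp - lm)⁻¹
  have hDW : ∀ p ∈ Ioo (0:ℝ) tstar ×ˢ (univ : Set ℝ),
      HasFDerivAt (fun q : ℝ × ℝ => (lp q - lm q)⁻¹)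
        ((-((lp p - lm p) ^ 2)⁻¹) • (fderiv ℝ lp p - fderiv ℝ lm p)) p := by
    intro p hp
    have hd : HasFDerivAt (fun q => lp q - lm q) (fderiv ℝ lp p - fderiv ℝ lm p) p :=
      (hdp p hp).sub (hdm p hp)
    exact (hasDerivAt_inv (hne p hp)).comp_hasFDerivAt p hd
  have hDWc : ContinuousOn
      (fun p : ℝ × ℝ => (-((lp p - lm p) ^ 2)⁻¹) • (fderiv ℝ lp p - fderiv ℝ lm p))
      (Ioo (0:ℝ) tstar ×ˢ (univ : Set ℝ)) := by
    refine ContinuousOn.fun_smul ?_ (hDpc.sub hDmc)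
    exact (((hlpcU.sub hlmcU).pow 2).inv₀ (fun p hp => pow_ne_zero 2 (hne p hp))).neg
  -- derivative of V = (lp + lm) * (lp - lm)⁻¹
  have hDV : ∀ p ∈ Ioo (0:ℝ) tstar ×ˢ (univ : Set ℝ),
      HasFDerivAt (fun q : ℝ × ℝ => (lp q + lm q) * (lp q - lm q)⁻¹)
        ((lp p + lm p) • ((-((lp p - lm p) ^ 2)⁻¹) • (fderiv ℝ lp p - fderiv ℝ lm p))
          + (lp p - lm p)⁻¹ • (fderiv ℝ lp p + fderiv ℝ lm p)) p :=
    fun p hp => ((hdp p hp).add (hdm p hp)).mul (hDW p hp)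
  have hDVc : ContinuousOn
      (fun p : ℝ × ℝ => (lp p + lm p) • ((-((lp p - lm p) ^ 2)⁻¹) • (fderiv ℝ lp p - fderiv ℝ lm p))
        + (lp p - lm p)⁻¹ • (fderiv ℝ lp p + fderiv ℝ lm p))
      (Ioo (0:ℝ) tstar ×ˢ (univ : Set ℝ)) := by
    refine ContinuousOn.add ((hlpcU.add hlmcU).smul hDWc) ?_
    exact ((hlpcU.sub hlmcU).inv₀ hne).smul (hDpc.add hDmc)
  -- derivative of cW = (1/2) * V
  have hDcW : ∀ p ∈ Ioo (0:ℝ) tstar ×ˢ (univ : Set ℝ),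
      HasFDerivAt (fun q : ℝ × ℝ => (1/2 : ℝ) * ((lp q + lm q) * (lp q - lm q)⁻¹))
        ((1/2 : ℝ) • ((lp p + lm p) • ((-((lp p - lm p) ^ 2)⁻¹) • (fderiv ℝ lp p - fderiv ℝ lm p))
          + (lp p - lm p)⁻¹ • (fderiv ℝ lp p + fderiv ℝ lm p))) p :=
    fun p hp => (hDV p hp).const_mul (1/2 : ℝ)
  -- derivative of F₂ = 2 * (lm * lp * (lp - lm)⁻¹)
  have hDF2 : ∀ p ∈ Ioo (0:ℝ) tstar ×ˢ (univ : Set ℝ),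
      HasFDerivAt (fun q : ℝ × ℝ => (2 : ℝ) * (lm q * lp q * (lp q - lm q)⁻¹))
        ((2 : ℝ) • ((lm p * lp p) • ((-((lp p - lm p) ^ 2)⁻¹) • (fderiv ℝ lp p - fderiv ℝ lm p))
          + (lp p - lm p)⁻¹ • (lm p • fderiv ℝ lp p + lp p • fderiv ℝ lm p))) p :=
    fun p hp => (((hdm p hp).mul (hdp p hp)).mul (hDW p hp)).const_mul (2 : ℝ)
  -- the two conservation-law relations
  have hrel1 : ∀ p ∈ Ioo (0:ℝ) tstar ×ˢ (univ : Set ℝ),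
      ((-((lp p - lm p) ^ 2)⁻¹) • (fderiv ℝ lp p - fderiv ℝ lm p)) (1, 0)
        + ((1/2 : ℝ) • ((lp p + lm p) • ((-((lp p - lm p) ^ 2)⁻¹) • (fderiv ℝ lp p - fderiv ℝ lm p))
          + (lp p - lm p)⁻¹ • (fderiv ℝ lp p + fderiv ℝ lm p))) (0, 1) = 0 := by
    intro p hp
    have h1 := hsysm p hp
    have h2 := hsysp p hp
    have hd := hne p hp
    simp only [ContinuousLinearMap.smul_apply, ContinuousLinearMap.add_apply,
      ContinuousLinearMap.sub_apply, smul_eq_mul]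
    rw [h1, h2]
    field_simp
    ring
  have hrel2 : ∀ p ∈ Ioo (0:ℝ) tstar ×ˢ (univ : Set ℝ),
      ((lp p + lm p) • ((-((lp p - lm p) ^ 2)⁻¹) • (fderiv ℝ lp p - fderiv ℝ lm p))
          + (lp p - lm p)⁻¹ • (fderiv ℝ lp p + fderiv ℝ lm p)) (1, 0)
        + ((2 : ℝ) • ((lm p * lp p) • ((-((lp p - lm p) ^ 2)⁻¹) • (fderiv ℝ lp p - fderiv ℝ lm p))
          + (lp p - lm p)⁻¹ • (lm p • fderiv ℝ lp p + lp p • fderiv ℝ lm p))) (0, 1) = 0 := by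
    intro p hp
    have h1 := hsysm p hp
    have h2 := hsysp p hp
    have hd := hne p hp
    simp only [ContinuousLinearMap.smul_apply, ContinuousLinearMap.add_apply,
      ContinuousLinearMap.sub_apply, smul_eq_mul]
    rw [h1, h2]
    field_simp
    ring
  -- characteristics: derivative and continuity
  have hxmC : ContinuousOn xm (Icc 0 tstar) := fun t h => (hxm t h).continuousWithinAt
  have hxpC : ContinuousOn xp (Icc 0 tstar) := fun t h => (hxp t h).continuousWithinAt
  have hxmD : ∀ t ∈ Ioo (0:ℝ) tstar, HasDerivAt xm (lp (t, xm t)) t := fun t htI =>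
    (hxm t (Ioo_subset_Icc_self htI)).hasDerivAt (Icc_mem_nhds htI.1 htI.2)
  have hxpD : ∀ t ∈ Ioo (0:ℝ) tstar, HasDerivAt xp (lm (t, xp t)) t := fun t htI =>
    (hxp t (Ioo_subset_Icc_self htI)).hasDerivAt (Icc_mem_nhds htI.1 htI.2)
  have hxmspeedc : ContinuousOn (fun t => lp (t, xm t)) (Ioo (0:ℝ) tstar) := by
    refine hlpc.comp (continuousOn_id.prodMk (hxmC.mono Ioo_subset_Icc_self)) ?_
    exact fun t htI => ⟨hsub1 htI, trivial⟩
  have hxpspeedc : ContinuousOn (fun t => lm (t, xp t)) (Ioo (0:ℝ) tstar) := by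
    refine hlmc.comp (continuousOn_id.prodMk (hxpC.mono Ioo_subset_Icc_self)) ?_
    exact fun t htI => ⟨hsub1 htI, trivial⟩
  -- two main derivative computations
  have hΦd : ∀ t₀ ∈ Ioo (0:ℝ) tstar, HasDerivAt
      (fun t => t + (xp t - xm t) * ∫ s in (0:ℝ)..1,
        (lp (t, xm t + s * (xp t - xm t)) - lm (t, xm t + s * (xp t - xm t)))⁻¹) 0 t₀ := by
    intro t₀ ht₀
    have hmain := deriv_avg tstar
      (fun q : ℝ × ℝ => (lp q - lm q)⁻¹)
      (fun q : ℝ × ℝ => (1/2 : ℝ) * ((lp q + lm q) * (lp q - lm q)⁻¹))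
      _ _ hDW hDcW hDWc hrel1 xm xp
      (fun t => lp (t, xm t)) (fun t => lm (t, xp t)) t₀ ht₀ hxmD hxpD hxmspeedc hxpspeedc
    have hsum := (hasDerivAt_id t₀).add hmain
    have hA : lp (t₀, xm t₀) - lm (t₀, xm t₀) ≠ 0 := hne0 _ ⟨hsub1 ht₀, trivial⟩
    have hB : lp (t₀, xp t₀) - lm (t₀, xp t₀) ≠ 0 := hne0 _ ⟨hsub1 ht₀, trivial⟩
    refine hsum.congr_deriv (Eq.symm ?_)
    field_simp
    ring
  have hGd : ∀ t₀ ∈ Ioo (0:ℝ) tstar, HasDerivAt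
      (fun t => (xm t + xp t) + (xp t - xm t) * ∫ s in (0:ℝ)..1,
        (lp (t, xm t + s * (xp t - xm t)) + lm (t, xm t + s * (xp t - xm t)))
          * (lp (t, xm t + s * (xp t - xm t)) - lm (t, xm t + s * (xp t - xm t)))⁻¹) 0 t₀ := by
    intro t₀ ht₀
    have hmain := deriv_avg tstar
      (fun q : ℝ × ℝ => (lp q + lm q) * (lp q - lm q)⁻¹)
      (fun q : ℝ × ℝ => (2 : ℝ) * (lm q * lp q * (lp q - lm q)⁻¹))
      _ _ hDV hDF2 hDVc hrel2 xm xp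
      (fun t => lp (t, xm t)) (fun t => lm (t, xp t)) t₀ ht₀ hxmD hxpD hxmspeedc hxpspeedc
    have hsum := ((hxmD t₀ ht₀).add (hxpD t₀ ht₀)).add hmain
    have hA : lp (t₀, xm t₀) - lm (t₀, xm t₀) ≠ 0 := hne0 _ ⟨hsub1 ht₀, trivial⟩
    have hB : lp (t₀, xp t₀) - lm (t₀, xp t₀) ≠ 0 := hne0 _ ⟨hsub1 ht₀, trivial⟩
    refine hsum.congr_deriv (Eq.symm ?_)
    field_simp
    ring
  -- clamping to [0, tstar]
  set τ : ℝ → ℝ := fun t => max 0 (min t tstar) with hτdef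
  have hτ : Continuous τ := continuous_const.max (continuous_id.min continuous_const)
  have hτmem : ∀ t, τ t ∈ Icc (0:ℝ) tstar :=
    fun t => ⟨le_max_left _ _, max_le hts0 (min_le_right _ _)⟩
  have hτeq : ∀ t ∈ Icc (0:ℝ) tstar, τ t = t := by
    intro t h
    rw [hτdef]
    simp only
    rw [min_eq_left h.2, max_eq_right h.1]
  have hxmτ : Continuous (fun t => xm (τ t)) := hxmC.comp_continuous hτ hτmem
  have hxpτ : Continuous (fun t => xp (τ t)) := hxpC.comp_continuous hτ hτmem
  -- continuity of the clamped parametric integrals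
  have hWcont : ContinuousOn (fun p : ℝ × ℝ => (lp p - lm p)⁻¹) (Ico 0 T ×ˢ (univ : Set ℝ)) :=
    (hlpc.sub hlmc).inv₀ hne0
  have hVcont : ContinuousOn (fun p : ℝ × ℝ => (lp p + lm p) * (lp p - lm p)⁻¹)
      (Ico 0 T ×ˢ (univ : Set ℝ)) := (hlpc.add hlmc).mul ((hlpc.sub hlmc).inv₀ hne0)
  have hinner : Continuous (fun q : ℝ × ℝ =>
      ((τ q.1, xm (τ q.1) + q.2 * (xp (τ q.1) - xm (τ q.1))) : ℝ × ℝ)) := by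
    refine (hτ.comp continuous_fst).prodMk ?_
    exact (hxmτ.comp continuous_fst).add
      (continuous_snd.mul ((hxpτ.comp continuous_fst).sub (hxmτ.comp continuous_fst)))
  have hinnermem : ∀ q : ℝ × ℝ,
      ((τ q.1, xm (τ q.1) + q.2 * (xp (τ q.1) - xm (τ q.1))) : ℝ × ℝ)
        ∈ Ico 0 T ×ˢ (univ : Set ℝ) :=
    fun q => ⟨hIccIco (hτmem q.1), trivial⟩
  have hIWc : Continuous (fun t => ∫ s in (0:ℝ)..1,
      (lp (τ t, xm (τ t) + s * (xp (τ t) - xm (τ t)))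
        - lm (τ t, xm (τ t) + s * (xp (τ t) - xm (τ t))))⁻¹) := by
    apply intervalIntegral.continuous_parametric_intervalIntegral_of_continuous
      (f := fun t s => (lp (τ t, xm (τ t) + s * (xp (τ t) - xm (τ t)))
        - lm (τ t, xm (τ t) + s * (xp (τ t) - xm (τ t))))⁻¹)
      (s := fun _ => (1:ℝ))
    · exact hWcont.comp_continuous hinner hinnermem
    · exact continuous_const
  have hIVc : Continuous (fun t => ∫ s in (0:ℝ)..1,
      (lp (τ t, xm (τ t) + s * (xp (τ t) - xm (τ t)))
          + lm (τ t, xm (τ t) + s * (xp (τ t) - xm (τ t))))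
        * (lp (τ t, xm (τ t) + s * (xp (τ t) - xm (τ t)))
          - lm (τ t, xm (τ t) + s * (xp (τ t) - xm (τ t))))⁻¹) := by
    apply intervalIntegral.continuous_parametric_intervalIntegral_of_continuous
      (f := fun t s => (lp (τ t, xm (τ t) + s * (xp (τ t) - xm (τ t)))
          + lm (τ t, xm (τ t) + s * (xp (τ t) - xm (τ t))))
        * (lp (τ t, xm (τ t) + s * (xp (τ t) - xm (τ t)))
          - lm (τ t, xm (τ t) + s * (xp (τ t) - xm (τ t))))⁻¹)
      (s := fun _ => (1:ℝ))
    · exact hVcont.comp_continuous hinner hinnermem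
    · exact continuous_const
  -- the clamped quantities
  set Φ : ℝ → ℝ := fun t => t + (xp t - xm t) * ∫ s in (0:ℝ)..1,
      (lp (t, xm t + s * (xp t - xm t)) - lm (t, xm t + s * (xp t - xm t)))⁻¹ with hΦdef
  set G : ℝ → ℝ := fun t => (xm t + xp t) + (xp t - xm t) * ∫ s in (0:ℝ)..1,
      (lp (t, xm t + s * (xp t - xm t)) + lm (t, xm t + s * (xp t - xm t)))
        * (lp (t, xm t + s * (xp t - xm t)) - lm (t, xm t + s * (xp t - xm t)))⁻¹ with hGdef
  have hΦτc : Continuous (fun t => Φ (τ t)) := by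
    rw [hΦdef]
    simp only
    exact hτ.add (((hxpτ.sub hxmτ)).mul hIWc)
  have hGτc : Continuous (fun t => G (τ t)) := by
    rw [hGdef]
    simp only
    exact (hxmτ.add hxpτ).add (((hxpτ.sub hxmτ)).mul hIVc)
  have hΦconst : Φ (τ tstar) = Φ (τ 0) := by
    apply const_of_deriv_zero tstar hts0 _ hΦτc.continuousOn
    intro t htI
    have hev : (fun t => Φ (τ t)) =ᶠ[nhds t] Φ := by
      filter_upwards [isOpen_Ioo.mem_nhds htI] with u hu
      rw [hτeq u (Ioo_subset_Icc_self hu)]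
    exact (hΦd t htI).congr_of_eventuallyEq hev
  have hGconst : G (τ tstar) = G (τ 0) := by
    apply const_of_deriv_zero tstar hts0 _ hGτc.continuousOn
    intro t htI
    have hev : (fun t => G (τ t)) =ᶠ[nhds t] G := by
      filter_upwards [isOpen_Ioo.mem_nhds htI] with u hu
      rw [hτeq u (Ioo_subset_Icc_self hu)]
    exact (hGd t htI).congr_of_eventuallyEq hev
  rw [hτeq tstar (right_mem_Icc.mpr hts0), hτeq 0 (left_mem_Icc.mpr hts0)] at hΦconst hGconst
  -- endpoint values at tstar
  have hΦts : Φ tstar = tstar := by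
    rw [hΦdef]
    simp only
    rw [hmeet, sub_self, zero_mul, add_zero]
  have hGts : G tstar = 2 * xm tstar := by
    rw [hGdef]
    simp only
    rw [hmeet, sub_self, zero_mul, add_zero]
    ring
  -- endpoint values at 0
  have hΦ0 : Φ 0 = ∫ ζ in α..β, 1 / (Lp ζ - Lm ζ) := by
    rw [hΦdef]
    simp only [hxm0, hxp0]
    have hcongr : (∫ s in (0:ℝ)..1, (lp (0, α + s * (β - α)) - lm (0, α + s * (β - α)))⁻¹)
        = ∫ s in (0:ℝ)..1, (fun y => (Lp y - Lm y)⁻¹) (α + (β - α) * s) := by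
      apply intervalIntegral.integral_congr
      intro s _
      simp only
      rw [(hinit _).1, (hinit _).2, mul_comm s (β - α)]
    rw [hcongr]
    have := intervalIntegral.smul_integral_comp_add_mul (a := (0:ℝ)) (b := 1)
      (f := fun y => (Lp y - Lm y)⁻¹) (β - α) α
    rw [smul_eq_mul] at this
    rw [this]
    norm_num
  have hG0 : G 0 = α + β + ∫ ζ in α..β, (Lp ζ + Lm ζ) / (Lp ζ - Lm ζ) := by
    rw [hGdef]
    simp only [hxm0, hxp0]
    have hcongr : (∫ s in (0:ℝ)..1, (lp (0, α + s * (β - α)) + lm (0, α + s * (β - α)))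
          * (lp (0, α + s * (β - α)) - lm (0, α + s * (β - α)))⁻¹)
        = ∫ s in (0:ℝ)..1, (fun y => (Lp y + Lm y) * (Lp y - Lm y)⁻¹) (α + (β - α) * s) := by
      apply intervalIntegral.integral_congr
      intro s _
      simp only
      rw [(hinit _).1, (hinit _).2, mul_comm s (β - α)]
    rw [hcongr]
    have := intervalIntegral.smul_integral_comp_add_mul (a := (0:ℝ)) (b := 1)
      (f := fun y => (Lp y + Lm y) * (Lp y - Lm y)⁻¹) (β - α) α
    rw [smul_eq_mul] at this
    rw [this]
    norm_num
    apply intervalIntegral.integral_congr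
    intro s _
    simp only [div_eq_mul_inv]
  constructor
  · rw [← hΦ0, ← hΦconst, hΦts]
  · have h2 : 2 * xm tstar = α + β + ∫ ζ in α..β, (Lp ζ + Lm ζ) / (Lp ζ - Lm ζ) := by
      rw [← hGts, hGconst, hG0]
    linarith
end

section
/- Let Λ₋, Λ₊ : ℝ → ℝ be C¹, and let λ₋, λ₊ : [0,T) × ℝ → ℝ be a C¹ solution of the diagonal system (∗) with λ₋(0,·) = Λ₋, λ₊(0,·) = Λ₊. Suppose the characteristic family x⁻(t,α) (solving ∂_t x⁻ = λ₊(t, x⁻), x⁻(0,α) = α) is C¹ in (t,α) on [0,T) × ℝ. Then for every α with Λ₊(α) ≠ Λ₋(α) and every t ∈ [0,T): ∂x⁻/∂α (t,α) = (λ₊(t, x⁻(t,α)) − Λ₋(α)) / (Λ₊(α) − Λ₋(α)). -/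
open Set

lemma CDhelp.apply_split (L : ℝ × ℝ →L[ℝ] ℝ) (v : ℝ) :
    L (1, v) = L (1, 0) + v * L (0, 1) := by
  have h : ((1 : ℝ), v) = (1, 0) + v • ((0 : ℝ), (1 : ℝ)) := by simp
  rw [h, map_add, map_smul, smul_eq_mul]

lemma CDhelp.slice_hasDerivAt {T : ℝ} {F : ℝ × ℝ → ℝ}
    (hF : ContDiffOn ℝ 1 F (Ico 0 T ×ˢ (univ : Set ℝ))) {t : ℝ} (ht : t ∈ Ico (0:ℝ) T) (x : ℝ) :
    HasDerivAt (fun y => F (t, y))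
      (fderivWithin ℝ F (Ico 0 T ×ˢ (univ : Set ℝ)) (t, x) (0, 1)) x := by
  have hd := ((hF.differentiableOn one_ne_zero) (t, x) ⟨ht, mem_univ x⟩).hasFDerivWithinAt
  have hin : HasDerivAt (fun y : ℝ => ((t, y) : ℝ × ℝ)) ((0 : ℝ), (1 : ℝ)) x :=
    (hasDerivAt_const x t).prodMk (hasDerivAt_id x)
  have h := hd.comp_hasDerivWithinAt (s := univ) x hin.hasDerivWithinAt
    (fun y _ => ⟨ht, mem_univ _⟩)
  rw [hasDerivWithinAt_univ] at h
  exact h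

lemma CDhelp.curve_hasDerivWithinAt {T : ℝ} {F : ℝ × ℝ → ℝ}
    (hF : ContDiffOn ℝ 1 F (Ico 0 T ×ˢ (univ : Set ℝ))) {t : ℝ} (ht : t ∈ Ico (0:ℝ) T)
    {γ : ℝ → ℝ} {v : ℝ} (hγ : HasDerivWithinAt γ v (Ico 0 T) t) :
    HasDerivWithinAt (fun s => F (s, γ s))
      (fderivWithin ℝ F (Ico 0 T ×ˢ (univ : Set ℝ)) (t, γ t) (1, v)) (Ico 0 T) t := by
  have hd := ((hF.differentiableOn one_ne_zero) (t, γ t) ⟨ht, mem_univ _⟩).hasFDerivWithinAt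
  have hin : HasDerivWithinAt (fun s : ℝ => ((s, γ s) : ℝ × ℝ)) ((1 : ℝ), v) (Ico 0 T) t :=
    (hasDerivWithinAt_id t _).prodMk hγ
  exact hd.comp_hasDerivWithinAt t hin (fun s hs => (⟨hs, mem_univ _⟩ : (s, γ s) ∈ Ico 0 T ×ˢ (univ : Set ℝ)))

lemma CDhelp.time_hasDerivWithinAt {T : ℝ} {F : ℝ × ℝ → ℝ}
    (hF : ContDiffOn ℝ 1 F (Ico 0 T ×ˢ (univ : Set ℝ))) {t : ℝ} (ht : t ∈ Ico (0:ℝ) T) (x : ℝ) :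
    HasDerivWithinAt (fun s => F (s, x))
      (fderivWithin ℝ F (Ico 0 T ×ˢ (univ : Set ℝ)) (t, x) (1, 0)) (Ico 0 T) t :=
  CDhelp.curve_hasDerivWithinAt hF ht (hasDerivWithinAt_const t _ x)

lemma CDhelp.apply_split2 (L : ℝ × ℝ →L[ℝ] ℝ) (v : ℝ) :
    L (0, v) = v * L (0, 1) := by
  have h : ((0 : ℝ), v) = v • ((0 : ℝ), (1 : ℝ)) := by simp
  rw [h, map_smul, smul_eq_mul]

lemma CDhelp.const_of_deriv_zero {f : ℝ → ℝ} {a b : ℝ} (hab : a ≤ b)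
    (hf : ∀ x ∈ Icc a b, HasDerivWithinAt f 0 (Icc a b) x) : f b = f a := by
  have h := Convex.norm_image_sub_le_of_norm_hasDerivWithin_le (C := 0) (f' := fun _ => (0 : ℝ))
    hf (fun x _ => by simp) (convex_Icc a b) ⟨le_refl a, hab⟩ ⟨hab, le_refl b⟩
  rw [mul_comm, mul_zero] at h
  have := norm_le_zero_iff.mp (le_of_le_of_eq h (by ring))
  exact sub_eq_zero.mp this

/-- Formula (2.10): the derivative of the characteristic `x⁻(t,α)` with respect to the
initial point `α`. -/
theorem characteristic_derivative_in_alpha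
    (T : ℝ) (hT : 0 < T)
    (Lm Lp : ℝ → ℝ) (hLm : ContDiff ℝ 1 Lm) (hLp : ContDiff ℝ 1 Lp)
    (lm lp : ℝ × ℝ → ℝ)
    (hlm : ContDiffOn ℝ 1 lm (Ico 0 T ×ˢ (univ : Set ℝ)))
    (hlp : ContDiffOn ℝ 1 lp (Ico 0 T ×ˢ (univ : Set ℝ)))
    (hinit : ∀ x : ℝ, lm (0, x) = Lm x ∧ lp (0, x) = Lp x)
    (sys1 : ∀ t ∈ Ico (0:ℝ) T, ∀ x : ℝ,
      derivWithin (fun s => lm (s, x)) (Ico 0 T) t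
        + lp (t, x) * deriv (fun y => lm (t, y)) x = 0)
    (sys2 : ∀ t ∈ Ico (0:ℝ) T, ∀ x : ℝ,
      derivWithin (fun s => lp (s, x)) (Ico 0 T) t
        + lm (t, x) * deriv (fun y => lp (t, y)) x = 0)
    (xm : ℝ × ℝ → ℝ)
    (hxmC1 : ContDiffOn ℝ 1 xm (Ico 0 T ×ˢ (univ : Set ℝ)))
    (hxm0 : ∀ a : ℝ, xm (0, a) = a)
    (hxmode : ∀ t ∈ Ico (0:ℝ) T, ∀ a : ℝ,
      HasDerivWithinAt (fun s => xm (s, a)) (lp (t, xm (t, a))) (Ico 0 T) t) :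
    ∀ a : ℝ, Lp a ≠ Lm a → ∀ t ∈ Ico (0:ℝ) T,
      deriv (fun b => xm (t, b)) a
        = (lp (t, xm (t, a)) - Lm a) / (Lp a - Lm a) := by
  intro a ha t₀ ht₀
  set S : Set (ℝ × ℝ) := Ico 0 T ×ˢ (univ : Set ℝ) with hSdef
  have hS : UniqueDiffOn ℝ S := (uniqueDiffOn_Ico 0 T).prod uniqueDiffOn_univ
  have hmemS : ∀ {t : ℝ}, t ∈ Ico (0:ℝ) T → ∀ x : ℝ, (t, x) ∈ S :=
    fun ht x => ⟨ht, mem_univ x⟩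
  have h0T : (0:ℝ) ∈ Ico (0:ℝ) T := ⟨le_refl 0, hT⟩
  -- the partial-x derivative functions
  set c : ℝ → ℝ := fun s => fderivWithin ℝ lp S (s, xm (s, a)) (0, 1) with hcdef
  set f : ℝ → ℝ := fun s => fderivWithin ℝ xm S (s, a) (0, 1) with hfdef
  -- deriv in b of xm equals f
  have hxm_slice : ∀ {s : ℝ}, s ∈ Ico (0:ℝ) T → ∀ b : ℝ,
      HasDerivAt (fun b' => xm (s, b')) (fderivWithin ℝ xm S (s, b) (0, 1)) b :=
    fun hs b => CDhelp.slice_hasDerivAt hxmC1 hs b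
  -- continuity facts
  have hxm_cont : ContinuousOn xm S := hxmC1.continuousOn
  have hcurve_cont : ContinuousOn (fun s : ℝ => ((s, xm (s, a)) : ℝ × ℝ)) (Ico 0 T) := by
    refine continuousOn_id.prodMk ?_
    exact hxm_cont.comp ((continuous_id.prodMk continuous_const).continuousOn)
      (fun s hs => hmemS hs a)
  have hcurve_maps : MapsTo (fun s : ℝ => ((s, xm (s, a)) : ℝ × ℝ)) (Ico 0 T) S :=
    fun s hs => hmemS hs (xm (s, a))
  have hDlp_cont : ContinuousOn (fun p : ℝ × ℝ => fderivWithin ℝ lp S p ((0:ℝ), (1:ℝ))) S :=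
    (hlp.continuousOn_fderivWithin hS le_rfl).clm_apply continuousOn_const
  have hDxm_cont : ContinuousOn (fun p : ℝ × ℝ => fderivWithin ℝ xm S p ((0:ℝ), (1:ℝ))) S :=
    (hxmC1.continuousOn_fderivWithin hS le_rfl).clm_apply continuousOn_const
  have hc_cont : ContinuousOn c (Ico 0 T) :=
    hDlp_cont.comp hcurve_cont hcurve_maps
  have hf_cont : ContinuousOn f (Ico 0 T) := by
    have : ContinuousOn (fun s : ℝ => ((s, a) : ℝ × ℝ)) (Ico 0 T) :=
      (continuous_id.prodMk continuous_const).continuousOn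
    exact hDxm_cont.comp this (fun s hs => hmemS hs a)
  -- sys1 in fderivWithin form
  have hsys1' : ∀ s ∈ Ico (0:ℝ) T, ∀ x : ℝ,
      fderivWithin ℝ lm S (s, x) (1, 0) + lp (s, x) * fderivWithin ℝ lm S (s, x) (0, 1) = 0 := by
    intro s hs x
    have h1 := (CDhelp.time_hasDerivWithinAt hlm hs x).derivWithin (uniqueDiffOn_Ico 0 T s hs)
    have h2 := (CDhelp.slice_hasDerivAt hlm hs x).deriv
    have h3 := sys1 s hs x
    rw [h1, h2] at h3
    exact h3
  have hsys2' : ∀ s ∈ Ico (0:ℝ) T, ∀ x : ℝ,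
      fderivWithin ℝ lp S (s, x) (1, 0) + lm (s, x) * fderivWithin ℝ lp S (s, x) (0, 1) = 0 := by
    intro s hs x
    have h1 := (CDhelp.time_hasDerivWithinAt hlp hs x).derivWithin (uniqueDiffOn_Ico 0 T s hs)
    have h2 := (CDhelp.slice_hasDerivAt hlp hs x).deriv
    have h3 := sys2 s hs x
    rw [h1, h2] at h3
    exact h3
  -- λ₋ constant along the characteristic
  have hlm_const : ∀ t ∈ Ico (0:ℝ) T, lm (t, xm (t, a)) = Lm a := by
    intro t ht
    have hIcc : ∀ s ∈ Icc (0:ℝ) t, s ∈ Ico (0:ℝ) T :=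
      fun s hs => ⟨hs.1, lt_of_le_of_lt hs.2 ht.2⟩
    have hconst : lm (t, xm (t, a)) = lm (0, xm (0, a)) := by
      refine CDhelp.const_of_deriv_zero (f := fun u => lm (u, xm (u, a))) ht.1
        (fun s hs => ?_)
      have hsT := hIcc s hs
      have hd := CDhelp.curve_hasDerivWithinAt hlm hsT (hxmode s hsT a)
      have hz : fderivWithin ℝ lm S (s, xm (s, a)) (1, lp (s, xm (s, a))) = 0 := by
        rw [CDhelp.apply_split]; exact hsys1' s hsT (xm (s, a))
      rw [hz] at hd
      exact hd.mono hIcc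
    rw [hconst, hxm0, (hinit a).1]
  -- integral representation of xm
  have hxmint : ∀ t ∈ Ico (0:ℝ) T, ∀ b : ℝ,
      xm (t, b) = b + ∫ s in (0:ℝ)..t, lp (s, xm (s, b)) := by
    intro t ht b
    have hIcc : Icc (0:ℝ) t ⊆ Ico (0:ℝ) T :=
      fun s hs => ⟨hs.1, lt_of_le_of_lt hs.2 ht.2⟩
    have hbcurve : ContinuousOn (fun s : ℝ => ((s, xm (s, b)) : ℝ × ℝ)) (Icc 0 t) := by
      refine continuousOn_id.prodMk ?_
      exact hxm_cont.comp ((continuous_id.prodMk continuous_const).continuousOn)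
        (fun s hs => hmemS (hIcc hs) b)
    have hcont : ContinuousOn (fun s => xm (s, b)) (Icc 0 t) :=
      hxm_cont.comp ((continuous_id.prodMk continuous_const).continuousOn)
        (fun s hs => hmemS (hIcc hs) b)
    have hderiv : ∀ s ∈ Ioo (0:ℝ) t, HasDerivWithinAt (fun u => xm (u, b))
        (lp (s, xm (s, b))) (Ioi s) s := by
      intro s hs
      have hsT : s ∈ Ico (0:ℝ) T := ⟨le_of_lt hs.1, lt_trans hs.2 ht.2⟩
      have hnhds : Ico (0:ℝ) T ∈ nhds s :=
        Filter.mem_of_superset (Ioo_mem_nhds hs.1 (lt_trans hs.2 ht.2)) Ioo_subset_Ico_self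
      exact ((hxmode s hsT b).hasDerivAt hnhds).hasDerivWithinAt
    have hint : IntervalIntegrable (fun s => lp (s, xm (s, b))) MeasureTheory.volume 0 t := by
      apply ContinuousOn.intervalIntegrable
      rw [uIcc_of_le ht.1]
      exact hlp.continuousOn.comp hbcurve (fun s hs => hmemS (hIcc hs) (xm (s, b)))
    have heq := intervalIntegral.integral_eq_sub_of_hasDeriv_right_of_le ht.1 hcont hderiv hint
    rw [hxm0 b] at heq
    linarith
  -- integral equation for f
  have hf_int_eq : ∀ t ∈ Ico (0:ℝ) T, f t = 1 + ∫ s in (0:ℝ)..t, c s * f s := by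
    intro t ht
    have hIccsub : Icc (0:ℝ) t ⊆ Ico (0:ℝ) T :=
      fun s hs => ⟨hs.1, lt_of_le_of_lt hs.2 ht.2⟩
    have hIocsub : uIoc (0:ℝ) t ⊆ Icc (0:ℝ) t := by
      rw [uIoc_of_le ht.1]; exact Ioc_subset_Icc_self
    -- joint continuity of the parametrized integrand and its derivative
    have hGcont : ContinuousOn (fun p : ℝ × ℝ => lp (p.1, xm p)) S :=
      hlp.continuousOn.comp (continuous_fst.continuousOn.prodMk hxm_cont)
        (fun p hp => ⟨hp.1, mem_univ _⟩)
    have hG'cont : ContinuousOn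
        (fun p : ℝ × ℝ => fderivWithin ℝ lp S (p.1, xm p) (0, 1)
          * fderivWithin ℝ xm S p (0, 1)) S := by
      refine ContinuousOn.mul ?_ hDxm_cont
      exact hDlp_cont.comp (continuous_fst.continuousOn.prodMk hxm_cont)
        (fun p hp => ⟨hp.1, mem_univ _⟩)
    -- compact bound
    have hK : IsCompact (Icc (0:ℝ) t ×ˢ Icc (a - 1) (a + 1)) :=
      isCompact_Icc.prod isCompact_Icc
    have hKsub : Icc (0:ℝ) t ×ˢ Icc (a - 1) (a + 1) ⊆ S :=
      fun p hp => ⟨hIccsub hp.1, mem_univ _⟩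
    obtain ⟨M, hM⟩ := hK.exists_bound_of_continuousOn (hG'cont.mono hKsub)
    have hballsub : ∀ b ∈ Metric.ball a 1, b ∈ Icc (a - 1) (a + 1) := by
      intro b hb
      rw [Metric.mem_ball, Real.dist_eq] at hb
      constructor <;> [linarith [neg_abs_le (b - a)]; linarith [le_abs_self (b - a)]]
    -- measurability/integrability helpers
    have hmem_of_uIoc : ∀ s ∈ uIoc (0:ℝ) t, s ∈ Ico (0:ℝ) T :=
      fun s hs => hIccsub (hIocsub hs)
    have hcurve_b : ∀ b : ℝ, ContinuousOn (fun s : ℝ => ((s, b) : ℝ × ℝ)) (Ico 0 T) :=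
      fun b => (continuous_id.prodMk continuous_const).continuousOn
    have hcont_int : ∀ b : ℝ, ContinuousOn (fun s => lp (s, xm (s, b))) (Ico 0 T) := by
      intro b
      have : ContinuousOn (fun s : ℝ => ((s, xm (s, b)) : ℝ × ℝ)) (Ico 0 T) :=
        continuousOn_id.prodMk (hxm_cont.comp (hcurve_b b) (fun s hs => hmemS hs b))
      exact hlp.continuousOn.comp this (fun s hs => hmemS hs (xm (s, b)))
    have hcont_int' : ∀ b : ℝ, ContinuousOn
        (fun s => fderivWithin ℝ lp S (s, xm (s, b)) (0, 1)
          * fderivWithin ℝ xm S (s, b) (0, 1)) (Ico 0 T) := by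
      intro b
      have h1 : ContinuousOn (fun s : ℝ => ((s, b) : ℝ × ℝ)) (Ico 0 T) := hcurve_b b
      exact (hG'cont.comp h1 (fun s hs => hmemS hs b))
    have hmeas1 : ∀ b : ℝ, MeasureTheory.AEStronglyMeasurable (fun s => lp (s, xm (s, b)))
        (MeasureTheory.volume.restrict (uIoc (0:ℝ) t)) := by
      intro b
      rw [uIoc_of_le ht.1]
      exact ((hcont_int b).mono (fun s hs => hIccsub (Ioc_subset_Icc_self hs))
        ).aestronglyMeasurable measurableSet_Ioc
    -- differentiation under the integral sign
    have hder := (intervalIntegral.hasDerivAt_integral_of_dominated_loc_of_deriv_le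
      (F := fun b s => lp (s, xm (s, b)))
      (F' := fun b s => fderivWithin ℝ lp S (s, xm (s, b)) (0, 1)
        * fderivWithin ℝ xm S (s, b) (0, 1))
      (x₀ := a) (s := Metric.ball a 1) (bound := fun _ => M)
      (Metric.ball_mem_nhds a one_pos)
      (Filter.Eventually.of_forall (fun b => hmeas1 b))
      (by
        apply ContinuousOn.intervalIntegrable
        rw [uIcc_of_le ht.1]
        exact (hcont_int a).mono hIccsub)
      (by
        rw [uIoc_of_le ht.1]
        exact ((hcont_int' a).mono (fun s hs => hIccsub (Ioc_subset_Icc_self hs))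
          ).aestronglyMeasurable measurableSet_Ioc)
      (Filter.Eventually.of_forall (fun s hs b hb => by
        exact hM (s, b) ⟨hIocsub hs, hballsub b hb⟩))
      intervalIntegrable_const
      (Filter.Eventually.of_forall (fun s hs b hb => by
        have hsT : s ∈ Ico (0:ℝ) T := hmem_of_uIoc s hs
        have hin : HasDerivAt (fun b' : ℝ => ((s, xm (s, b')) : ℝ × ℝ))
            ((0 : ℝ), fderivWithin ℝ xm S (s, b) (0, 1)) b :=
          (hasDerivAt_const b s).prodMk (hxm_slice hsT b)
        have hd := ((hlp.differentiableOn one_ne_zero) (s, xm (s, b))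
          (hmemS hsT (xm (s, b)))).hasFDerivWithinAt
        have h := hd.comp_hasDerivWithinAt (s := univ) b hin.hasDerivWithinAt
          (fun b' _ => hmemS hsT (xm (s, b')))
        rw [hasDerivWithinAt_univ] at h
        have heq : fderivWithin ℝ lp S (s, xm (s, b))
              ((0 : ℝ), fderivWithin ℝ xm S (s, b) (0, 1))
            = fderivWithin ℝ lp S (s, xm (s, b)) (0, 1)
              * fderivWithin ℝ xm S (s, b) (0, 1) := by
          rw [CDhelp.apply_split2]; ring
        rw [heq] at h
        exact h))).2
    -- identify with the derivative of b ↦ xm (t, b)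
    have hrep : (fun b => xm (t, b)) = fun b => b + ∫ s in (0:ℝ)..t, lp (s, xm (s, b)) :=
      funext (fun b => hxmint t ht b)
    have h2 : HasDerivAt (fun b => xm (t, b))
        (1 + ∫ s in (0:ℝ)..t, c s * f s) a := by
      rw [hrep]
      exact (hasDerivAt_id a).add hder
    exact (hxm_slice ht a).unique h2
  -- handle t₀ = 0 separately
  rcases eq_or_lt_of_le ht₀.1 with h0 | h0pos
  · subst h0
    have h1 : (fun b => xm ((0:ℝ), b)) = id := funext hxm0
    rw [h1, deriv_id, hxm0, (hinit a).2, div_self (sub_ne_zero.mpr ha)]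
  -- main argument on J = Icc 0 t₀
  set J : Set ℝ := Icc 0 t₀ with hJdef
  have hJsub : J ⊆ Ico 0 T := fun s hs => ⟨hs.1, lt_of_le_of_lt hs.2 ht₀.2⟩
  have h0J : (0:ℝ) ∈ J := ⟨le_refl 0, ht₀.1⟩
  have ht₀J : t₀ ∈ J := ⟨ht₀.1, le_refl t₀⟩
  -- FTC within J for continuous integrands
  have FTC : ∀ v : ℝ → ℝ, ContinuousOn v (Ico 0 T) → ∀ t ∈ J,
      HasDerivWithinAt (fun r => ∫ s in (0:ℝ)..r, v s) (v t) J t := by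
    intro v hv t ht
    have htT : t ∈ Ico (0:ℝ) T := hJsub ht
    have hint : IntervalIntegrable v MeasureTheory.volume 0 t := by
      apply ContinuousOn.intervalIntegrable
      rw [uIcc_of_le ht.1]
      exact hv.mono (fun s hs => ⟨hs.1, lt_of_le_of_lt hs.2 htT.2⟩)
    rcases eq_or_lt_of_le ht.1 with h0 | h0'
    · -- t = 0 : right derivative
      subst h0
      have hmeas : StronglyMeasurableAtFilter v (nhdsWithin (0:ℝ) (Ioi 0)) :=
        ⟨Ioo 0 T, Ioo_mem_nhdsGT hT,
          (hv.mono Ioo_subset_Ico_self).aestronglyMeasurable measurableSet_Ioo⟩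
      have hcw : ContinuousWithinAt v (Ioi (0:ℝ)) 0 :=
        (hv 0 h0T).mono_of_mem_nhdsWithin
          (Filter.mem_of_superset (Ioo_mem_nhdsGT hT) Ioo_subset_Ico_self)
      have h := intervalIntegral.integral_hasDerivWithinAt_right (s := Ici 0) hint hmeas hcw
      exact h.mono (fun s hs => hs.1)
    rcases eq_or_lt_of_le ht.2 with h1 | h1'
    · -- t = t₀ : left derivative
      subst h1
      have hIocmem : Ioc (0:ℝ) t ∈ nhdsWithin t (Iic t) := by
        rw [← Iic_inter_Ioi]
        exact Filter.inter_mem self_mem_nhdsWithin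
          (mem_nhdsWithin_of_mem_nhds (Ioi_mem_nhds h0'))
      have hIocsub : Ioc (0:ℝ) t ⊆ Ico 0 T :=
        fun s hs => ⟨le_of_lt hs.1, lt_of_le_of_lt hs.2 htT.2⟩
      have hmeas : StronglyMeasurableAtFilter v (nhdsWithin t (Iic t)) :=
        ⟨Ioc 0 t, hIocmem, (hv.mono hIocsub).aestronglyMeasurable measurableSet_Ioc⟩
      have hcw : ContinuousWithinAt v (Iic t) t :=
        (hv t htT).mono_of_mem_nhdsWithin (Filter.mem_of_superset hIocmem hIocsub)
      have h := intervalIntegral.integral_hasDerivWithinAt_right (s := Iic t) hint hmeas hcw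
      exact h.mono (fun s hs => hs.2)
    · -- interior point
      have hnhds' : Ioo (0:ℝ) T ∈ nhds t := Ioo_mem_nhds h0' htT.2
      have hnhds : Ico (0:ℝ) T ∈ nhds t :=
        Filter.mem_of_superset hnhds' Ioo_subset_Ico_self
      have hmeas : StronglyMeasurableAtFilter v (nhds t) :=
        ⟨Ioo 0 T, hnhds', (hv.mono Ioo_subset_Ico_self).aestronglyMeasurable measurableSet_Ioo⟩
      have h := intervalIntegral.integral_hasDerivAt_right hint hmeas (hv.continuousAt hnhds)
      exact h.hasDerivWithinAt
  have hu_cont : ContinuousOn (fun s => c s * f s) (Ico 0 T) := hc_cont.mul hf_cont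
  -- the exponential integrating factor
  set E : ℝ → ℝ := fun r => Real.exp (-(∫ s in (0:ℝ)..r, c s)) with hEdef
  have hE : ∀ t ∈ J, HasDerivWithinAt E (-(c t) * E t) J t := by
    intro t ht
    have h1 : HasDerivWithinAt (fun r => -(∫ s in (0:ℝ)..r, c s)) (-(c t)) J t :=
      (FTC c hc_cont t ht).neg
    have h2 := h1.exp
    simpa [hEdef, mul_comm] using h2
  have hE0 : E 0 = 1 := by simp [hEdef]
  have hEpos : 0 < E t₀ := Real.exp_pos _
  -- P = f-side product is constant
  set P : ℝ → ℝ := fun r => (1 + ∫ s in (0:ℝ)..r, c s * f s) * E r with hPdef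
  have hP : P t₀ = P 0 := by
    refine CDhelp.const_of_deriv_zero ht₀.1 (fun t ht => ?_)
    have h1 : HasDerivWithinAt (fun r => 1 + ∫ s in (0:ℝ)..r, c s * f s) (c t * f t) J t :=
      (FTC _ hu_cont t ht).const_add 1
    have h2 := h1.mul (hE t ht)
    have h3 : c t * f t * E t + (1 + ∫ s in (0:ℝ)..t, c s * f s) * (-(c t) * E t) = 0 := by
      rw [← hf_int_eq t (hJsub ht)]; ring
    rw [h3] at h2
    exact h2
  -- Q = g-side product is constant
  set Q : ℝ → ℝ := fun r => ((lp (r, xm (r, a)) - Lm a) / (Lp a - Lm a)) * E r with hQdef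
  have hQ : Q t₀ = Q 0 := by
    have hh : ∀ t ∈ J, HasDerivWithinAt (fun r => lp (r, xm (r, a)))
        ((lp (t, xm (t, a)) - Lm a) * c t) J t := by
      intro t ht
      have htT : t ∈ Ico (0:ℝ) T := hJsub ht
      have hd := CDhelp.curve_hasDerivWithinAt hlp htT (hxmode t htT a)
      have hval : fderivWithin ℝ lp S (t, xm (t, a)) (1, lp (t, xm (t, a)))
          = (lp (t, xm (t, a)) - Lm a) * c t := by
        rw [CDhelp.apply_split]
        have h2 := hsys2' t htT (xm (t, a))
        have h3 : fderivWithin ℝ lp S (t, xm (t, a)) (1, 0)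
            = -(lm (t, xm (t, a)) * fderivWithin ℝ lp S (t, xm (t, a)) (0, 1)) := by
          linarith
        rw [h3, hlm_const t htT, hcdef]
        ring
      rw [hval] at hd
      exact hd.mono hJsub
    refine CDhelp.const_of_deriv_zero ht₀.1 (fun t ht => ?_)
    have h1 := (((hh t ht).sub_const (Lm a)).div_const (Lp a - Lm a)).mul (hE t ht)
    have h2 : (lp (t, xm (t, a)) - Lm a) * c t / (Lp a - Lm a) * E t
        + (lp (t, xm (t, a)) - Lm a) / (Lp a - Lm a) * (-(c t) * E t) = 0 := by
      ring
    rw [h2] at h1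
    exact h1
  -- conclude
  have hP0 : P 0 = 1 := by simp [hPdef, hE0]
  have hQ0 : Q 0 = 1 := by
    simp [hQdef, hE0, hxm0, (hinit a).2, div_self (sub_ne_zero.mpr ha)]
  have key : f t₀ * E t₀ = ((lp (t₀, xm (t₀, a)) - Lm a) / (Lp a - Lm a)) * E t₀ := by
    have h1 : P t₀ = Q t₀ := by rw [hP, hQ, hP0, hQ0]
    have h2 : P t₀ = f t₀ * E t₀ := by
      rw [hPdef]; simp only []; rw [← hf_int_eq t₀ ht₀]
    rw [← h2, h1, hQdef]
  have hft₀ : f t₀ = (lp (t₀, xm (t₀, a)) - Lm a) / (Lp a - Lm a) :=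
    mul_right_cancel₀ (ne_of_gt hEpos) key
  rw [← hft₀]
  exact (hxm_slice ht₀ a).deriv
end

section
/- Let Λ₋, Λ₊ : ℝ → ℝ be C¹, let t₀ > 0, and let λ₋, λ₊ : [0,t₀) × ℝ → ℝ be a C¹ solution of the diagonal system (∗) with λ₋(0,·) = Λ₋, λ₊(0,·) = Λ₊, such that the characteristic family x⁻(t,α) (solving ∂_t x⁻ = λ₊(t, x⁻), x⁻(0,α) = α) is C¹ in (t,α). Fix α with Λ₊(α) ≠ Λ₋(α), Λ₋′(α) ≠ 0, and suppose λ₊(t, x⁻(t,α)) ≠ Λ₋(α) for all t ∈ [0,t₀) while λ₊(t, x⁻(t,α)) → Λ₋(α) as t → t₀⁻. Then |∂_x λ₋ (t, x⁻(t,α))| → +∞ as t → t₀⁻; in particular the solution cannot be extended as a C¹ solution beyond time t₀ along this characteristic. -/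
open Set Filter Topology intervalIntegral MeasureTheory

private lemma slice_hasDeriv {t₀ : ℝ} {f : ℝ × ℝ → ℝ}
    (hf : ContDiffOn ℝ 1 f (Ico 0 t₀ ×ˢ (univ : Set ℝ)))
    {t x : ℝ} (ht : t ∈ Ico (0:ℝ) t₀) :
    HasDerivWithinAt (fun s => f (s, x))
      (fderivWithin ℝ f (Ico 0 t₀ ×ˢ (univ : Set ℝ)) (t, x) (1, 0)) (Ico 0 t₀) t ∧
    HasDerivAt (fun y => f (t, y))
      (fderivWithin ℝ f (Ico 0 t₀ ×ˢ (univ : Set ℝ)) (t, x) (0, 1)) x := by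
  have hmem : (t, x) ∈ Ico 0 t₀ ×ˢ (univ : Set ℝ) := ⟨ht, mem_univ _⟩
  have hL := (hf.differentiableOn one_ne_zero (t, x) hmem).hasFDerivWithinAt
  constructor
  · have hc : HasDerivWithinAt (fun s => ((s, x) : ℝ × ℝ)) ((1:ℝ), (0:ℝ)) (Ico 0 t₀) t :=
      (hasDerivWithinAt_id t _).prodMk (hasDerivWithinAt_const t _ x)
    exact hL.comp_hasDerivWithinAt t hc (fun s hs => (⟨hs, mem_univ _⟩ : (s, x) ∈ Ico 0 t₀ ×ˢ (univ : Set ℝ)))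
  · have hc : HasDerivWithinAt (fun y => ((t, y) : ℝ × ℝ)) ((0:ℝ), (1:ℝ)) univ x :=
      (hasDerivWithinAt_const x _ t).prodMk (hasDerivWithinAt_id x _)
    have := hL.comp_hasDerivWithinAt x hc (fun y _ => (⟨ht, mem_univ _⟩ : (t, y) ∈ Ico 0 t₀ ×ˢ (univ : Set ℝ)))
    rwa [hasDerivWithinAt_univ] at this

private lemma curve_chain {t₀ : ℝ} {f : ℝ × ℝ → ℝ}
    (hf : ContDiffOn ℝ 1 f (Ico 0 t₀ ×ˢ (univ : Set ℝ)))
    {γ : ℝ → ℝ} {v t : ℝ} (ht : t ∈ Ico (0:ℝ) t₀)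
    (hγ : HasDerivWithinAt γ v (Ico 0 t₀) t) :
    HasDerivWithinAt (fun s => f (s, γ s))
      (fderivWithin ℝ f (Ico 0 t₀ ×ˢ (univ : Set ℝ)) (t, γ t) (1, 0)
        + v * fderivWithin ℝ f (Ico 0 t₀ ×ˢ (univ : Set ℝ)) (t, γ t) (0, 1))
      (Ico 0 t₀) t := by
  have hmem : (t, γ t) ∈ Ico 0 t₀ ×ˢ (univ : Set ℝ) := ⟨ht, mem_univ _⟩
  have hL := (hf.differentiableOn one_ne_zero (t, γ t) hmem).hasFDerivWithinAt
  have hc : HasDerivWithinAt (fun s => ((s, γ s) : ℝ × ℝ)) ((1:ℝ), v) (Ico 0 t₀) t :=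
    (hasDerivWithinAt_id t _).prodMk hγ
  have h := hL.comp_hasDerivWithinAt t hc (fun s hs => (⟨hs, mem_univ _⟩ : (s, γ s) ∈ Ico 0 t₀ ×ˢ (univ : Set ℝ)))
  have hv : ((1:ℝ), v) = ((1:ℝ), (0:ℝ)) + v • ((0:ℝ), (1:ℝ)) := by
    simp [Prod.ext_iff]
  rw [hv, map_add, _root_.map_smul, smul_eq_mul] at h
  exact h

private lemma alpha_chain {t₀ : ℝ} {f : ℝ × ℝ → ℝ}
    (hf : ContDiffOn ℝ 1 f (Ico 0 t₀ ×ˢ (univ : Set ℝ)))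
    {g : ℝ → ℝ} {v α t : ℝ} (ht : t ∈ Ico (0:ℝ) t₀)
    (hg : HasDerivAt g v α) :
    HasDerivAt (fun β => f (t, g β))
      (v * fderivWithin ℝ f (Ico 0 t₀ ×ˢ (univ : Set ℝ)) (t, g α) (0, 1)) α := by
  have hmem : (t, g α) ∈ Ico 0 t₀ ×ˢ (univ : Set ℝ) := ⟨ht, mem_univ _⟩
  have hL := (hf.differentiableOn one_ne_zero (t, g α) hmem).hasFDerivWithinAt
  have hc : HasDerivWithinAt (fun β => ((t, g β) : ℝ × ℝ)) ((0:ℝ), v) univ α :=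
    (hasDerivWithinAt_const α _ t).prodMk hg.hasDerivWithinAt
  have h := hL.comp_hasDerivWithinAt α hc (fun β _ => (⟨ht, mem_univ _⟩ : (t, g β) ∈ Ico 0 t₀ ×ˢ (univ : Set ℝ)))
  rw [hasDerivWithinAt_univ] at h
  have hv : ((0:ℝ), v) = v • ((0:ℝ), (1:ℝ)) := by simp
  rw [hv, _root_.map_smul, smul_eq_mul] at h
  exact h

/-- Blowup of the spatial gradient of `λ₋` along the characteristic `x⁻(t,α)` when the
characteristic speeds of the two families merge as `t → t₀⁻` (Remark 2.1). -/
theorem gradient_blowup_along_characteristic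
    (t₀ : ℝ) (ht₀ : 0 < t₀)
    (Lm Lp : ℝ → ℝ) (hLm : ContDiff ℝ 1 Lm) (hLp : ContDiff ℝ 1 Lp)
    (lm lp : ℝ × ℝ → ℝ)
    (hlm : ContDiffOn ℝ 1 lm (Ico 0 t₀ ×ˢ (univ : Set ℝ)))
    (hlp : ContDiffOn ℝ 1 lp (Ico 0 t₀ ×ˢ (univ : Set ℝ)))
    (hinit : ∀ x : ℝ, lm (0, x) = Lm x ∧ lp (0, x) = Lp x)
    (sys1 : ∀ t ∈ Ico (0:ℝ) t₀, ∀ x : ℝ,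
      derivWithin (fun s => lm (s, x)) (Ico 0 t₀) t
        + lp (t, x) * deriv (fun y => lm (t, y)) x = 0)
    (sys2 : ∀ t ∈ Ico (0:ℝ) t₀, ∀ x : ℝ,
      derivWithin (fun s => lp (s, x)) (Ico 0 t₀) t
        + lm (t, x) * deriv (fun y => lp (t, y)) x = 0)
    (xm : ℝ × ℝ → ℝ)
    (hxmC1 : ContDiffOn ℝ 1 xm (Ico 0 t₀ ×ˢ (univ : Set ℝ)))
    (hxm0 : ∀ a : ℝ, xm (0, a) = a)
    (hxmode : ∀ t ∈ Ico (0:ℝ) t₀, ∀ a : ℝ,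
      HasDerivWithinAt (fun s => xm (s, a)) (lp (t, xm (t, a))) (Ico 0 t₀) t)
    (a : ℝ) (hne : Lp a ≠ Lm a) (hLm' : deriv Lm a ≠ 0)
    (hnever : ∀ t ∈ Ico (0:ℝ) t₀, lp (t, xm (t, a)) ≠ Lm a)
    (hmerge : Tendsto (fun t => lp (t, xm (t, a))) (𝓝[<] t₀) (𝓝 (Lm a))) :
    Tendsto (fun t => |deriv (fun y => lm (t, y)) (xm (t, a))|) (𝓝[<] t₀) atTop := by
  have hUS : UniqueDiffOn ℝ (Ico 0 t₀ ×ˢ (univ : Set ℝ)) :=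
    (uniqueDiffOn_Ico 0 t₀).prod uniqueDiffOn_univ
  -- membership helpers
  have hIci : ∀ x ∈ Ico (0:ℝ) t₀, Ico (0:ℝ) t₀ ∈ 𝓝[Ici x] x := by
    intro x hx
    rw [mem_nhdsWithin]
    exact ⟨Iio t₀, isOpen_Iio, hx.2, fun y hy => ⟨le_trans hx.1 hy.2, hy.1⟩⟩
  -- continuity of characteristic curves
  have hXcont : ∀ α : ℝ, ContinuousOn (fun s => xm (s, α)) (Ico 0 t₀) := by
    intro α
    exact hxmC1.continuousOn.comp (f := fun s => ((s, α) : ℝ × ℝ))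
      ((continuous_id.prodMk continuous_const).continuousOn) (fun s hs => ⟨hs, mem_univ _⟩)
  have hcurveC : ∀ α : ℝ, ContinuousOn (fun s => ((s, xm (s, α)) : ℝ × ℝ)) (Ico 0 t₀) :=
    fun α => continuousOn_id.prodMk (hXcont α)
  have hcurveMaps : ∀ α : ℝ, MapsTo (fun s => ((s, xm (s, α)) : ℝ × ℝ)) (Ico 0 t₀)
      (Ico 0 t₀ ×ˢ (univ : Set ℝ)) := fun α s hs => ⟨hs, mem_univ _⟩
  have hGcont : ∀ α : ℝ, ContinuousOn (fun s => lp (s, xm (s, α))) (Ico 0 t₀) := by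
    intro α
    exact hlp.continuousOn.comp (hcurveC α) (hcurveMaps α)
  have hMcont : ∀ α : ℝ, ContinuousOn (fun s => lm (s, xm (s, α))) (Ico 0 t₀) := by
    intro α
    exact hlm.continuousOn.comp (hcurveC α) (hcurveMaps α)
  -- Step 1: lm is constant along the characteristics
  have Cst : ∀ α : ℝ, ∀ t ∈ Ico (0:ℝ) t₀, lm (t, xm (t, α)) = Lm α := by
    intro α t ht
    have key : ∀ u ∈ Ico (0:ℝ) t₀,
        HasDerivWithinAt (fun s => lm (s, xm (s, α))) 0 (Ico 0 t₀) u := by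
      intro u hu
      have h := curve_chain hlm hu (hxmode u hu α)
      have h1 := ((slice_hasDeriv hlm hu (x := xm (u, α))).1).derivWithin
        ((uniqueDiffOn_Ico 0 t₀) u hu)
      have h2 := ((slice_hasDeriv hlm hu (x := xm (u, α))).2).deriv
      have hs := sys1 u hu (xm (u, α))
      rw [h1, h2] at hs
      rwa [hs] at h
    have hconst := constant_of_has_deriv_right_zero
      (f := fun s => lm (s, xm (s, α))) (a := 0) (b := t)
      ((hMcont α).mono (Icc_subset_Ico_right ht.2 |>.trans (fun y hy => ⟨hy.1, hy.2⟩)))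
      (fun x hx => (key x ⟨hx.1, lt_of_lt_of_le hx.2 ht.2.le⟩).mono_of_mem_nhdsWithin
        (hIci x ⟨hx.1, lt_of_lt_of_le hx.2 ht.2.le⟩))
    have h2 : lm (t, xm (t, α)) = lm (0, xm (0, α)) := hconst t (right_mem_Icc.2 ht.1)
    rw [h2, hxm0 α, (hinit α).1]
  -- Step 2: integral representation of the characteristics
  have FTCrep : ∀ t ∈ Ico (0:ℝ) t₀, ∀ α : ℝ,
      xm (t, α) = α + ∫ s in (0:ℝ)..t, lp (s, xm (s, α)) := by
    intro t ht α
    have hIccIco : Icc (0:ℝ) t ⊆ Ico 0 t₀ := fun y hy => ⟨hy.1, lt_of_le_of_lt hy.2 ht.2⟩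
    have hint : IntervalIntegrable (fun s => lp (s, xm (s, α))) volume 0 t := by
      apply ContinuousOn.intervalIntegrable
      rw [uIcc_of_le ht.1]
      exact (hGcont α).mono hIccIco
    have heq := integral_eq_sub_of_hasDeriv_right_of_le ht.1
      (((hXcont α).mono hIccIco))
      (fun x hx => by
        have hx' : x ∈ Ico (0:ℝ) t₀ := ⟨hx.1.le, lt_of_lt_of_le hx.2 ht.2.le⟩
        have : Ico (0:ℝ) t₀ ∈ 𝓝 x :=
          mem_of_superset (Ioo_mem_nhds (lt_of_lt_of_le hx.1 le_rfl) hx'.2)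
            Ioo_subset_Ico_self
        exact ((hxmode x hx' α).hasDerivAt this).hasDerivWithinAt)
      hint
    rw [heq, hxm0 α]
    ring
  -- the α-derivative of the flow and related quantities
  set z : ℝ → ℝ := fun s => fderivWithin ℝ xm (Ico 0 t₀ ×ˢ (univ : Set ℝ)) (s, a) (0, 1)
    with hzdef
  set P : ℝ → ℝ :=
    fun s => fderivWithin ℝ lp (Ico 0 t₀ ×ˢ (univ : Set ℝ)) (s, xm (s, a)) (0, 1) with hPdef
  set Q2 : ℝ × ℝ → ℝ := fun q =>
    fderivWithin ℝ xm (Ico 0 t₀ ×ˢ (univ : Set ℝ)) q (0, 1) *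
      fderivWithin ℝ lp (Ico 0 t₀ ×ˢ (univ : Set ℝ)) (q.1, xm q) (0, 1) with hQ2def
  have hz : ∀ s ∈ Ico (0:ℝ) t₀, HasDerivAt (fun β => xm (s, β)) (z s) a :=
    fun s hs => (slice_hasDeriv hxmC1 hs (x := a)).2
  have hz0 : z 0 = 1 := by
    have h0 : (fun β => xm ((0:ℝ), β)) = fun β => β := funext fun β => hxm0 β
    have := hz 0 ⟨le_rfl, ht₀⟩
    rw [h0] at this
    exact this.unique (hasDerivAt_id' a)
  -- continuity of the various derivative quantities
  have hfdxm := hxmC1.continuousOn_fderivWithin hUS le_rfl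
  have hfdlp := hlp.continuousOn_fderivWithin hUS le_rfl
  have heval : Continuous (fun L : ℝ × ℝ →L[ℝ] ℝ => L ((0:ℝ), (1:ℝ))) := by
    exact (ContinuousLinearMap.apply ℝ ℝ (((0:ℝ), (1:ℝ)) : ℝ × ℝ)).continuous
  have hzcont : ContinuousOn z (Ico 0 t₀) := by
    apply heval.comp_continuousOn
    exact hfdxm.comp (f := fun s => ((s, a) : ℝ × ℝ))
      ((continuous_id.prodMk continuous_const).continuousOn) (fun s hs => ⟨hs, mem_univ _⟩)
  have hQ2cont : ContinuousOn Q2 (Ico 0 t₀ ×ˢ (univ : Set ℝ)) := by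
    apply ContinuousOn.mul (heval.comp_continuousOn hfdxm)
    apply heval.comp_continuousOn
    apply hfdlp.comp
    · exact continuousOn_fst.prodMk hxmC1.continuousOn
    · exact fun q hq => ⟨hq.1, mem_univ _⟩
  have hQ2acont : ContinuousOn (fun s => Q2 (s, a)) (Ico 0 t₀) :=
    hQ2cont.comp (f := fun s => ((s, a) : ℝ × ℝ))
      ((continuous_id.prodMk continuous_const).continuousOn) (fun s hs => ⟨hs, mem_univ _⟩)
  have hQ2diff : ∀ s ∈ Ico (0:ℝ) t₀, ∀ β : ℝ,
      HasDerivAt (fun β' => lp (s, xm (s, β'))) (Q2 (s, β)) β := by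
    intro s hs β
    exact alpha_chain hlp hs ((slice_hasDeriv hxmC1 hs (x := β)).2)
  -- Step 3 : z t = 1 + ∫₀ᵗ Q2 (s,a) ds
  have zrep : ∀ t ∈ Ico (0:ℝ) t₀, z t = 1 + ∫ s in (0:ℝ)..t, Q2 (s, a) := by
    intro t ht
    have hIccIco : Icc (0:ℝ) t ⊆ Ico 0 t₀ := fun y hy => ⟨hy.1, lt_of_le_of_lt hy.2 ht.2⟩
    have hIocIco : Set.uIoc (0:ℝ) t ⊆ Ico 0 t₀ := by
      rw [uIoc_of_le ht.1]
      exact fun y hy => ⟨hy.1.le, lt_of_le_of_lt hy.2 ht.2⟩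
    obtain ⟨C, hC⟩ := (isCompact_Icc.prod (isCompact_closedBall a 1)).exists_bound_of_continuousOn
      (hQ2cont.mono (fun q hq => ⟨hIccIco hq.1, mem_univ _⟩))
    have hdom := hasDerivAt_integral_of_dominated_loc_of_deriv_le
      (F := fun β s => lp (s, xm (s, β))) (F' := fun β s => Q2 (s, β)) (x₀ := a)
      (a := 0) (b := t) (μ := volume) (bound := fun _ => C) (s := Metric.ball a 1) (Metric.ball_mem_nhds a one_pos)
      (Eventually.of_forall fun β => by
        apply ContinuousOn.aestronglyMeasurable _ measurableSet_uIoc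
        exact (hGcont β).mono hIocIco)
      (by
        apply ContinuousOn.intervalIntegrable
        rw [uIcc_of_le ht.1]
        exact (hGcont a).mono hIccIco)
      (by
        apply ContinuousOn.aestronglyMeasurable _ measurableSet_uIoc
        exact hQ2acont.mono hIocIco)
      (Eventually.of_forall fun s hs β hβ => by
        have hsIcc : s ∈ Icc (0:ℝ) t := by
          rw [uIoc_of_le ht.1] at hs; exact ⟨hs.1.le, hs.2⟩
        exact hC (s, β) ⟨hsIcc, Metric.ball_subset_closedBall hβ⟩)
      intervalIntegrable_const
      (Eventually.of_forall fun s hs β _ => hQ2diff s (hIocIco hs) β)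
    have hXd : HasDerivAt (fun β => xm (t, β)) (1 + ∫ s in (0:ℝ)..t, Q2 (s, a)) a := by
      have hfe : (fun β => xm (t, β)) =
          fun β => β + ∫ s in (0:ℝ)..t, lp (s, xm (s, β)) :=
        funext fun β => FTCrep t ht β
      rw [hfe]
      exact (hasDerivAt_id' a).add hdom.2
    exact (hz t ht).unique hXd
  -- Step 4 : along Ici, z and g := lp(t, xm(t,a)) solve linear ODEs with the same coefficient
  have zIci : ∀ x ∈ Ico (0:ℝ) t₀, HasDerivWithinAt z (Q2 (x, a)) (Ici x) x := by
    intro x hx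
    have hint : IntervalIntegrable (fun s => Q2 (s, a)) volume 0 x := by
      apply ContinuousOn.intervalIntegrable
      rw [uIcc_of_le hx.1]
      exact hQ2acont.mono (fun y hy => ⟨hy.1, lt_of_le_of_lt hy.2 hx.2⟩)
    have hmemIoi : Ico (0:ℝ) t₀ ∈ 𝓝[>] x :=
      nhdsWithin_mono x Ioi_subset_Ici_self (hIci x hx)
    have hmeas : StronglyMeasurableAtFilter (fun s => Q2 (s, a)) (𝓝[>] x) volume :=
      ⟨Ico 0 t₀, hmemIoi, hQ2acont.aestronglyMeasurable measurableSet_Ico⟩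
    have hb : ContinuousWithinAt (fun s => Q2 (s, a)) (Ioi x) x :=
      ((hQ2acont x hx).mono_of_mem_nhdsWithin hmemIoi)
    have hI := intervalIntegral.integral_hasDerivWithinAt_right (s := Ici x) (t := Ioi x) hint hmeas hb
    have hI' : HasDerivWithinAt (fun u => 1 + ∫ s in (0:ℝ)..u, Q2 (s, a)) (Q2 (x, a))
        (Ici x) x := hI.const_add 1
    apply hI'.congr_of_eventuallyEq _ (zrep x hx)
    exact eventually_of_mem (hIci x hx) (fun u hu => zrep u hu)
  have gIci : ∀ x ∈ Ico (0:ℝ) t₀,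
      HasDerivWithinAt (fun s => lp (s, xm (s, a)))
        ((lp (x, xm (x, a)) - Lm a) * P x) (Ici x) x := by
    intro x hx
    have h := curve_chain hlp hx (hxmode x hx a)
    have h1 := ((slice_hasDeriv hlp hx (x := xm (x, a))).1).derivWithin
      ((uniqueDiffOn_Ico 0 t₀) x hx)
    have h2 := ((slice_hasDeriv hlp hx (x := xm (x, a))).2).deriv
    have hs := sys2 x hx (xm (x, a))
    rw [h1, h2, Cst a x hx] at hs
    have hval : fderivWithin ℝ lp (Ico 0 t₀ ×ˢ (univ : Set ℝ)) (x, xm (x, a)) (1, 0)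
        + lp (x, xm (x, a)) * fderivWithin ℝ lp (Ico 0 t₀ ×ˢ (univ : Set ℝ)) (x, xm (x, a)) (0, 1)
        = (lp (x, xm (x, a)) - Lm a) * P x := by
      rw [hPdef]
      have : fderivWithin ℝ lp (Ico 0 t₀ ×ˢ (univ : Set ℝ)) (x, xm (x, a)) (1, 0)
          = - (Lm a * fderivWithin ℝ lp (Ico 0 t₀ ×ˢ (univ : Set ℝ)) (x, xm (x, a)) (0, 1)) := by
        linarith [hs]
      rw [this]; ring
    rw [hval] at h
    exact h.mono_of_mem_nhdsWithin (hIci x hx)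
  -- Step 5 : identify z via the quotient trick
  have hglne : ∀ x ∈ Ico (0:ℝ) t₀, lp (x, xm (x, a)) - Lm a ≠ 0 :=
    fun x hx => sub_ne_zero.2 (hnever x hx)
  have hbc : Lp a - Lm a ≠ 0 := sub_ne_zero.2 hne
  have hgl0 : lp (0, xm (0, a)) = Lp a := by rw [hxm0 a, (hinit a).2]
  have Zid : ∀ t ∈ Ico (0:ℝ) t₀, (Lp a - Lm a) * z t = lp (t, xm (t, a)) - Lm a := by
    intro t ht
    set q : ℝ → ℝ := fun s => ((Lp a - Lm a) * z s) / (lp (s, xm (s, a)) - Lm a) with hqdef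
    have hIccIco : Icc (0:ℝ) t ⊆ Ico 0 t₀ := fun y hy => ⟨hy.1, lt_of_le_of_lt hy.2 ht.2⟩
    have hqcont : ContinuousOn q (Icc 0 t) := by
      apply ContinuousOn.div
      · exact (continuousOn_const.mul (hzcont.mono hIccIco))
      · exact ((hGcont a).mono hIccIco).sub continuousOn_const
      · exact fun s hs => hglne s (hIccIco hs)
    have hqderiv : ∀ x ∈ Ico (0:ℝ) t, HasDerivWithinAt q 0 (Ici x) x := by
      intro x hx
      have hx' : x ∈ Ico (0:ℝ) t₀ := ⟨hx.1, lt_of_lt_of_le hx.2 ht.2.le⟩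
      have hnum : HasDerivWithinAt (fun s => (Lp a - Lm a) * z s)
          ((Lp a - Lm a) * Q2 (x, a)) (Ici x) x := (zIci x hx').const_mul _
      have hden : HasDerivWithinAt (fun s => lp (s, xm (s, a)) - Lm a)
          ((lp (x, xm (x, a)) - Lm a) * P x) (Ici x) x := (gIci x hx').sub_const _
      have hdiv := hnum.div hden (hglne x hx')
      have hQ2a : Q2 (x, a) = z x * P x := rfl
      refine HasDerivWithinAt.congr_deriv hdiv ?_
      rw [hQ2a]
      ring
    have hconst := constant_of_has_deriv_right_zero hqcont hqderiv
    have hq0 : q 0 = 1 := by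
      show ((Lp a - Lm a) * z 0) / (lp (0, xm (0, a)) - Lm a) = 1
      rw [hz0, hgl0]
      field_simp
    have hqt := hconst t (right_mem_Icc.2 ht.1)
    rw [hq0] at hqt
    have := (div_eq_one_iff_eq (hglne t ht)).1 hqt
    linarith [this]
  -- Step 6 : relation between the spatial gradient and z
  have Wid : ∀ t ∈ Ico (0:ℝ) t₀,
      deriv (fun y => lm (t, y)) (xm (t, a)) * z t = deriv Lm a := by
    intro t ht
    have hchain := alpha_chain hlm ht (hz t ht)
    have hfe : (fun β => lm (t, xm (t, β))) = Lm := funext fun β => Cst β t ht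
    rw [hfe] at hchain
    have hLmd : HasDerivAt Lm (deriv Lm a) a := (hLm.differentiable one_ne_zero a).hasDerivAt
    have huniq := hchain.unique hLmd
    have h2 := ((slice_hasDeriv hlm ht (x := xm (t, a))).2).deriv
    rw [h2]
    rw [mul_comm]
    exact huniq
  -- Step 7 : conclude
  have hIcoNhds : Ico (0:ℝ) t₀ ∈ 𝓝[<] t₀ := by
    rw [mem_nhdsWithin]
    exact ⟨Ioi 0, isOpen_Ioi, ht₀, fun y hy => ⟨hy.1.le, hy.2⟩⟩
  have hK : (0:ℝ) < |deriv Lm a| * |Lp a - Lm a| :=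
    mul_pos (abs_pos.2 hLm') (abs_pos.2 hbc)
  have heq : ∀ᶠ t in 𝓝[<] t₀, |deriv (fun y => lm (t, y)) (xm (t, a))| =
      (|deriv Lm a| * |Lp a - Lm a|) * (|lp (t, xm (t, a)) - Lm a|)⁻¹ := by
    apply eventually_of_mem hIcoNhds
    intro t ht
    have hzval : z t = (lp (t, xm (t, a)) - Lm a) / (Lp a - Lm a) := by
      field_simp
      linarith [Zid t ht]
    have hzne : z t ≠ 0 := by
      rw [hzval]
      exact div_ne_zero (hglne t ht) hbc
    have hw : deriv (fun y => lm (t, y)) (xm (t, a)) =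
        deriv Lm a * (Lp a - Lm a) / (lp (t, xm (t, a)) - Lm a) := by
      have h := Wid t ht
      rw [hzval] at h
      field_simp at h
      rw [eq_div_iff (hglne t ht)]
      linear_combination h
    rw [hw, abs_div, abs_mul]
    rw [div_eq_mul_inv]
  rw [tendsto_congr' heq]
  apply Tendsto.const_mul_atTop hK
  apply tendsto_inv_nhdsGT_zero.comp
  rw [tendsto_nhdsWithin_iff]
  constructor
  · have : Tendsto (fun t => lp (t, xm (t, a)) - Lm a) (𝓝[<] t₀) (𝓝 0) := by
      have := hmerge.sub_const (Lm a)
      simpa using this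
    have habs := this.abs
    simpa using habs
  · exact eventually_of_mem hIcoNhds (fun t ht => abs_pos.2 (hglne t ht))
end

section
/- There exist C² functions Λ₋, Λ₊ : ℝ → ℝ with bounded C² norms and real numbers α₀ < β₀ satisfying all of the assumptions (H1)–(H5): (H1) Λ₋(x) < Λ₊(x) for all x ∈ ℝ; (H2) Λ₋′(x) < 0 and Λ₊′(x) < 0 for all x ∈ ℝ; (H3) Λ₋(α₀) = Λ₊(β₀) = 0; (H4) f(α₀) = 0; (H5) f′(α₀) < 0, where β(α) := Λ₊⁻¹(Λ₋(α)) and f(α) := Λ₋′(α)/(Λ₊(β(α)) − Λ₋(β(α))) − Λ₊′(β(α))/(Λ₊(α) − Λ₋(α)). -/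
open Set

private lemma hLm' (x : ℝ) : HasDerivAt (fun x => -Real.arctan x) (-(1 + x ^ 2)⁻¹) x :=
  (Real.hasDerivAt_arctan' x).neg

private lemma hLp' (x : ℝ) :
    HasDerivAt (fun x => -Real.arctan (x - 1)) (-(1 + (x - 1) ^ 2)⁻¹) x := by
  have := ((Real.hasDerivAt_arctan' (x - 1)).comp x ((hasDerivAt_id x).sub_const 1)).neg
  exact this.congr_deriv (by rw [mul_one])

private lemma dLm : deriv (fun x => -Real.arctan x) = fun x : ℝ => -(1 + x ^ 2)⁻¹ :=
  funext fun x => (hLm' x).deriv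

private lemma dLp : deriv (fun x => -Real.arctan (x - 1)) = fun x : ℝ => -(1 + (x - 1) ^ 2)⁻¹ :=
  funext fun x => (hLp' x).deriv

private lemma h2Lm (x : ℝ) :
    HasDerivAt (fun x : ℝ => -(1 + x ^ 2)⁻¹) (2 * x / (1 + x ^ 2) ^ 2) x := by
  have h1 : HasDerivAt (fun x : ℝ => 1 + x ^ 2) (2 * x) x := by
    simpa using (hasDerivAt_pow 2 x).const_add 1
  have h2 := (h1.inv (by positivity)).neg
  exact h2.congr_deriv (by ring)

private lemma h2Lp (x : ℝ) :
    HasDerivAt (fun x : ℝ => -(1 + (x - 1) ^ 2)⁻¹) (2 * (x - 1) / (1 + (x - 1) ^ 2) ^ 2) x := by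
  have := (h2Lm (x - 1)).comp x ((hasDerivAt_id x).sub_const 1)
  simpa [Function.comp_def] using this

private lemma bound2 (x : ℝ) : |2 * x / (1 + x ^ 2) ^ 2| ≤ 2 := by
  rw [abs_div, abs_of_pos (by positivity : (0:ℝ) < (1 + x ^ 2) ^ 2), div_le_iff₀ (by positivity)]
  have h := abs_nonneg x
  have h2 : |2 * x| = 2 * |x| := by rw [abs_mul]; norm_num
  nlinarith [sq_abs x, sq_nonneg (|x| - 1), sq_nonneg (x ^ 2)]

/-- Lemma 2.4: the set of initial data satisfying assumptions (H1)–(H5) is not empty. -/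
theorem initial_data_satisfying_H1_H5_exists :
    ∃ (Lm Lp bf : ℝ → ℝ) (α₀ β₀ : ℝ),
      ContDiff ℝ 2 Lm ∧ ContDiff ℝ 2 Lp ∧
      (∃ C : ℝ, ∀ x : ℝ,
        |Lm x| ≤ C ∧ |deriv Lm x| ≤ C ∧ |deriv (deriv Lm) x| ≤ C ∧
        |Lp x| ≤ C ∧ |deriv Lp x| ≤ C ∧ |deriv (deriv Lp) x| ≤ C) ∧
      α₀ < β₀ ∧
      -- (H1)
      (∀ x : ℝ, Lm x < Lp x) ∧
      -- (H2)
      (∀ x : ℝ, deriv Lm x < 0 ∧ deriv Lp x < 0) ∧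
      -- (H3)
      Lm α₀ = 0 ∧ Lp β₀ = 0 ∧
      -- β(α) = Λ₊⁻¹(Λ₋(α))
      (∀ a : ℝ, Lp (bf a) = Lm a) ∧ bf α₀ = β₀ ∧
      -- (H4)
      (fun a => deriv Lm a / (Lp (bf a) - Lm (bf a))
          - deriv Lp (bf a) / (Lp a - Lm a)) α₀ = 0 ∧
      -- (H5)
      deriv (fun a => deriv Lm a / (Lp (bf a) - Lm (bf a))
          - deriv Lp (bf a) / (Lp a - Lm a)) α₀ < 0 := by
  refine ⟨fun x => -Real.arctan x, fun x => -Real.arctan (x - 1), fun a => a + 1, 0, 1,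
    Real.contDiff_arctan.neg,
    (Real.contDiff_arctan.comp (contDiff_id.sub contDiff_const)).neg,
    ⟨2, fun x => ?_⟩, by norm_num, fun x => ?_, fun x => ?_, by simp, by simp,
    fun a => by norm_num, by norm_num, ?_, ?_⟩
  · -- bounds
    have hb : |Real.arctan x| ≤ 2 := by
      have h1 := Real.arctan_lt_pi_div_two x
      have h2 := Real.neg_pi_div_two_lt_arctan x
      have hπ := Real.pi_le_four
      rw [abs_le]; constructor <;> linarith
    have hb' : |Real.arctan (x - 1)| ≤ 2 := by
      have h1 := Real.arctan_lt_pi_div_two (x - 1)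
      have h2 := Real.neg_pi_div_two_lt_arctan (x - 1)
      have hπ := Real.pi_le_four
      rw [abs_le]; constructor <;> linarith
    have hd1 : |(-(1 + x ^ 2)⁻¹ : ℝ)| ≤ 2 := by
      rw [abs_neg, abs_of_pos (by positivity)]
      have h0 : (1:ℝ) ≤ 1 + x ^ 2 := by nlinarith [sq_nonneg x]
      have := (inv_le_one₀ (by positivity)).mpr h0
      linarith
    have hd1' : |(-(1 + (x - 1) ^ 2)⁻¹ : ℝ)| ≤ 2 := by
      rw [abs_neg, abs_of_pos (by positivity)]
      have h0 : (1:ℝ) ≤ 1 + (x - 1) ^ 2 := by nlinarith [sq_nonneg (x - 1)]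
      have := (inv_le_one₀ (by positivity)).mpr h0
      linarith
    refine ⟨by simpa using hb, ?_, ?_, by simpa using hb', ?_, ?_⟩
    · rw [dLm]; exact hd1
    · rw [dLm]
      have : deriv (fun x : ℝ => -(1 + x ^ 2)⁻¹) x = 2 * x / (1 + x ^ 2) ^ 2 := (h2Lm x).deriv
      rw [this]; exact bound2 x
    · rw [dLp]; exact hd1'
    · rw [dLp]
      have : deriv (fun x : ℝ => -(1 + (x - 1) ^ 2)⁻¹) x
          = 2 * (x - 1) / (1 + (x - 1) ^ 2) ^ 2 := (h2Lp x).deriv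
      rw [this]; exact bound2 (x - 1)
  · -- H1
    have : Real.arctan (x - 1) < Real.arctan x := Real.arctan_strictMono (by linarith)
    simpa using neg_lt_neg this
  · -- H2
    constructor
    · rw [dLm]
      have : (0:ℝ) < (1 + x ^ 2)⁻¹ := by positivity
      simpa using this
    · rw [dLp]
      have : (0:ℝ) < (1 + (x - 1) ^ 2)⁻¹ := by positivity
      simpa using this
  · -- H4
    simp only [dLm, dLp]
    norm_num [Real.arctan_zero, Real.arctan_neg, Real.arctan_one]
  · -- H5
    have hF : (fun a : ℝ => deriv (fun x => -Real.arctan x) a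
          / ((fun x => -Real.arctan (x - 1)) ((fun a : ℝ => a + 1) a)
            - (fun x => -Real.arctan x) ((fun a : ℝ => a + 1) a))
          - deriv (fun x => -Real.arctan (x - 1)) ((fun a : ℝ => a + 1) a)
          / ((fun x => -Real.arctan (x - 1)) a - (fun x => -Real.arctan x) a))
        = fun a : ℝ => (-(1 + a ^ 2)⁻¹) / (Real.arctan (a + 1) - Real.arctan a)
          - (-(1 + a ^ 2)⁻¹) / (Real.arctan a - Real.arctan (a - 1)) := by
      funext a
      simp only [dLm, dLp]
      norm_num
      ring
    rw [hF]
    have hu : HasDerivAt (fun a : ℝ => -(1 + a ^ 2)⁻¹) 0 0 := by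
      simpa using h2Lm 0
    have hA : HasDerivAt (fun a : ℝ => Real.arctan (a + 1) - Real.arctan a)
        ((1 + (0 + 1:ℝ) ^ 2)⁻¹ * 1 - (1 + (0:ℝ) ^ 2)⁻¹) 0 := by
      have h1 : HasDerivAt (fun a : ℝ => Real.arctan (a + 1)) ((1 + (0 + 1:ℝ) ^ 2)⁻¹ * 1) 0 := by
        have := (Real.hasDerivAt_arctan' ((0:ℝ) + 1)).comp 0 ((hasDerivAt_id (0:ℝ)).add_const 1)
        simpa [Function.comp_def] using this
      exact h1.sub (Real.hasDerivAt_arctan' 0)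
    have hB : HasDerivAt (fun a : ℝ => Real.arctan a - Real.arctan (a - 1))
        ((1 + (0:ℝ) ^ 2)⁻¹ - (1 + ((0:ℝ) - 1) ^ 2)⁻¹ * 1) 0 := by
      have h1 : HasDerivAt (fun a : ℝ => Real.arctan (a - 1)) ((1 + ((0:ℝ) - 1) ^ 2)⁻¹ * 1) 0 := by
        have := (Real.hasDerivAt_arctan' ((0:ℝ) - 1)).comp 0 ((hasDerivAt_id (0:ℝ)).sub_const 1)
        simpa [Function.comp_def] using this
      exact (Real.hasDerivAt_arctan' 0).sub h1
    have hπ : (0:ℝ) < Real.pi := Real.pi_pos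
    have hA0 : Real.arctan (0 + 1) - Real.arctan 0 ≠ 0 := by
      norm_num [Real.arctan_one, Real.arctan_zero]
    have hB0 : Real.arctan 0 - Real.arctan (0 - 1) ≠ 0 := by
      norm_num [Real.arctan_one, Real.arctan_zero, Real.arctan_neg]
    have hd : HasDerivAt (fun a : ℝ => -(1 + a ^ 2)⁻¹ / (Real.arctan (a + 1) - Real.arctan a)
        - -(1 + a ^ 2)⁻¹ / (Real.arctan a - Real.arctan (a - 1))) _ 0 :=
      (hu.div hA hA0).sub (hu.div hB hB0)
    rw [hd.deriv]
    norm_num [Real.arctan_one, Real.arctan_zero, Real.arctan_neg]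
    have h : (0:ℝ) < (Real.pi / 4) ^ 2 := by positivity
    rw [div_lt_div_iff₀ h h]
    nlinarith
end

section
/- Let Λ₋, Λ₊ : ℝ → ℝ be C¹ with Λ₋ < Λ₊ everywhere and Λ₋′ < 0, Λ₊′ < 0, and let α₀ < β₀ satisfy Λ₋(α₀) = Λ₊(β₀). Set t₀ = ∫_{α₀}^{β₀} dζ/(Λ₊(ζ) − Λ₋(ζ)). Let λ₋, λ₊ : [0,T) × ℝ → ℝ be a C¹ solution of the diagonal system (∗) with λ₋(0,·) = Λ₋, λ₊(0,·) = Λ₊ and λ₋ < λ₊ on [0,T) × ℝ, and suppose the characteristics x⁻(·,α₀) (solving dx/dt = λ₊(t,x), x(0) = α₀) and x⁺(·,β₀) (solving dx/dt = λ₋(t,x), x(0) = β₀) are defined on [0,T). If T > t₀, then there exists t* with 0 < t* ≤ t₀ such that x⁻(t*,α₀) = x⁺(t*,β₀); i.e., the two characteristics of different families starting from α₀ and β₀ intersect in finite time. -/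
open Set Filter Topology Metric MeasureTheory Interval

/-- Lemma 2.5: the characteristics of different families starting from `α₀` and `β₀`
with `Λ₋(α₀) = Λ₊(β₀)` intersect in finite time (no later than `t₀`). -/
theorem characteristics_of_different_families_intersect
    (T : ℝ) (hT : 0 < T)
    (Lm Lp : ℝ → ℝ) (hLm : ContDiff ℝ 1 Lm) (hLp : ContDiff ℝ 1 Lp)
    (hord : ∀ x, Lm x < Lp x)
    (hLm' : ∀ x, deriv Lm x < 0) (hLp' : ∀ x, deriv Lp x < 0)
    (α₀ β₀ : ℝ) (hαβ : α₀ < β₀) (heq : Lm α₀ = Lp β₀)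
    (t₀ : ℝ) (ht₀ : t₀ = ∫ ζ in α₀..β₀, 1 / (Lp ζ - Lm ζ))
    (lm lp : ℝ × ℝ → ℝ)
    (hlm : ContDiffOn ℝ 1 lm (Ico 0 T ×ˢ (univ : Set ℝ)))
    (hlp : ContDiffOn ℝ 1 lp (Ico 0 T ×ˢ (univ : Set ℝ)))
    (hinit : ∀ x : ℝ, lm (0, x) = Lm x ∧ lp (0, x) = Lp x)
    (hordl : ∀ t ∈ Ico (0:ℝ) T, ∀ x : ℝ, lm (t, x) < lp (t, x))
    (sys1 : ∀ t ∈ Ico (0:ℝ) T, ∀ x : ℝ,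
      derivWithin (fun s => lm (s, x)) (Ico 0 T) t
        + lp (t, x) * deriv (fun y => lm (t, y)) x = 0)
    (sys2 : ∀ t ∈ Ico (0:ℝ) T, ∀ x : ℝ,
      derivWithin (fun s => lp (s, x)) (Ico 0 T) t
        + lm (t, x) * deriv (fun y => lp (t, y)) x = 0)
    (xm xp : ℝ → ℝ)
    (hxm0 : xm 0 = α₀) (hxp0 : xp 0 = β₀)
    (hxm : ∀ t ∈ Ico (0:ℝ) T, HasDerivWithinAt xm (lp (t, xm t)) (Ico 0 T) t)
    (hxp : ∀ t ∈ Ico (0:ℝ) T, HasDerivWithinAt xp (lm (t, xp t)) (Ico 0 T) t)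
    (hTt₀ : t₀ < T) :
    ∃ tstar : ℝ, 0 < tstar ∧ tstar ≤ t₀ ∧ xm tstar = xp tstar := by
  -- positivity of t₀
  have hLcont : Continuous fun ζ => 1 / (Lp ζ - Lm ζ) :=
    continuous_const.div (hLp.continuous.sub hLm.continuous)
      (fun x => ne_of_gt (sub_pos.2 (hord x)))
  have ht₀pos : 0 < t₀ := by
    rw [ht₀]
    exact intervalIntegral.intervalIntegral_pos_of_pos (hLcont.intervalIntegrable _ _)
      (fun x => div_pos one_pos (sub_pos.2 (hord x))) hαβ
  have hsubIcc : Icc (0:ℝ) t₀ ⊆ Ico 0 T := fun t ht => ⟨ht.1, lt_of_le_of_lt ht.2 hTt₀⟩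
  -- open interior set
  have hSopen : IsOpen (Ioo (0:ℝ) T ×ˢ (univ : Set ℝ)) := isOpen_Ioo.prod isOpen_univ
  have hSsub : Ioo (0:ℝ) T ×ˢ (univ : Set ℝ) ⊆ Ico 0 T ×ˢ (univ : Set ℝ) :=
    prod_mono Ioo_subset_Ico_self (subset_refl _)
  have hSmem : ∀ {t x : ℝ}, t ∈ Ioo (0:ℝ) T → Ico 0 T ×ˢ (univ : Set ℝ) ∈ 𝓝 ((t, x) : ℝ × ℝ) := by
    intro t x ht
    exact Filter.mem_of_superset (hSopen.mem_nhds ⟨ht, mem_univ x⟩) hSsub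
  have hdm : ∀ {t x : ℝ}, t ∈ Ioo (0:ℝ) T → HasFDerivAt lm (fderiv ℝ lm (t, x)) (t, x) :=
    fun {t x} ht => ((hlm.contDiffAt (hSmem ht)).differentiableAt one_ne_zero).hasFDerivAt
  have hdp : ∀ {t x : ℝ}, t ∈ Ioo (0:ℝ) T → HasFDerivAt lp (fderiv ℝ lp (t, x)) (t, x) :=
    fun {t x} ht => ((hlp.contDiffAt (hSmem ht)).differentiableAt one_ne_zero).hasFDerivAt
  -- curves
  have curve1 : ∀ x t : ℝ, HasDerivAt (fun s : ℝ => ((s, x) : ℝ × ℝ)) (1, 0) t :=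
    fun x t => (hasDerivAt_id t).prodMk (hasDerivAt_const t x)
  have curve2 : ∀ t x : ℝ, HasDerivAt (fun y : ℝ => ((t, y) : ℝ × ℝ)) (0, 1) x :=
    fun t x => (hasDerivAt_const x t).prodMk (hasDerivAt_id x)
  -- the PDE at interior points, in terms of the full derivative
  have pdem : ∀ {t x : ℝ}, t ∈ Ioo (0:ℝ) T →
      fderiv ℝ lm (t, x) (1, 0) = -(lp (t, x) * fderiv ℝ lm (t, x) (0, 1)) := by
    intro t x ht
    have h1 : HasDerivAt (fun s => lm (s, x)) (fderiv ℝ lm (t, x) (1, 0)) t := by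
      simpa [Function.comp_def] using HasFDerivAt.comp_hasDerivAt (f := fun s : ℝ => ((s, x) : ℝ × ℝ)) t (hdm ht) (curve1 x t)
    have h2 : HasDerivAt (fun y => lm (t, y)) (fderiv ℝ lm (t, x) (0, 1)) x := by
      simpa [Function.comp_def] using HasFDerivAt.comp_hasDerivAt (f := fun y : ℝ => ((t, y) : ℝ × ℝ)) x (hdm ht) (curve2 t x)
    have h3 := sys1 t ⟨le_of_lt ht.1, ht.2⟩ x
    rw [derivWithin_of_mem_nhds (Ico_mem_nhds ht.1 ht.2), h1.deriv, h2.deriv] at h3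
    linarith
  have pdep : ∀ {t x : ℝ}, t ∈ Ioo (0:ℝ) T →
      fderiv ℝ lp (t, x) (1, 0) = -(lm (t, x) * fderiv ℝ lp (t, x) (0, 1)) := by
    intro t x ht
    have h1 : HasDerivAt (fun s => lp (s, x)) (fderiv ℝ lp (t, x) (1, 0)) t := by
      simpa [Function.comp_def] using HasFDerivAt.comp_hasDerivAt (f := fun s : ℝ => ((s, x) : ℝ × ℝ)) t (hdp ht) (curve1 x t)
    have h2 : HasDerivAt (fun y => lp (t, y)) (fderiv ℝ lp (t, x) (0, 1)) x := by
      simpa [Function.comp_def] using HasFDerivAt.comp_hasDerivAt (f := fun y : ℝ => ((t, y) : ℝ × ℝ)) x (hdp ht) (curve2 t x)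
    have h3 := sys2 t ⟨le_of_lt ht.1, ht.2⟩ x
    rw [derivWithin_of_mem_nhds (Ico_mem_nhds ht.1 ht.2), h1.deriv, h2.deriv] at h3
    linarith
  -- linearity of fderiv application
  have hvec : ∀ (A : ℝ × ℝ →L[ℝ] ℝ) (r : ℝ), A (1, r) = A (1, 0) + r * A (0, 1) := by
    intro A r
    have : ((1 : ℝ), r) = ((1 : ℝ), (0 : ℝ)) + r • ((0 : ℝ), (1 : ℝ)) := by
      simp [Prod.ext_iff]
    rw [this, map_add, _root_.map_smul, smul_eq_mul]
  have hvec0 : ∀ (A : ℝ × ℝ →L[ℝ] ℝ) (r : ℝ), A (0, r) = r * A (0, 1) := by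
    intro A r
    have : ((0 : ℝ), r) = r • ((0 : ℝ), (1 : ℝ)) := by simp [Prod.ext_iff]
    rw [this, _root_.map_smul, smul_eq_mul]
  -- basic continuity
  have hxmc : ContinuousOn xm (Ico 0 T) := fun t ht => (hxm t ht).continuousWithinAt
  have hxpc : ContinuousOn xp (Ico 0 T) := fun t ht => (hxp t ht).continuousWithinAt
  have hne : ∀ p ∈ Ico (0:ℝ) T ×ˢ (univ : Set ℝ), lp p - lm p ≠ 0 :=
    fun p hp => ne_of_gt (sub_pos.2 (hordl p.1 hp.1 p.2))
  have hwc : ContinuousOn (fun p => (lp p - lm p)⁻¹) (Ico (0:ℝ) T ×ˢ (univ : Set ℝ)) :=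
    (hlp.continuousOn.sub hlm.continuousOn).inv₀ hne
  -- main definitions
  set c : ℝ → ℝ → ℝ := fun t τ => xm t + τ * (xp t - xm t) with hcdef
  set F : ℝ → ℝ → ℝ := fun t τ =>
    (xp t - xm t) * (lp (t, c t τ) - lm (t, c t τ))⁻¹ with hFdef
  set G : ℝ → ℝ → ℝ := fun t τ =>
    (lm (t, xp t) - lp (t, xm t)) * (lp (t, c t τ) - lm (t, c t τ))⁻¹ +
      (xp t - xm t) *
        (-(fderiv ℝ lp (t, c t τ) (1, lp (t, xm t) + τ * (lm (t, xp t) - lp (t, xm t))) -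
            fderiv ℝ lm (t, c t τ) (1, lp (t, xm t) + τ * (lm (t, xp t) - lp (t, xm t)))) /
          (lp (t, c t τ) - lm (t, c t τ)) ^ 2) with hGdef
  -- t-derivative of the integrand
  have hFt : ∀ {t : ℝ} (τ : ℝ), t ∈ Ioo (0:ℝ) T → HasDerivAt (fun s => F s τ) (G t τ) t := by
    intro t τ ht
    have htm : t ∈ Ico (0:ℝ) T := ⟨le_of_lt ht.1, ht.2⟩
    have hxmd : HasDerivAt xm (lp (t, xm t)) t :=
      (hxm t htm).hasDerivAt (Ico_mem_nhds ht.1 ht.2)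
    have hxpd : HasDerivAt xp (lm (t, xp t)) t :=
      (hxp t htm).hasDerivAt (Ico_mem_nhds ht.1 ht.2)
    have hgd : HasDerivAt (fun s => xp s - xm s) (lm (t, xp t) - lp (t, xm t)) t :=
      hxpd.sub hxmd
    have hcd : HasDerivAt (fun s => c s τ)
        (lp (t, xm t) + τ * (lm (t, xp t) - lp (t, xm t))) t := by
      simp only [hcdef]
      exact hxmd.add (hgd.const_mul τ)
    have hcurve : HasDerivAt (fun s : ℝ => ((s, c s τ) : ℝ × ℝ))
        (1, lp (t, xm t) + τ * (lm (t, xp t) - lp (t, xm t))) t :=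
      (hasDerivAt_id t).prodMk hcd
    have h1 : HasDerivAt (fun s => lp (s, c s τ))
        (fderiv ℝ lp (t, c t τ) (1, lp (t, xm t) + τ * (lm (t, xp t) - lp (t, xm t)))) t := by
      simpa [Function.comp_def] using
        HasFDerivAt.comp_hasDerivAt (f := fun s : ℝ => ((s, c s τ) : ℝ × ℝ)) t (hdp ht) hcurve
    have h2 : HasDerivAt (fun s => lm (s, c s τ))
        (fderiv ℝ lm (t, c t τ) (1, lp (t, xm t) + τ * (lm (t, xp t) - lp (t, xm t)))) t := by
      simpa [Function.comp_def] using
        HasFDerivAt.comp_hasDerivAt (f := fun s : ℝ => ((s, c s τ) : ℝ × ℝ)) t (hdm ht) hcurve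
    have hne' : lp (t, c t τ) - lm (t, c t τ) ≠ 0 := hne (t, c t τ) ⟨htm, mem_univ _⟩
    have hinv := (h1.fun_sub h2).fun_inv hne'
    simpa only [hFdef, hGdef] using hgd.fun_mul hinv
  -- τ-antiderivative of G t
  have hPd : ∀ {t : ℝ} (τ : ℝ), t ∈ Ioo (0:ℝ) T →
      HasDerivAt (fun σ => (lp (t, xm t) + σ * (lm (t, xp t) - lp (t, xm t)) - lm (t, c t σ)) *
        (lp (t, c t σ) - lm (t, c t σ))⁻¹) (G t τ) τ := by
    intro t τ ht
    have htm : t ∈ Ico (0:ℝ) T := ⟨le_of_lt ht.1, ht.2⟩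
    have hcd2 : HasDerivAt (fun σ => c t σ) (xp t - xm t) τ := by
      simp only [hcdef]
      simpa using ((hasDerivAt_id τ).mul_const (xp t - xm t)).const_add (xm t)
    have hcurve2 : HasDerivAt (fun σ : ℝ => ((t, c t σ) : ℝ × ℝ)) ((0 : ℝ), xp t - xm t) τ :=
      (hasDerivAt_const τ t).prodMk hcd2
    have h1 : HasDerivAt (fun σ => lp (t, c t σ))
        (fderiv ℝ lp (t, c t τ) (0, xp t - xm t)) τ := by
      simpa [Function.comp_def] using
        HasFDerivAt.comp_hasDerivAt (f := fun σ : ℝ => ((t, c t σ) : ℝ × ℝ)) τ (hdp ht) hcurve2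
    have h2 : HasDerivAt (fun σ => lm (t, c t σ))
        (fderiv ℝ lm (t, c t τ) (0, xp t - xm t)) τ := by
      simpa [Function.comp_def] using
        HasFDerivAt.comp_hasDerivAt (f := fun σ : ℝ => ((t, c t σ) : ℝ × ℝ)) τ (hdm ht) hcurve2
    have hlin : HasDerivAt (fun σ : ℝ => lp (t, xm t) + σ * (lm (t, xp t) - lp (t, xm t)))
        (lm (t, xp t) - lp (t, xm t)) τ := by
      simpa using ((hasDerivAt_id τ).mul_const (lm (t, xp t) - lp (t, xm t))).const_add (lp (t, xm t))
    have hne' : lp (t, c t τ) - lm (t, c t τ) ≠ 0 := hne (t, c t τ) ⟨htm, mem_univ _⟩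
    have hinv := (h1.fun_sub h2).fun_inv hne'
    have hmul := (hlin.fun_sub h2).fun_mul hinv
    refine hmul.congr_deriv ?_
    simp only [hGdef]
    rw [hvec (fderiv ℝ lp (t, c t τ)) _, hvec (fderiv ℝ lm (t, c t τ)) _,
        hvec0 (fderiv ℝ lp (t, c t τ)) (xp t - xm t), hvec0 (fderiv ℝ lm (t, c t τ)) (xp t - xm t),
        pdep ht, pdem ht]
    set U := lp (t, c t τ) with hU
    set V := lm (t, c t τ) with hV
    set P1 := fderiv ℝ lm (t, c t τ) (0, 1) with hP1
    set Q1 := fderiv ℝ lp (t, c t τ) (0, 1) with hQ1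
    set AM := lp (t, xm t) with hAM
    set BM := lm (t, xp t) with hBM
    have hne'' : U - V ≠ 0 := hne'
    field_simp
    ring
  -- joint continuity of F and G
  have hxmc2 : ContinuousOn (fun q : ℝ × ℝ => xm q.1) (Ico (0:ℝ) T ×ˢ (univ : Set ℝ)) :=
    hxmc.comp continuous_fst.continuousOn (fun q hq => hq.1)
  have hxpc2 : ContinuousOn (fun q : ℝ × ℝ => xp q.1) (Ico (0:ℝ) T ×ˢ (univ : Set ℝ)) :=
    hxpc.comp continuous_fst.continuousOn (fun q hq => hq.1)
  have hcc2 : ContinuousOn (fun q : ℝ × ℝ => c q.1 q.2) (Ico (0:ℝ) T ×ˢ (univ : Set ℝ)) := by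
    simp only [hcdef]
    exact hxmc2.add (continuous_snd.continuousOn.mul (hxpc2.sub hxmc2))
  have hmap2 : ContinuousOn (fun q : ℝ × ℝ => ((q.1, c q.1 q.2) : ℝ × ℝ))
      (Ico (0:ℝ) T ×ˢ (univ : Set ℝ)) := continuous_fst.continuousOn.prodMk hcc2
  have hwcomp : ContinuousOn (fun q : ℝ × ℝ => (lp (q.1, c q.1 q.2) - lm (q.1, c q.1 q.2))⁻¹)
      (Ico (0:ℝ) T ×ˢ (univ : Set ℝ)) := by
    simpa [Function.comp_def] using hwc.comp hmap2 (fun q hq => ⟨hq.1, trivial⟩)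
  have hFc : ContinuousOn (fun q : ℝ × ℝ => F q.1 q.2) (Ico (0:ℝ) T ×ˢ (univ : Set ℝ)) := by
    simp only [hFdef]
    exact (hxpc2.sub hxmc2).mul hwcomp
  have hlpc2 : ContinuousOn (fun q : ℝ × ℝ => lp (q.1, c q.1 q.2))
      (Ico (0:ℝ) T ×ˢ (univ : Set ℝ)) := by
    simpa [Function.comp_def] using hlp.continuousOn.comp hmap2 (fun q hq => ⟨hq.1, trivial⟩)
  have hlmc2 : ContinuousOn (fun q : ℝ × ℝ => lm (q.1, c q.1 q.2))
      (Ico (0:ℝ) T ×ˢ (univ : Set ℝ)) := by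
    simpa [Function.comp_def] using hlm.continuousOn.comp hmap2 (fun q hq => ⟨hq.1, trivial⟩)
  have hampc : ContinuousOn (fun q : ℝ × ℝ => lp (q.1, xm q.1))
      (Ico (0:ℝ) T ×ˢ (univ : Set ℝ)) := by
    simpa [Function.comp_def] using hlp.continuousOn.comp
      (continuous_fst.continuousOn.prodMk hxmc2) (fun q hq => ⟨hq.1, trivial⟩)
  have hbmpc : ContinuousOn (fun q : ℝ × ℝ => lm (q.1, xp q.1))
      (Ico (0:ℝ) T ×ˢ (univ : Set ℝ)) := by
    simpa [Function.comp_def] using hlm.continuousOn.comp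
      (continuous_fst.continuousOn.prodMk hxpc2) (fun q hq => ⟨hq.1, trivial⟩)
  have hfdm : ContinuousOn (fderiv ℝ lm) (Ioo (0:ℝ) T ×ˢ (univ : Set ℝ)) :=
    (hlm.mono hSsub).continuousOn_fderiv_of_isOpen hSopen le_rfl
  have hfdp : ContinuousOn (fderiv ℝ lp) (Ioo (0:ℝ) T ×ˢ (univ : Set ℝ)) :=
    (hlp.mono hSsub).continuousOn_fderiv_of_isOpen hSopen le_rfl
  have hvecc : ContinuousOn (fun q : ℝ × ℝ =>
      (((1:ℝ), lp (q.1, xm q.1) + q.2 * (lm (q.1, xp q.1) - lp (q.1, xm q.1))) : ℝ × ℝ))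
      (Ioo (0:ℝ) T ×ˢ (univ : Set ℝ)) :=
    continuousOn_const.prodMk ((hampc.mono hSsub).add
      (continuous_snd.continuousOn.mul ((hbmpc.mono hSsub).sub (hampc.mono hSsub))))
  have happlyp : ContinuousOn (fun q : ℝ × ℝ => fderiv ℝ lp (q.1, c q.1 q.2)
      (1, lp (q.1, xm q.1) + q.2 * (lm (q.1, xp q.1) - lp (q.1, xm q.1))))
      (Ioo (0:ℝ) T ×ˢ (univ : Set ℝ)) := by
    have hcm : ContinuousOn (fun q : ℝ × ℝ => fderiv ℝ lp (q.1, c q.1 q.2))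
        (Ioo (0:ℝ) T ×ˢ (univ : Set ℝ)) := by
      simpa [Function.comp_def] using hfdp.comp (hmap2.mono hSsub) (fun q hq => ⟨hq.1, trivial⟩)
    exact hcm.clm_apply hvecc
  have happlym : ContinuousOn (fun q : ℝ × ℝ => fderiv ℝ lm (q.1, c q.1 q.2)
      (1, lp (q.1, xm q.1) + q.2 * (lm (q.1, xp q.1) - lp (q.1, xm q.1))))
      (Ioo (0:ℝ) T ×ˢ (univ : Set ℝ)) := by
    have hcm : ContinuousOn (fun q : ℝ × ℝ => fderiv ℝ lm (q.1, c q.1 q.2))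
        (Ioo (0:ℝ) T ×ˢ (univ : Set ℝ)) := by
      simpa [Function.comp_def] using hfdm.comp (hmap2.mono hSsub) (fun q hq => ⟨hq.1, trivial⟩)
    exact hcm.clm_apply hvecc
  have hGc : ContinuousOn (fun q : ℝ × ℝ => G q.1 q.2) (Ioo (0:ℝ) T ×ˢ (univ : Set ℝ)) := by
    simp only [hGdef]
    refine ContinuousOn.add ?_ ?_
    · exact ((hbmpc.mono hSsub).sub (hampc.mono hSsub)).mul (hwcomp.mono hSsub)
    · refine ((hxpc2.mono hSsub).sub (hxmc2.mono hSsub)).mul ?_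
      refine ContinuousOn.div (happlyp.sub happlym).neg
        (((hlpc2.mono hSsub).sub (hlmc2.mono hSsub)).pow 2) ?_
      intro q hq
      exact pow_ne_zero 2 (hne (q.1, c q.1 q.2) ⟨Ioo_subset_Ico_self hq.1, trivial⟩)
  -- pointwise continuity in τ
  have hFcont : ∀ t ∈ Ico (0:ℝ) T, Continuous (fun τ => F t τ) := by
    intro t ht
    have := hFc.comp_continuous (continuous_const.prodMk continuous_id)
      (fun τ => ⟨ht, trivial⟩)
    simpa [Function.comp_def] using this
  have hGcont : ∀ t ∈ Ioo (0:ℝ) T, Continuous (fun τ => G t τ) := by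
    intro t ht
    have := hGc.comp_continuous (continuous_const.prodMk continuous_id)
      (fun τ => ⟨ht, trivial⟩)
    simpa [Function.comp_def] using this
  -- the value of the integral of G t
  have hint1 : ∀ {t : ℝ}, t ∈ Ioo (0:ℝ) T → (∫ τ in (0:ℝ)..1, G t τ) = -1 := by
    intro t ht
    have htm : t ∈ Ico (0:ℝ) T := ⟨le_of_lt ht.1, ht.2⟩
    have heval := intervalIntegral.integral_eq_sub_of_hasDerivAt (a := (0:ℝ)) (b := 1)
      (f := fun σ => (lp (t, xm t) + σ * (lm (t, xp t) - lp (t, xm t)) - lm (t, c t σ)) *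
        (lp (t, c t σ) - lm (t, c t σ))⁻¹) (f' := G t)
      (fun τ _ => hPd τ ht) ((hGcont t ht).intervalIntegrable _ _)
    rw [heval]
    have hc1 : c t 1 = xp t := by simp [hcdef]
    have hc0 : c t 0 = xm t := by simp [hcdef]
    simp only [hc1, hc0]
    have h1 : lp (t, xp t) - lm (t, xp t) ≠ 0 := hne (t, xp t) ⟨htm, trivial⟩
    have h0 : lp (t, xm t) - lm (t, xm t) ≠ 0 := hne (t, xm t) ⟨htm, trivial⟩
    field_simp
    ring
  -- the function φ
  set φ : ℝ → ℝ := fun t => ∫ τ in (0:ℝ)..1, F t τ with hφdef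
  -- derivative of φ
  have hφd : ∀ t ∈ Ioo (0:ℝ) t₀, HasDerivAt φ (-1) t := by
    intro t ht
    have htT : t ∈ Ioo (0:ℝ) T := ⟨ht.1, ht.2.trans hTt₀⟩
    set ε : ℝ := min (t / 2) ((T - t) / 2) with hεdef
    have hεpos : 0 < ε := lt_min (by linarith [htT.1]) (by linarith [htT.2])
    have hball : Metric.closedBall t ε ⊆ Ioo (0:ℝ) T := by
      intro s hs
      rw [Metric.mem_closedBall, Real.dist_eq, abs_le] at hs
      have h1 : ε ≤ t / 2 := min_le_left _ _
      have h2 : ε ≤ (T - t) / 2 := min_le_right _ _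
      constructor <;> [linarith [hs.1]; linarith [hs.2] ]
    have hball' : Metric.ball t ε ⊆ Ioo (0:ℝ) T :=
      subset_trans Metric.ball_subset_closedBall hball
    have hK : IsCompact (Metric.closedBall t ε ×ˢ Icc (-1:ℝ) 2) :=
      (isCompact_closedBall _ _).prod isCompact_Icc
    obtain ⟨C, hC⟩ := hK.exists_bound_of_continuousOn
      (hGc.mono (prod_mono hball (subset_univ _)))
    have hIm : ∀ {τ : ℝ}, τ ∈ Ι (0:ℝ) 1 → τ ∈ Icc (-1:ℝ) 2 := by
      intro τ hτ
      rw [Set.uIoc_of_le (by norm_num : (0:ℝ) ≤ 1)] at hτ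
      exact ⟨by linarith [hτ.1], by linarith [hτ.2]⟩
    have hm1 : ∀ᶠ t' in 𝓝 t, MeasureTheory.AEStronglyMeasurable (F t')
        (volume.restrict (Ι (0:ℝ) 1)) := by
      filter_upwards [Filter.eventually_of_mem (Ico_mem_nhds htT.1 htT.2) (fun a ha => ha)]
        with t' ht' using (hFcont t' ht').aestronglyMeasurable
    have hm2 : IntervalIntegrable (F t) volume 0 1 :=
      (hFcont t ⟨le_of_lt htT.1, htT.2⟩).intervalIntegrable _ _
    have hm3 : MeasureTheory.AEStronglyMeasurable (G t) (volume.restrict (Ι (0:ℝ) 1)) :=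
      (hGcont t htT).aestronglyMeasurable
    have hm4 : ∀ᵐ τ ∂(volume : MeasureTheory.Measure ℝ), τ ∈ Ι (0:ℝ) 1 →
        ∀ t' ∈ Metric.ball t ε, ‖G t' τ‖ ≤ C := by
      refine MeasureTheory.ae_of_all _ fun τ hτ t' ht' => ?_
      exact hC (t', τ) ⟨Metric.ball_subset_closedBall ht', hIm hτ⟩
    have hm5 : IntervalIntegrable (fun _ : ℝ => C) volume 0 1 := intervalIntegrable_const
    have hm6 : ∀ᵐ τ ∂(volume : MeasureTheory.Measure ℝ), τ ∈ Ι (0:ℝ) 1 →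
        ∀ t' ∈ Metric.ball t ε, HasDerivAt (fun s => F s τ) (G t' τ) t' :=
      MeasureTheory.ae_of_all _ fun τ hτ t' ht' => hFt τ (hball' ht')
    have key := (intervalIntegral.hasDerivAt_integral_of_dominated_loc_of_deriv_le
      (Metric.ball_mem_nhds t hεpos) hm1 hm2 hm3 hm4 hm5 hm6).2
    rw [hint1 htT] at key
    rw [hφdef]
    exact key
  -- continuity of φ on [0, t₀]
  have hφcont : ContinuousOn φ (Icc 0 t₀) := by
    obtain ⟨C₂, hC₂⟩ := ((isCompact_Icc (a := (0:ℝ)) (b := t₀)).prod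
      (isCompact_Icc (a := (-1:ℝ)) (b := 2))).exists_bound_of_continuousOn
      (hFc.mono (prod_mono hsubIcc (subset_univ _)))
    have hIm : ∀ {τ : ℝ}, τ ∈ Ι (0:ℝ) 1 → τ ∈ Icc (-1:ℝ) 2 := by
      intro τ hτ
      rw [Set.uIoc_of_le (by norm_num : (0:ℝ) ≤ 1)] at hτ
      exact ⟨by linarith [hτ.1], by linarith [hτ.2]⟩
    intro t ht
    rw [hφdef]
    refine intervalIntegral.continuousWithinAt_of_dominated_interval
      (bound := fun _ => C₂) ?_ ?_ intervalIntegrable_const ?_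
    · filter_upwards [eventually_mem_nhdsWithin] with t' ht'
      exact (hFcont t' (hsubIcc ht')).aestronglyMeasurable
    · filter_upwards [eventually_mem_nhdsWithin] with t' ht'
      exact MeasureTheory.ae_of_all _ fun τ hτ => hC₂ (t', τ) ⟨ht', hIm hτ⟩
    · refine MeasureTheory.ae_of_all _ fun τ hτ => ?_
      have hh : ContinuousOn (fun x : ℝ => F x τ) (Icc 0 t₀) := by
        simpa [Function.comp_def] using hFc.comp
          ((continuous_id.prodMk continuous_const).continuousOn
            (s := Icc (0:ℝ) t₀)) (fun x hx => ⟨hsubIcc hx, trivial⟩)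
      exact hh t ht
  -- fundamental theorem of calculus
  have hFTC := intervalIntegral.integral_eq_sub_of_hasDeriv_right_of_le
    (f' := fun _ => (-1 : ℝ)) (le_of_lt ht₀pos) hφcont
    (fun s hs => (hφd s hs).hasDerivWithinAt) intervalIntegrable_const
  rw [intervalIntegral.integral_const] at hFTC
  have hφval : φ t₀ = φ 0 - t₀ := by
    rw [smul_eq_mul] at hFTC
    linarith [hFTC]
  -- φ 0 = t₀
  have hφ0 : φ 0 = t₀ := by
    rw [hφdef]
    have hrw : ∀ τ : ℝ, F 0 τ = (β₀ - α₀) * (fun ζ => 1 / (Lp ζ - Lm ζ)) ((β₀ - α₀) * τ + α₀) := by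
      intro τ
      simp only [hFdef, hcdef, hxm0, hxp0]
      rw [show α₀ + τ * (β₀ - α₀) = (β₀ - α₀) * τ + α₀ by ring]
      rw [(hinit ((β₀ - α₀) * τ + α₀)).1, (hinit ((β₀ - α₀) * τ + α₀)).2, one_div]
    have hba : β₀ - α₀ ≠ 0 := ne_of_gt (sub_pos.2 hαβ)
    simp only [hrw]
    rw [intervalIntegral.integral_const_mul,
      intervalIntegral.integral_comp_mul_add (fun ζ => 1 / (Lp ζ - Lm ζ)) hba α₀]
    rw [smul_eq_mul, ← mul_assoc, mul_inv_cancel₀ hba, one_mul]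
    rw [show (β₀ - α₀) * 0 + α₀ = α₀ by ring, show (β₀ - α₀) * 1 + α₀ = β₀ by ring]
    exact ht₀.symm
  have hφt₀ : φ t₀ = 0 := by rw [hφval, hφ0]; ring
  -- contradiction argument
  by_contra hcon
  push_neg at hcon
  have hxmlt : ∀ t ∈ Icc (0:ℝ) t₀, xm t < xp t := by
    intro t ht
    by_contra hle
    push_neg at hle
    have hdc : ContinuousOn (fun s => xp s - xm s) (Icc 0 t) :=
      (hxpc.sub hxmc).mono (fun s hs => hsubIcc ⟨hs.1, hs.2.trans ht.2⟩)
    have h0 : (0:ℝ) ∈ Icc (xp t - xm t) (xp 0 - xm 0) :=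
      ⟨by linarith, by rw [hxm0, hxp0]; linarith⟩
    obtain ⟨s, hs, hs0⟩ := intermediate_value_Icc' ht.1 hdc h0
    simp only at hs0
    have hs0' : xm s = xp s := by linarith [hs0]
    have hspos : 0 < s := by
      rcases eq_or_lt_of_le hs.1 with h | h
      · exfalso
        rw [← h] at hs0'
        rw [hxm0, hxp0] at hs0'
        linarith
      · exact h
    exact hcon s hspos (hs.2.trans ht.2) hs0'
  have hφt₀pos : 0 < φ t₀ := by
    rw [hφdef]
    refine intervalIntegral.intervalIntegral_pos_of_pos
      ((hFcont t₀ (hsubIcc ⟨le_of_lt ht₀pos, le_refl _⟩)).intervalIntegrable _ _) ?_ one_pos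
    intro τ
    have htm : t₀ ∈ Ico (0:ℝ) T := hsubIcc ⟨le_of_lt ht₀pos, le_refl _⟩
    have h1 : 0 < xp t₀ - xm t₀ := sub_pos.2 (hxmlt t₀ ⟨le_of_lt ht₀pos, le_refl _⟩)
    have h2 : 0 < (lp (t₀, c t₀ τ) - lm (t₀, c t₀ τ))⁻¹ :=
      inv_pos.2 (sub_pos.2 (hordl t₀ htm (c t₀ τ)))
    simp only [hFdef]
    exact mul_pos h1 h2
  linarith
end

section
/- Let Λ₋, Λ₊ : ℝ → ℝ be C¹ with Λ₋(x) < Λ₊(x) for all x. Define t(α,β) = ∫_α^β dζ/(Λ₊(ζ) − Λ₋(ζ)), x(α,β) = ½[α + β + ∫_α^β (Λ₊(ζ) + Λ₋(ζ))/(Λ₊(ζ) − Λ₋(ζ)) dζ] and Π(α,β) = (t(α,β), x(α,β)). Then Π is C¹ on ℝ² and its Jacobian determinant satisfies J(α,β) := t_α x_β − t_β x_α = (Λ₋(α) − Λ₊(β)) / ((Λ₊(α) − Λ₋(α))(Λ₊(β) − Λ₋(β))). In particular, (α,β) is a singular point of Π (i.e., J(α,β) = 0) if and only if Λ₋(α)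 = Λ₊(β). -/
open Set

/-- The time coordinate `t(α,β)` of the map `Π` (formula (2.8)). -/
noncomputable def tmap (Lm Lp : ℝ → ℝ) (α β : ℝ) : ℝ :=
  ∫ ζ in α..β, 1 / (Lp ζ - Lm ζ)

/-- The space coordinate `x(α,β)` of the map `Π` (formula (2.9)). -/
noncomputable def xmap (Lm Lp : ℝ → ℝ) (α β : ℝ) : ℝ :=
  (α + β + ∫ ζ in α..β, (Lp ζ + Lm ζ) / (Lp ζ - Lm ζ)) / 2

lemma primitive_contDiff {g : ℝ → ℝ} (hg : Continuous g) :
    ContDiff ℝ 1 (fun x => ∫ ζ in (0:ℝ)..x, g ζ) := by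
  rw [contDiff_one_iff_deriv]
  constructor
  · intro x
    exact ((hg.integral_hasStrictDerivAt 0 x).hasDerivAt).differentiableAt
  · have : deriv (fun x => ∫ ζ in (0:ℝ)..x, g ζ) = g := by
      funext x
      exact Continuous.deriv_integral g hg 0 x
    rw [this]; exact hg

lemma integral_split {g : ℝ → ℝ} (hg : Continuous g) (α β : ℝ) :
    (∫ ζ in α..β, g ζ) = (∫ ζ in (0:ℝ)..β, g ζ) - (∫ ζ in (0:ℝ)..α, g ζ) := by
  rw [eq_sub_iff_add_eq]
  rw [add_comm]
  exact intervalIntegral.integral_add_adjacent_intervals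
    (hg.intervalIntegrable _ _) (hg.intervalIntegrable _ _)

lemma jac_field (a b c d : ℝ) (h1 : a - b ≠ 0) (h2 : c - d ≠ 0) :
    -(1/(a-b)) * ((1+(c+d)/(c-d))/2) - 1/(c-d)*((1-(a+b)/(a-b))/2)
      = (b - c)/((a-b)*(c-d)) := by
  field_simp
  ring

/-- The map `Π(α,β) = (t(α,β), x(α,β))` is `C¹`, its Jacobian is
`J(α,β) = (Λ₋(α) − Λ₊(β)) / ((Λ₊(α) − Λ₋(α))(Λ₊(β) − Λ₋(β)))`, and `(α,β)` is a
singular point of `Π` (i.e. `J(α,β) = 0`) if and only if `Λ₋(α) = Λ₊(β)`. -/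
theorem jacobian_of_characteristic_map
    (Lm Lp : ℝ → ℝ) (hLm : ContDiff ℝ 1 Lm) (hLp : ContDiff ℝ 1 Lp)
    (hord : ∀ x, Lm x < Lp x) :
    ContDiff ℝ 1 (fun q : ℝ × ℝ => (tmap Lm Lp q.1 q.2, xmap Lm Lp q.1 q.2)) ∧
    ∀ α β : ℝ,
      (deriv (fun a => tmap Lm Lp a β) α * deriv (fun b => xmap Lm Lp α b) β
          - deriv (fun b => tmap Lm Lp α b) β * deriv (fun a => xmap Lm Lp a β) α
        = (Lm α - Lp β) / ((Lp α - Lm α) * (Lp β - Lm β))) ∧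
      ((deriv (fun a => tmap Lm Lp a β) α * deriv (fun b => xmap Lm Lp α b) β
          - deriv (fun b => tmap Lm Lp α b) β * deriv (fun a => xmap Lm Lp a β) α = 0)
        ↔ Lm α = Lp β) := by
  have hD : ∀ x, Lp x - Lm x ≠ 0 := fun x => sub_ne_zero.2 (hord x).ne'
  set g : ℝ → ℝ := fun ζ => 1 / (Lp ζ - Lm ζ) with hgdef
  set h : ℝ → ℝ := fun ζ => (Lp ζ + Lm ζ) / (Lp ζ - Lm ζ) with hhdef
  have hsub : Continuous (fun ζ => Lp ζ - Lm ζ) := hLp.continuous.sub hLm.continuous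
  have hgc : Continuous g := continuous_const.div hsub hD
  have hhc : Continuous h := (hLp.continuous.add hLm.continuous).div hsub hD
  -- derivatives
  have dt_b : ∀ α β : ℝ, deriv (fun b => tmap Lm Lp α b) β = g β := by
    intro α β
    exact Continuous.deriv_integral g hgc α β
  have dt_a : ∀ α β : ℝ, deriv (fun a => tmap Lm Lp a β) α = -g α := by
    intro α β
    exact (intervalIntegral.integral_hasStrictDerivAt_left
      (hgc.intervalIntegrable _ _) (hgc.stronglyMeasurableAtFilter _ _)
      hgc.continuousAt).hasDerivAt.deriv
  have dx_b : ∀ α β : ℝ, deriv (fun b => xmap Lm Lp α b) β = (1 + h β) / 2 := by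
    intro α β
    have h1 : HasDerivAt (fun b : ℝ => xmap Lm Lp α b) ((0 + 1 + h β) / 2) β := by
      unfold xmap
      exact (((hasDerivAt_const β α).add (hasDerivAt_id β)).add
        (hhc.integral_hasStrictDerivAt α β).hasDerivAt).div_const 2
    rw [h1.deriv]; ring
  have dx_a : ∀ α β : ℝ, deriv (fun a => xmap Lm Lp a β) α = (1 - h α) / 2 := by
    intro α β
    have h1 : HasDerivAt (fun a : ℝ => xmap Lm Lp a β) ((1 + 0 + -h α) / 2) α := by
      unfold xmap
      exact (((hasDerivAt_id α).add (hasDerivAt_const α β)).add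
        (intervalIntegral.integral_hasStrictDerivAt_left
          (hhc.intervalIntegrable _ _) (hhc.stronglyMeasurableAtFilter _ _)
          hhc.continuousAt).hasDerivAt).div_const 2
    rw [h1.deriv]; ring
  constructor
  · -- C¹
    have hF := primitive_contDiff hgc
    have hG := primitive_contDiff hhc
    have ht : ContDiff ℝ 1 (fun q : ℝ × ℝ => tmap Lm Lp q.1 q.2) := by
      have : (fun q : ℝ × ℝ => tmap Lm Lp q.1 q.2)
          = fun q : ℝ × ℝ => (∫ ζ in (0:ℝ)..q.2, g ζ) - (∫ ζ in (0:ℝ)..q.1, g ζ) := by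
        funext q; exact integral_split hgc q.1 q.2
      rw [this]
      exact (hF.comp contDiff_snd).sub (hF.comp contDiff_fst)
    have hx : ContDiff ℝ 1 (fun q : ℝ × ℝ => xmap Lm Lp q.1 q.2) := by
      have : (fun q : ℝ × ℝ => xmap Lm Lp q.1 q.2)
          = fun q : ℝ × ℝ =>
            (q.1 + q.2 + ((∫ ζ in (0:ℝ)..q.2, h ζ) - (∫ ζ in (0:ℝ)..q.1, h ζ))) / 2 := by
        funext q
        unfold xmap
        rw [integral_split hhc q.1 q.2]
      rw [this]
      exact (((contDiff_fst.add contDiff_snd).add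
        ((hG.comp contDiff_snd).sub (hG.comp contDiff_fst))).div_const 2)
    exact ht.prodMk hx
  · intro α β
    rw [dt_a, dt_b, dx_a, dx_b]
    have key : -g α * ((1 + h β) / 2) - g β * ((1 - h α) / 2)
        = (Lm α - Lp β) / ((Lp α - Lm α) * (Lp β - Lm β)) := by
      simp only [hgdef, hhdef]
      exact jac_field (Lp α) (Lm α) (Lp β) (Lm β) (hD α) (hD β)
    refine ⟨key, ?_⟩
    rw [key, div_eq_zero_iff]
    constructor
    · rintro (h0 | h0)
      · linarith [sub_eq_zero.1 h0]
      · exact absurd h0 (mul_ne_zero (hD α) (hD β))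
    · intro h0; left; rw [h0]; ring
end

section
/- Let Λ₋, Λ₊ : ℝ → ℝ be C² functions and α₀ < β₀ satisfy assumptions (H1)–(H5), and let Π(α,β) = (t(α,β), x(α,β)) be the map defined by t(α,β) = ∫_α^β dζ/(Λ₊(ζ) − Λ₋(ζ)) and x(α,β) = ½[α + β + ∫_α^β (Λ₊(ζ) + Λ₋(ζ))/(Λ₊(ζ) − Λ₋(ζ)) dζ]. Let β(α) := Λ₊⁻¹(Λ₋(α)) and Υ(α) := (α, β(α)). Then: (A) β is strictly increasing; (B) (d/dα)(Π∘Υ)(α₀) = (0,0) while (d²/dα²)(Π∘Υ)(α₀) ≠ (0,0) (so (α₀,β₀) is a cusp point of Π), and there exists ε > 0 such that for every α ∈ (α₀ − ε, α₀ + ε) with α ≠ α₀ one has (d/dα)(Π∘Υ)(α) ≠ (0,0) (so those singular points are fold points of Π). -/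
open Set

private lemma aux_t (m p A B C D : ℝ) (hAB : A - B ≠ 0) (hCD : C - D ≠ 0) (hp : p ≠ 0) :
    (m/(C-D) - p/(A-B))/p = 1/(C-D) * (m/p) - 1/(A-B) := by
  field_simp

private lemma aux_x (m p A B D : ℝ) (hAB : A - B ≠ 0) (hBD : B - D ≠ 0) (hp : p ≠ 0) :
    (m/(B-D) - p/(A-B)) * B / p
      = (1 + m/p + ((B+D)/(B-D) * (m/p) - (A+B)/(A-B)))/2 := by
  field_simp
  ring

/-- Lemma 2.7: (A) the singular curve `β = β(α)` is strictly increasing;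
(B) `(α₀, β₀)` is a cusp point of `Π`, while the nearby singular points are fold points. -/
theorem singular_points_fold_and_cusp
    (Lm Lp : ℝ → ℝ) (hLm : ContDiff ℝ 2 Lm) (hLp : ContDiff ℝ 2 Lp)
    (α₀ β₀ : ℝ) (hαβ : α₀ < β₀)
    -- (H1)
    (hord : ∀ x, Lm x < Lp x)
    -- (H2)
    (hLm' : ∀ x, deriv Lm x < 0) (hLp' : ∀ x, deriv Lp x < 0)
    -- (H3)
    (hLmα₀ : Lm α₀ = 0) (hLpβ₀ : Lp β₀ = 0)
    (bf : ℝ → ℝ) (hbf : ∀ a : ℝ, Lp (bf a) = Lm a) (hbfα₀ : bf α₀ = β₀)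
    (f : ℝ → ℝ)
    (hf : ∀ a, f a = deriv Lm a / (Lp (bf a) - Lm (bf a))
        - deriv Lp (bf a) / (Lp a - Lm a))
    -- (H4)
    (hf0 : f α₀ = 0)
    -- (H5)
    (hfdiff : DifferentiableAt ℝ f α₀) (hf' : deriv f α₀ < 0) :
    StrictMono bf ∧
    deriv (fun a => (tmap Lm Lp a (bf a), xmap Lm Lp a (bf a))) α₀ = 0 ∧
    deriv (deriv (fun a => (tmap Lm Lp a (bf a), xmap Lm Lp a (bf a)))) α₀ ≠ 0 ∧
    ∃ ε > 0, ∀ a ∈ Ioo (α₀ - ε) (α₀ + ε), a ≠ α₀ →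
      deriv (fun a => (tmap Lm Lp a (bf a), xmap Lm Lp a (bf a))) a ≠ 0 := by
  -- basic facts
  have h12 : (1 : WithTop ℕ∞) ≤ 2 := by norm_num
  have hLmdiff : Differentiable ℝ Lm := hLm.differentiable (by norm_num)
  have hLpdiff : Differentiable ℝ Lp := hLp.differentiable (by norm_num)
  have hLmc : Continuous Lm := hLmdiff.continuous
  have hLpc : Continuous Lp := hLpdiff.continuous
  have hLmanti : StrictAnti Lm := strictAnti_of_deriv_neg hLm'
  have hLpanti : StrictAnti Lp := strictAnti_of_deriv_neg hLp'
  have hLpinj : Function.Injective Lp := hLpanti.injective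
  have hsub : ∀ x, Lp x - Lm x ≠ 0 := fun x => sub_ne_zero.mpr (hord x).ne'
  have hpne : ∀ x, deriv Lp x ≠ 0 := fun x => (hLp' x).ne
  have hmono : StrictMono bf := by
    intro a b hab
    have h1 : Lp (bf b) < Lp (bf a) := by rw [hbf a, hbf b]; exact hLmanti hab
    exact hLpanti.lt_iff_gt.mp h1
  -- the derivative of `bf`
  have hbfD : ∀ a, HasDerivAt bf (deriv Lm a / deriv Lp (bf a)) a := by
    intro a
    have hs : HasStrictDerivAt Lp (deriv Lp (bf a)) (bf a) :=
      (hLp.contDiffAt).hasStrictDerivAt (by norm_num)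
    have hne : deriv Lp (bf a) ≠ 0 := hpne _
    have hri : ∀ᶠ y in nhds (Lp (bf a)),
        Lp (hs.localInverse Lp (deriv Lp (bf a)) (bf a) hne y) = y :=
      (hs.hasStrictFDerivAt_equiv hne).eventually_right_inverse
    rw [hbf a] at hri
    have hev2 : ∀ᶠ x in nhds a,
        Lp (hs.localInverse Lp (deriv Lp (bf a)) (bf a) hne (Lm x)) = Lm x :=
      (hLmc.continuousAt (x := a)).eventually hri
    have heq : (fun x => hs.localInverse Lp (deriv Lp (bf a)) (bf a) hne (Lm x)) =ᶠ[nhds a] bf := by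
      refine hev2.mono fun x hx => ?_
      apply hLpinj
      rw [hbf x, hx]
    have hφd : HasDerivAt (hs.localInverse Lp (deriv Lp (bf a)) (bf a) hne)
        (deriv Lp (bf a))⁻¹ (Lm a) := by
      have := hs.to_localInverse (hf' := hne)
      rw [hbf a] at this
      exact this.hasDerivAt
    have hcomp : HasDerivAt (fun x => hs.localInverse Lp (deriv Lp (bf a)) (bf a) hne (Lm x))
        ((deriv Lp (bf a))⁻¹ * deriv Lm a) a :=
      HasDerivAt.comp a hφd (hLmdiff a).hasDerivAt
    have := hcomp.congr_of_eventuallyEq heq.symm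
    rwa [div_eq_inv_mul]
  -- integrands
  set G : ℝ → ℝ := fun ζ => 1 / (Lp ζ - Lm ζ) with hG
  set K : ℝ → ℝ := fun ζ => (Lp ζ + Lm ζ) / (Lp ζ - Lm ζ) with hK
  have hGc : Continuous G := continuous_const.div (hLpc.sub hLmc) hsub
  have hKc : Continuous K := (hLpc.add hLmc).div (hLpc.sub hLmc) hsub
  -- antiderivatives
  set F : ℝ → ℝ := fun x => ∫ ζ in α₀..x, G ζ with hF
  set H : ℝ → ℝ := fun x => ∫ ζ in α₀..x, K ζ with hH
  have hFD : ∀ x, HasDerivAt F (G x) x := fun x =>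
    intervalIntegral.integral_hasDerivAt_right (hGc.intervalIntegrable _ _)
      (hGc.stronglyMeasurableAtFilter _ _) hGc.continuousAt
  have hHD : ∀ x, HasDerivAt H (K x) x := fun x =>
    intervalIntegral.integral_hasDerivAt_right (hKc.intervalIntegrable _ _)
      (hKc.stronglyMeasurableAtFilter _ _) hKc.continuousAt
  have htm : ∀ a, tmap Lm Lp a (bf a) = F (bf a) - F a := by
    intro a
    rw [tmap, hF]
    exact (intervalIntegral.integral_interval_sub_left (hGc.intervalIntegrable _ _)
      (hGc.intervalIntegrable _ _)).symm
  have hxm : ∀ a, xmap Lm Lp a (bf a) = (a + bf a + (H (bf a) - H a)) / 2 := by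
    intro a
    rw [xmap, hH]
    rw [intervalIntegral.integral_interval_sub_left (hKc.intervalIntegrable _ _)
      (hKc.intervalIntegrable _ _)]
  -- the derivative of the composed map
  set g : ℝ → ℝ × ℝ := fun a =>
    (f a / deriv Lp (bf a), f a * Lm a / deriv Lp (bf a)) with hg
  have hTD : ∀ a, HasDerivAt (fun a => tmap Lm Lp a (bf a)) (f a / deriv Lp (bf a)) a := by
    intro a
    have h1 : HasDerivAt (fun a => F (bf a) - F a)
        (G (bf a) * (deriv Lm a / deriv Lp (bf a)) - G a) a :=
      (HasDerivAt.comp a (hFD (bf a)) (hbfD a)).sub (hFD a)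
    have heq : (fun a => tmap Lm Lp a (bf a)) = fun a => F (bf a) - F a := funext htm
    rw [heq]
    convert h1 using 1
    rw [hf a]
    simp only [hG]
    exact aux_t _ _ _ _ _ _ (hsub a) (hsub (bf a)) (hpne (bf a))
  have hXD : ∀ a, HasDerivAt (fun a => xmap Lm Lp a (bf a))
      (f a * Lm a / deriv Lp (bf a)) a := by
    intro a
    have h1 : HasDerivAt (fun a => (a + bf a + (H (bf a) - H a)) / 2)
        ((1 + deriv Lm a / deriv Lp (bf a) +
          (K (bf a) * (deriv Lm a / deriv Lp (bf a)) - K a)) / 2) a := by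
      exact (((hasDerivAt_id a).add (hbfD a)).add
        ((HasDerivAt.comp a (hHD (bf a)) (hbfD a)).sub (hHD a))).div_const 2
    have heq : (fun a => xmap Lm Lp a (bf a)) = fun a => (a + bf a + (H (bf a) - H a)) / 2 :=
      funext hxm
    rw [heq]
    convert h1 using 1
    rw [hf a]
    simp only [hK]
    have hba : Lp (bf a) = Lm a := hbf a
    rw [hba]
    have hsub' : Lm a - Lm (bf a) ≠ 0 := by rw [← hba]; exact hsub (bf a)
    exact aux_x _ _ _ _ _ (hsub a) hsub' (hpne (bf a))
  have hPD : ∀ a, HasDerivAt (fun a => (tmap Lm Lp a (bf a), xmap Lm Lp a (bf a))) (g a) a :=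
    fun a => (hTD a).prodMk (hXD a)
  have hderiv : deriv (fun a => (tmap Lm Lp a (bf a), xmap Lm Lp a (bf a))) = g :=
    funext fun a => (hPD a).deriv
  refine ⟨hmono, ?_, ?_, ?_⟩
  · rw [hderiv, hg]
    simp [hf0, Prod.ext_iff]
  · rw [hderiv]
    -- compute the derivative of g at α₀
    have hh : HasDerivAt (fun a => deriv Lp (bf a))
        (deriv (deriv Lp) (bf α₀) * (deriv Lm α₀ / deriv Lp (bf α₀))) α₀ := by
      have hdLp : Differentiable ℝ (deriv Lp) := by
        have : ContDiff ℝ (1 + 1) Lp := by norm_num at hLp ⊢; exact hLp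
        exact (contDiff_succ_iff_deriv.mp this).2.2.differentiable (by norm_num)
      exact HasDerivAt.comp α₀ (hdLp (bf α₀)).hasDerivAt (hbfD α₀)
    have hc1 : HasDerivAt (fun a => f a / deriv Lp (bf a))
        ((deriv f α₀ * deriv Lp (bf α₀) - f α₀ *
          (deriv (deriv Lp) (bf α₀) * (deriv Lm α₀ / deriv Lp (bf α₀)))) /
          (deriv Lp (bf α₀))^2) α₀ :=
      hfdiff.hasDerivAt.div hh (hpne _)
    have hc2 : HasDerivAt (fun a => f a * Lm a / deriv Lp (bf a))
        (((deriv f α₀ * Lm α₀ + f α₀ * deriv Lm α₀) * deriv Lp (bf α₀) - f α₀ * Lm α₀ *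
          (deriv (deriv Lp) (bf α₀) * (deriv Lm α₀ / deriv Lp (bf α₀)))) /
          (deriv Lp (bf α₀))^2) α₀ :=
      (hfdiff.hasDerivAt.mul (hLmdiff α₀).hasDerivAt).div hh (hpne _)
    have hgd : deriv g α₀ = (_, _) := ((hc1.prodMk hc2).deriv)
    rw [hgd]
    intro hcon
    rw [Prod.ext_iff] at hcon
    have h1 := hcon.1
    simp only [hf0, zero_mul, mul_zero, sub_zero, Prod.fst_zero] at h1
    have : deriv f α₀ * deriv Lp (bf α₀) ≠ 0 := mul_ne_zero hf'.ne (hpne _)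
    rw [div_eq_zero_iff] at h1
    rcases h1 with h1 | h1
    · exact this h1
    · exact pow_ne_zero 2 (hpne _) h1
  · -- fold points nearby
    have hev : ∀ᶠ z in nhdsWithin α₀ {α₀}ᶜ, f z ≠ f α₀ :=
      hfdiff.hasDerivAt.eventually_ne hf'.ne
    rw [eventually_nhdsWithin_iff] at hev
    rw [Metric.eventually_nhds_iff] at hev
    obtain ⟨ε, hε, hball⟩ := hev
    refine ⟨ε, hε, fun a ha hne => ?_⟩
    have hd : dist a α₀ < ε := by
      rw [Real.dist_eq, abs_lt]
      constructor <;> [linarith [ha.1]; linarith [ha.2]]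
    have hfa : f a ≠ 0 := by
      have := hball hd (by simpa using hne)
      rwa [hf0] at this
    rw [hderiv, hg]
    intro hcon
    rw [Prod.ext_iff] at hcon
    have h1 := hcon.1
    simp only [Prod.fst_zero] at h1
    exact (div_ne_zero hfa (hpne _)) h1
end

section
/- Let Λ₋, Λ₊ : ℝ → ℝ be C² functions and α₀ < β₀ satisfy assumptions (H1)–(H5), let β(α) := Λ₊⁻¹(Λ₋(α)), and define T(α) := ∫_α^{β(α)} dζ/(Λ₊(ζ) − Λ₋(ζ)) and t₀ := T(α₀) = ∫_{α₀}^{β₀} dζ/(Λ₊(ζ) − Λ₋(ζ)). Then there exists ε > 0 such that α₀ is the unique minimum point of T on (α₀ − ε, α₀ + ε): for every α ∈ (α₀ − ε, α₀ + ε) with α ≠ α₀ one has T(α) > t₀. -/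
open Set Filter Topology intervalIntegral

/-- Derivative of an "inverse-like" function: if `φ ∘ g = ψ`, `φ` has nonzero derivative at `g a`,
`ψ` has a derivative at `a`, `g` is continuous at `a` and injective-at-`a`, then `g` is
differentiable at `a` with derivative `ψ'(a)/φ'(g a)`. -/
lemma hasDerivAt_of_comp_eq {φ g ψ : ℝ → ℝ} {a p m : ℝ}
    (hφ : HasDerivAt φ p (g a)) (hp : p ≠ 0) (hg : ContinuousAt g a)
    (hginj : ∀ y, y ≠ a → g y ≠ g a)
    (hψ : HasDerivAt ψ m a) (hcomp : ∀ y, φ (g y) = ψ y) :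
    HasDerivAt g (m / p) a := by
  rw [hasDerivAt_iff_tendsto_slope] at hφ hψ ⊢
  have hgt : Tendsto g (𝓝[≠] a) (𝓝[≠] (g a)) := by
    rw [tendsto_nhdsWithin_iff]
    refine ⟨hg.tendsto.mono_left nhdsWithin_le_nhds, ?_⟩
    filter_upwards [self_mem_nhdsWithin] with y hy
    exact hginj y hy
  have h1 : Tendsto (fun y => slope φ (g a) (g y)) (𝓝[≠] a) (𝓝 p) := hφ.comp hgt
  have h2 : Tendsto (fun y => slope ψ a y / slope φ (g a) (g y)) (𝓝[≠] a) (𝓝 (m / p)) :=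
    hψ.div h1 hp
  refine h2.congr' ?_
  filter_upwards [self_mem_nhdsWithin, h1.eventually_ne hp] with y hy hs
  have hy' : y ≠ a := hy
  have hgy : g y ≠ g a := hginj y hy'
  have hynz : y - a ≠ 0 := sub_ne_zero.2 hy'
  have hgynz : g y - g a ≠ 0 := sub_ne_zero.2 hgy
  simp only [slope_def_field] at hs ⊢
  have hφnz : φ (g y) - φ (g a) ≠ 0 := by
    intro h0
    exact hs (by rw [h0, zero_div])
  rw [← hcomp y, ← hcomp a]
  field_simp

/-- Lemma 2.8: under (H1)–(H5), `α₀` is the unique minimum point of the intersection-time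
function `T(α) = ∫_α^{β(α)} dζ/(Λ₊(ζ) − Λ₋(ζ))` on a small interval around `α₀`. -/
theorem alpha₀_unique_minimum_of_intersection_time
    (Lm Lp : ℝ → ℝ) (hLm : ContDiff ℝ 2 Lm) (hLp : ContDiff ℝ 2 Lp)
    (α₀ β₀ : ℝ) (hαβ : α₀ < β₀)
    -- (H1)
    (hord : ∀ x, Lm x < Lp x)
    -- (H2)
    (hLm' : ∀ x, deriv Lm x < 0) (hLp' : ∀ x, deriv Lp x < 0)
    -- (H3)
    (hLmα₀ : Lm α₀ = 0) (hLpβ₀ : Lp β₀ = 0)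
    (bf : ℝ → ℝ) (hbf : ∀ a : ℝ, Lp (bf a) = Lm a) (hbfα₀ : bf α₀ = β₀)
    (f : ℝ → ℝ)
    (hf : ∀ a, f a = deriv Lm a / (Lp (bf a) - Lm (bf a))
        - deriv Lp (bf a) / (Lp a - Lm a))
    -- (H4)
    (hf0 : f α₀ = 0)
    -- (H5)
    (hfdiff : DifferentiableAt ℝ f α₀) (hf' : deriv f α₀ < 0)
    (t₀ : ℝ) (ht₀ : t₀ = ∫ ζ in α₀..β₀, 1 / (Lp ζ - Lm ζ)) :
    ∃ ε > 0, ∀ a ∈ Ioo (α₀ - ε) (α₀ + ε), a ≠ α₀ →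
      (∫ ζ in a..(bf a), 1 / (Lp ζ - Lm ζ)) > t₀ := by
  have hLmc : Continuous Lm := hLm.continuous
  have hLpc : Continuous Lp := hLp.continuous
  have hLpanti : StrictAnti Lp := strictAnti_of_deriv_neg hLp'
  have hLmanti : StrictAnti Lm := strictAnti_of_deriv_neg hLm'
  have hLmd : ∀ x, HasDerivAt Lm (deriv Lm x) x := fun x =>
    (differentiableAt_of_deriv_ne_zero (hLm' x).ne).hasDerivAt
  have hLpd : ∀ x, HasDerivAt Lp (deriv Lp x) x := fun x =>
    (differentiableAt_of_deriv_ne_zero (hLp' x).ne).hasDerivAt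
  have hDpos : ∀ x, 0 < Lp x - Lm x := fun x => sub_pos.2 (hord x)
  have hcontI : Continuous (fun x => 1 / (Lp x - Lm x)) :=
    continuous_const.div (hLpc.sub hLmc) (fun x => (hDpos x).ne')
  have hInt : ∀ a b : ℝ, IntervalIntegrable (fun x => 1 / (Lp x - Lm x))
      MeasureTheory.volume a b := fun a b => hcontI.intervalIntegrable a b
  -- bf is strictly monotone
  have hbfmono : StrictMono bf := by
    intro x y hxy
    by_contra h
    push_neg at h
    have h1 : Lp (bf x) ≤ Lp (bf y) := hLpanti.antitone h
    rw [hbf, hbf] at h1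
    exact absurd h1 (not_le.2 (hLmanti hxy))
  -- bf is continuous
  have hbfcont : ∀ a, ContinuousAt bf a := by
    intro a
    refine StrictMonoOn.continuousAt_of_exists_between
      (hbfmono.strictMonoOn univ) univ_mem ?_ ?_
    · intro b hb
      rcases le_or_gt b (bf (a - 1)) with h | h
      · exact ⟨a - 1, trivial, h, hbfmono (by linarith)⟩
      · have h1 : Lm a < Lp b := by rw [← hbf a]; exact hLpanti hb
        have h2 : Lp b < Lm (a - 1) := by rw [← hbf (a - 1)]; exact hLpanti h
        obtain ⟨c, _, hceq⟩ := intermediate_value_Icc' (by linarith : a - 1 ≤ a)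
          hLmc.continuousOn ⟨h1.le, h2.le⟩
        have hc : bf c = b := hLpanti.injective (by rw [hbf, hceq])
        exact ⟨c, trivial, by rw [hc]; exact ⟨le_refl b, hb⟩⟩
    · intro b hb
      rcases le_or_gt (bf (a + 1)) b with h | h
      · exact ⟨a + 1, trivial, hbfmono (by linarith), h⟩
      · have h1 : Lm (a + 1) < Lp b := by rw [← hbf (a + 1)]; exact hLpanti h
        have h2 : Lp b < Lm a := by rw [← hbf a]; exact hLpanti hb
        obtain ⟨c, _, hceq⟩ := intermediate_value_Icc' (by linarith : a ≤ a + 1)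
          hLmc.continuousOn ⟨h1.le, h2.le⟩
        have hc : bf c = b := hLpanti.injective (by rw [hbf, hceq])
        exact ⟨c, trivial, by rw [hc]; exact ⟨hb, le_refl b⟩⟩
  -- bf is differentiable
  have hbfd : ∀ a, HasDerivAt bf (deriv Lm a / deriv Lp (bf a)) a := by
    intro a
    exact hasDerivAt_of_comp_eq (hLpd (bf a)) (hLp' (bf a)).ne (hbfcont a)
      (fun y hy => fun h => hy (hbfmono.injective h)) (hLmd a) hbf
  -- the antiderivative F
  set F : ℝ → ℝ := fun x => ∫ ζ in α₀..x, 1 / (Lp ζ - Lm ζ) with hF_def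
  have hFd : ∀ x, HasDerivAt F (1 / (Lp x - Lm x)) x := fun x =>
    integral_hasDerivAt_right (hInt α₀ x)
      hcontI.aestronglyMeasurable.stronglyMeasurableAtFilter hcontI.continuousAt
  set T : ℝ → ℝ := fun a => F (bf a) - F a with hT_def
  have hTint : ∀ a, (∫ ζ in a..(bf a), 1 / (Lp ζ - Lm ζ)) = T a := by
    intro a
    rw [hT_def]
    exact (integral_interval_sub_left (hInt α₀ (bf a)) (hInt α₀ a)).symm
  -- derivative of T
  have hTd : ∀ a, HasDerivAt T (f a / deriv Lp (bf a)) a := by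
    intro a
    have h1 := ((hFd (bf a)).comp a (hbfd a)).sub (hFd a)
    refine h1.congr_deriv (Eq.symm ?_)
    rw [hf a]
    have d1 : Lp (bf a) - Lm (bf a) ≠ 0 := (hDpos (bf a)).ne'
    have d2 : Lp a - Lm a ≠ 0 := (hDpos a).ne'
    have d3 : deriv Lp (bf a) ≠ 0 := (hLp' (bf a)).ne
    field_simp
  -- sign of f near α₀
  have hslope : Tendsto (slope f α₀) (𝓝[≠] α₀) (𝓝 (deriv f α₀)) :=
    hasDerivAt_iff_tendsto_slope.1 hfdiff.hasDerivAt
  have hev : ∀ᶠ y in 𝓝[≠] α₀, slope f α₀ y < 0 := hslope.eventually_lt_const hf'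
  rw [eventually_nhdsWithin_iff] at hev
  obtain ⟨s, hs, hsub⟩ := eventually_iff_exists_mem.1 hev
  obtain ⟨ε, hε, hball⟩ := Metric.mem_nhds_iff.1 hs
  refine ⟨ε, hε, ?_⟩
  intro a ha hne
  have hfsign : ∀ y, y ∈ Ioo (α₀ - ε) (α₀ + ε) → y ≠ α₀ → f y / (y - α₀) < 0 := by
    intro y hy hyne
    have hmem : y ∈ Metric.ball α₀ ε := by
      rw [Metric.mem_ball, Real.dist_eq, abs_lt]
      constructor <;> [linarith [hy.1]; linarith [hy.2]]
    have := hsub y (hball hmem) hyne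
    rwa [slope_def_field, hf0, sub_zero] at this
  -- value at α₀
  have hTα₀ : T α₀ = t₀ := by
    rw [hT_def]
    simp only [hbfα₀, hF_def]
    rw [intervalIntegral.integral_same, sub_zero, ht₀]
  rw [hTint a]
  have hTcont : ∀ x, ContinuousAt T x := fun x => (hTd x).differentiableAt.continuousAt
  rcases hne.lt_or_gt with hlt | hlt
  · -- a < α₀ : T strictly decreasing on [a, α₀]
    have hanti : StrictAntiOn T (Icc a α₀) := by
      refine strictAntiOn_of_deriv_neg (convex_Icc a α₀)
        (fun x _ => (hTcont x).continuousWithinAt) ?_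
      intro x hx
      rw [interior_Icc] at hx
      have hx1 : x ∈ Ioo (α₀ - ε) (α₀ + ε) := ⟨lt_trans ha.1 hx.1, by linarith [hx.2]⟩
      have hfx : 0 < f x := by
        have := hfsign x hx1 hx.2.ne
        rcases div_neg_iff.1 this with ⟨h1, h2⟩ | ⟨h1, h2⟩
        · exact h1
        · linarith [hx.2]
      rw [(hTd x).deriv]
      exact div_neg_of_pos_of_neg hfx (hLp' (bf x))
    have := hanti (left_mem_Icc.2 hlt.le) (right_mem_Icc.2 hlt.le) hlt
    rw [hTα₀] at this
    exact this
  · -- α₀ < a : T strictly increasing on [α₀, a]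
    have hmono : StrictMonoOn T (Icc α₀ a) := by
      refine strictMonoOn_of_deriv_pos (convex_Icc α₀ a)
        (fun x _ => (hTcont x).continuousWithinAt) ?_
      intro x hx
      rw [interior_Icc] at hx
      have hx1 : x ∈ Ioo (α₀ - ε) (α₀ + ε) := ⟨by linarith [hx.1], lt_trans hx.2 ha.2⟩
      have hfx : f x < 0 := by
        have := hfsign x hx1 hx.1.ne'
        rcases div_neg_iff.1 this with ⟨h1, h2⟩ | ⟨h1, h2⟩
        · linarith [hx.1]
        · exact h1
      rw [(hTd x).deriv]
      exact div_pos_of_neg_of_neg hfx (hLp' (bf x))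
    have := hmono (left_mem_Icc.2 hlt.le) (right_mem_Icc.2 hlt.le) hlt
    rw [hTα₀] at this
    exact this
end

section
/- Let Λ₋, Λ₊ : ℝ → ℝ be C² functions and α₀ < β₀ satisfy assumptions (H1)–(H5), let β(α) := Λ₊⁻¹(Λ₋(α)), and define the curve γ(α) := (t(α,β(α)), x(α,β(α))) where t(α,β) = ∫_α^β dζ/(Λ₊(ζ) − Λ₋(ζ)) and x(α,β) = ½[α + β + ∫_α^β (Λ₊(ζ) + Λ₋(ζ))/(Λ₊(ζ) − Λ₋(ζ)) dζ]. Then there exists ε > 0 such that the images Γ_l := γ((α₀ − ε, α₀)) and Γ_r := γ((α₀, α₀ + ε)) together with the point (t₀,x₀) = γ(α₀) form the graph of a function t = T(x) of the second coordinate; moreover T is strictly increasing and concave on the x-projection of Γ_l, and strictly decreasing and concave on the x-projection of Γ_r. -/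
open Set Filter Topology

private lemma aux_t_s12 (G g dm dp : ℝ) (hg : g ≠ 0) (hG : G ≠ 0) (hdp : dp ≠ 0) :
    (dm / G - dp / g) / dp = 1 / G * (dp⁻¹ * dm) - 1 / g := by
  field_simp

private lemma aux_x_s12 (m Mb p dm dp : ℝ) (hg : p - m ≠ 0) (hG : m - Mb ≠ 0) (hdp : dp ≠ 0) :
    m * ((dm / (m - Mb) - dp / (p - m)) / dp) =
      (1 + dp⁻¹ * dm + ((m + Mb) / (m - Mb) * (dp⁻¹ * dm) - (p + m) / (p - m))) / 2 := by
  field_simp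
  ring

/-- Lemma 2.9: `Γ_l` and `Γ_r` (the images under `Π` of the singular curve on either side
of `α₀`), together with the cusp `(t₀,x₀)`, form the graph of a function `t = T(x)`,
with `T` strictly increasing and concave on the `x`-projection of `Γ_l` and strictly
decreasing and concave on the `x`-projection of `Γ_r`. -/
theorem envelope_is_concave_graph
    (Lm Lp : ℝ → ℝ) (hLm : ContDiff ℝ 2 Lm) (hLp : ContDiff ℝ 2 Lp)
    (α₀ β₀ : ℝ) (hαβ : α₀ < β₀)
    -- (H1)
    (hord : ∀ x, Lm x < Lp x)
    -- (H2)
    (hLm' : ∀ x, deriv Lm x < 0) (hLp' : ∀ x, deriv Lp x < 0)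
    -- (H3)
    (hLmα₀ : Lm α₀ = 0) (hLpβ₀ : Lp β₀ = 0)
    (bf : ℝ → ℝ) (hbf : ∀ a : ℝ, Lp (bf a) = Lm a) (hbfα₀ : bf α₀ = β₀)
    (f : ℝ → ℝ)
    (hf : ∀ a, f a = deriv Lm a / (Lp (bf a) - Lm (bf a))
        - deriv Lp (bf a) / (Lp a - Lm a))
    -- (H4)
    (hf0 : f α₀ = 0)
    -- (H5)
    (hfdiff : DifferentiableAt ℝ f α₀) (hf' : deriv f α₀ < 0) :
    ∃ ε > 0, ∃ Tfun : ℝ → ℝ,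
      -- the curve α ↦ (t(α,β(α)), x(α,β(α))) is the graph of the function t = Tfun x
      (∀ a ∈ Ioo (α₀ - ε) (α₀ + ε),
        Tfun (xmap Lm Lp a (bf a)) = tmap Lm Lp a (bf a)) ∧
      -- increasing and concave over the x-projection of Γ_l
      StrictMonoOn Tfun ((fun a => xmap Lm Lp a (bf a)) '' Ioo (α₀ - ε) α₀) ∧
      ConcaveOn ℝ ((fun a => xmap Lm Lp a (bf a)) '' Ioo (α₀ - ε) α₀) Tfun ∧
      -- decreasing and concave over the x-projection of Γ_r
      StrictAntiOn Tfun ((fun a => xmap Lm Lp a (bf a)) '' Ioo α₀ (α₀ + ε)) ∧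
      ConcaveOn ℝ ((fun a => xmap Lm Lp a (bf a)) '' Ioo α₀ (α₀ + ε)) Tfun := by
  have hLmd : Differentiable ℝ Lm := hLm.differentiable two_ne_zero
  have hLpd : Differentiable ℝ Lp := hLp.differentiable two_ne_zero
  have hLmc : Continuous Lm := hLmd.continuous
  have hLpc : Continuous Lp := hLpd.continuous
  have hgpos : ∀ ζ, (0:ℝ) < Lp ζ - Lm ζ := fun ζ => sub_pos.mpr (hord ζ)
  have hgne : ∀ ζ, Lp ζ - Lm ζ ≠ 0 := fun ζ => (hgpos ζ).ne'
  have hLmanti : StrictAnti Lm := strictAnti_of_deriv_neg hLm'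
  have hLpanti : StrictAnti Lp := strictAnti_of_deriv_neg hLp'
  have hLp'ne : ∀ x, deriv Lp x ≠ 0 := fun x => (hLp' x).ne
  -- continuity of bf
  have hbfcont : Continuous bf := by
    rw [continuous_iff_continuousAt]
    intro a
    rw [ContinuousAt, tendsto_order]
    constructor
    · intro u hu
      have h2 : Lm a < Lp u := by rw [← hbf a]; exact hLpanti hu
      have h3 : ∀ᶠ x in 𝓝 a, Lm x ∈ Iio (Lp u) :=
        hLmc.continuousAt.eventually_mem (Iio_mem_nhds h2)
      filter_upwards [h3] with x hx
      have : Lp (bf x) < Lp u := by rw [hbf x]; exact hx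
      exact hLpanti.lt_iff_gt.mp this
    · intro v hv
      have h2 : Lp v < Lm a := by rw [← hbf a]; exact hLpanti hv
      have h3 : ∀ᶠ x in 𝓝 a, Lm x ∈ Ioi (Lp v) :=
        hLmc.continuousAt.eventually_mem (Ioi_mem_nhds h2)
      filter_upwards [h3] with x hx
      have : Lp v < Lp (bf x) := by rw [hbf x]; exact hx
      exact hLpanti.lt_iff_gt.mp this
  -- derivative of bf
  have hbf' : ∀ a, HasDerivAt bf ((deriv Lp (bf a))⁻¹ * deriv Lm a) a := by
    intro a
    have hs : HasStrictDerivAt Lp (deriv Lp (bf a)) (bf a) :=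
      (hLp.contDiffAt).hasStrictDerivAt two_ne_zero
    have hev : ∀ᶠ x in 𝓝 (bf a),
        hs.localInverse Lp _ _ (hLp'ne (bf a)) (Lp x) = x :=
      (hs.hasStrictFDerivAt_equiv (hLp'ne (bf a))).eventually_left_inverse
    have hψ : HasStrictDerivAt (hs.localInverse Lp _ _ (hLp'ne (bf a)))
        (deriv Lp (bf a))⁻¹ (Lp (bf a)) := hs.to_localInverse (hLp'ne (bf a))
    rw [hbf a] at hψ
    have hcomp : HasDerivAt (fun x => hs.localInverse Lp _ _ (hLp'ne (bf a)) (Lm x))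
        ((deriv Lp (bf a))⁻¹ * deriv Lm a) a :=
      hψ.hasDerivAt.comp a (hLmd a).hasDerivAt
    refine hcomp.congr_of_eventuallyEq ?_
    have h1 := hbfcont.continuousAt (x := a) |>.eventually hev
    filter_upwards [h1] with x hx
    rw [hbf x] at hx
    exact hx.symm
  -- FTC setup
  have hc1 : Continuous (fun ζ => 1 / (Lp ζ - Lm ζ)) :=
    continuous_const.div (hLpc.sub hLmc) hgne
  have hc2 : Continuous (fun ζ => (Lp ζ + Lm ζ) / (Lp ζ - Lm ζ)) :=
    (hLpc.add hLmc).div (hLpc.sub hLmc) hgne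
  set F1 : ℝ → ℝ := fun y => ∫ ζ in α₀..y, 1 / (Lp ζ - Lm ζ) with hF1def
  set F2 : ℝ → ℝ := fun y => ∫ ζ in α₀..y, (Lp ζ + Lm ζ) / (Lp ζ - Lm ζ) with hF2def
  have hF1' : ∀ y, HasDerivAt F1 (1 / (Lp y - Lm y)) y := fun y =>
    intervalIntegral.integral_hasDerivAt_right (hc1.intervalIntegrable _ _)
      (hc1.stronglyMeasurableAtFilter _ _) hc1.continuousAt
  have hF2' : ∀ y, HasDerivAt F2 ((Lp y + Lm y) / (Lp y - Lm y)) y := fun y =>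
    intervalIntegral.integral_hasDerivAt_right (hc2.intervalIntegrable _ _)
      (hc2.stronglyMeasurableAtFilter _ _) hc2.continuousAt
  have hTeq : ∀ a, tmap Lm Lp a (bf a) = F1 (bf a) - F1 a := by
    intro a
    have h := intervalIntegral.integral_add_adjacent_intervals
      (hc1.intervalIntegrable (μ := MeasureTheory.volume) α₀ a)
      (hc1.intervalIntegrable a (bf a))
    simp only [tmap, hF1def]
    linarith
  have hXeq : ∀ a, xmap Lm Lp a (bf a) = (a + bf a + (F2 (bf a) - F2 a)) / 2 := by
    intro a
    have h := intervalIntegral.integral_add_adjacent_intervals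
      (hc2.intervalIntegrable (μ := MeasureTheory.volume) α₀ a)
      (hc2.intervalIntegrable a (bf a))
    simp only [xmap, hF2def]
    linarith
  -- derivative of the curve components
  set tv : ℝ → ℝ := fun a => f a / deriv Lp (bf a) with htvdef
  have hTd : ∀ a, HasDerivAt (fun x => tmap Lm Lp x (bf x)) (tv a) a := by
    intro a
    have h1 : HasDerivAt (fun x => F1 (bf x) - F1 x)
        (1 / (Lp (bf a) - Lm (bf a)) * ((deriv Lp (bf a))⁻¹ * deriv Lm a)
          - 1 / (Lp a - Lm a)) a :=
      ((hF1' (bf a)).comp a (hbf' a)).sub (hF1' a)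
    have h2 := h1.congr_of_eventuallyEq (Filter.Eventually.of_forall hTeq)
    refine h2.congr_deriv ?_
    symm
    simp only [htvdef]
    rw [hf a]
    exact aux_t_s12 _ _ _ _ (hgne a) (hgne (bf a)) (hLp'ne (bf a))
  have hXd : ∀ a, HasDerivAt (fun x => xmap Lm Lp x (bf x)) (Lm a * tv a) a := by
    intro a
    have hB := hbf' a
    have h1 : HasDerivAt (fun x => (x + bf x + (F2 (bf x) - F2 x)) / 2)
        ((1 + (deriv Lp (bf a))⁻¹ * deriv Lm a +
          ((Lp (bf a) + Lm (bf a)) / (Lp (bf a) - Lm (bf a)) *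
              ((deriv Lp (bf a))⁻¹ * deriv Lm a)
            - (Lp a + Lm a) / (Lp a - Lm a))) / 2) a :=
      (((hasDerivAt_id a).add hB).add
        (((hF2' (bf a)).comp a hB).sub (hF2' a))).div_const 2
    have h2 := h1.congr_of_eventuallyEq (Filter.Eventually.of_forall hXeq)
    refine h2.congr_deriv ?_
    symm
    simp only [htvdef]
    rw [hf a]
    have hG : Lm a - Lm (bf a) ≠ 0 := by rw [← hbf a]; exact hgne (bf a)
    rw [hbf a]
    exact aux_x_s12 (Lm a) (Lm (bf a)) (Lp a) (deriv Lm a) (deriv Lp (bf a)) (hgne a) hG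
      (hLp'ne (bf a))
  -- choice of ε from (H4)-(H5)
  have hslopelim : Filter.Tendsto (slope f α₀) (𝓝[≠] α₀) (𝓝 (deriv f α₀)) :=
    hasDerivAt_iff_tendsto_slope.mp hfdiff.hasDerivAt
  have hslope : ∀ᶠ x in 𝓝[≠] α₀, slope f α₀ x < 0 :=
    hslopelim.eventually (Filter.Tendsto.eventually_lt_const hf' Filter.tendsto_id)
  rw [eventually_nhdsWithin_iff] at hslope
  obtain ⟨ε, hε, hball⟩ := Metric.eventually_nhds_iff.mp hslope
  have hIl : Ioo (α₀ - ε) α₀ ⊆ Ioo (α₀ - ε) (α₀ + ε) :=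
    fun x hx => ⟨hx.1, hx.2.trans (by linarith)⟩
  have hIr : Ioo α₀ (α₀ + ε) ⊆ Ioo (α₀ - ε) (α₀ + ε) :=
    fun x hx => ⟨by have := hx.1; linarith, hx.2⟩
  have hslope' : ∀ a ∈ Ioo (α₀ - ε) (α₀ + ε), a ≠ α₀ → f a / (a - α₀) < 0 := by
    intro a ha hne
    have hd : dist a α₀ < ε := by
      rw [Real.dist_eq, abs_lt]
      constructor <;> [linarith [ha.1]; linarith [ha.2]]
    have := hball hd (by simpa using hne)
    rwa [slope_def_field, hf0, sub_zero] at this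
  -- sign facts
  have hLmpos : ∀ a, a < α₀ → 0 < Lm a := fun a h => by
    have := hLmanti h; rw [hLmα₀] at this; linarith
  have hLmneg : ∀ a, α₀ < a → Lm a < 0 := fun a h => by
    have := hLmanti h; rw [hLmα₀] at this; linarith
  have hfpos : ∀ a ∈ Ioo (α₀ - ε) α₀, 0 < f a := by
    intro a ha
    have h := hslope' a (hIl ha) ha.2.ne
    rcases div_neg_iff.mp h with ⟨h1, h2⟩ | ⟨h1, h2⟩ <;> linarith [ha.1, ha.2]
  have hfneg : ∀ a ∈ Ioo α₀ (α₀ + ε), f a < 0 := by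
    intro a ha
    have h := hslope' a (hIr ha) ha.1.ne'
    rcases div_neg_iff.mp h with ⟨h1, h2⟩ | ⟨h1, h2⟩ <;> linarith [ha.1, ha.2]
  have htvneg : ∀ a ∈ Ioo (α₀ - ε) α₀, tv a < 0 := fun a ha =>
    div_neg_of_pos_of_neg (hfpos a ha) (hLp' (bf a))
  have htvpos : ∀ a ∈ Ioo α₀ (α₀ + ε), 0 < tv a := fun a ha =>
    div_pos_of_neg_of_neg (hfneg a ha) (hLp' (bf a))
  have hxvneg : ∀ a ∈ Ioo (α₀ - ε) (α₀ + ε), a ≠ α₀ → Lm a * tv a < 0 := by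
    intro a ha hne
    rcases lt_or_gt_of_ne hne with h | h
    · exact mul_neg_of_pos_of_neg (hLmpos a h) (htvneg a ⟨ha.1, h⟩)
    · exact mul_neg_of_neg_of_pos (hLmneg a h) (htvpos a ⟨h, ha.2⟩)
  -- the curve components
  have hXc : Continuous (fun a => xmap Lm Lp a (bf a)) := by
    rw [continuous_iff_continuousAt]; exact fun a => (hXd a).continuousAt
  have hTc : Continuous (fun a => tmap Lm Lp a (bf a)) := by
    rw [continuous_iff_continuousAt]; exact fun a => (hTd a).continuousAt
  -- X is strictly decreasing on I
  have hXL : StrictAntiOn (fun a => xmap Lm Lp a (bf a)) (Ioc (α₀ - ε) α₀) := by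
    refine strictAntiOn_of_deriv_neg (convex_Ioc _ _) hXc.continuousOn ?_
    intro x hx
    rw [interior_Ioc] at hx
    rw [(hXd x).deriv]
    exact hxvneg x (hIl hx) hx.2.ne
  have hXR : StrictAntiOn (fun a => xmap Lm Lp a (bf a)) (Ico α₀ (α₀ + ε)) := by
    refine strictAntiOn_of_deriv_neg (convex_Ico _ _) hXc.continuousOn ?_
    intro x hx
    rw [interior_Ico] at hx
    rw [(hXd x).deriv]
    exact hxvneg x (hIr hx) hx.1.ne'
  have hXanti : StrictAntiOn (fun a => xmap Lm Lp a (bf a)) (Ioo (α₀ - ε) (α₀ + ε)) := by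
    intro a ha b hb hab
    rcases le_total b α₀ with h | h
    · exact hXL ⟨ha.1, hab.le.trans h⟩ ⟨hb.1, h⟩ hab
    · rcases lt_or_ge a α₀ with h2 | h2
      · have hb2 : xmap Lm Lp b (bf b) ≤ xmap Lm Lp α₀ (bf α₀) := by
          rcases eq_or_lt_of_le h with h3 | h3
          · rw [← h3]
          · exact le_of_lt (hXR ⟨le_refl _, by linarith [hε]⟩ ⟨h, hb.2⟩ h3)
        have ha2 : xmap Lm Lp α₀ (bf α₀) < xmap Lm Lp a (bf a) :=
          hXL ⟨ha.1, h2.le⟩ ⟨by linarith [hε], le_refl _⟩ h2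
        exact lt_of_le_of_lt hb2 ha2
      · exact hXR ⟨h2, ha.2⟩ ⟨h2.trans hab.le, hb.2⟩ hab
  have hXinj : InjOn (fun a => xmap Lm Lp a (bf a)) (Ioo (α₀ - ε) (α₀ + ε)) :=
    hXanti.injOn
  -- t strictly decreasing left of α₀, increasing right of α₀
  have hTL : StrictAntiOn (fun a => tmap Lm Lp a (bf a)) (Ioo (α₀ - ε) α₀) := by
    refine strictAntiOn_of_deriv_neg (convex_Ioo _ _) hTc.continuousOn ?_
    intro x hx
    rw [interior_Ioo] at hx
    rw [(hTd x).deriv]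
    exact htvneg x hx
  have hTR : StrictMonoOn (fun a => tmap Lm Lp a (bf a)) (Ioo α₀ (α₀ + ε)) := by
    refine strictMonoOn_of_deriv_pos (convex_Ioo _ _) hTc.continuousOn ?_
    intro x hx
    rw [interior_Ioo] at hx
    rw [(hTd x).deriv]
    exact htvpos x hx
  set I : Set ℝ := Ioo (α₀ - ε) (α₀ + ε) with hIdef
  set Xf : ℝ → ℝ := fun a => xmap Lm Lp a (bf a) with hXfdef
  set Tt : ℝ → ℝ := fun a => tmap Lm Lp a (bf a) with hTtdef
  set ginv : ℝ → ℝ := Function.invFunOn Xf I with hginvdef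
  set Tfun : ℝ → ℝ := fun y => Tt (ginv y) with hTfundef
  have hginva : ∀ a ∈ I, ginv (Xf a) = a := fun a ha =>
    hXinj (Function.invFunOn_apply_mem ha) ha (Function.invFunOn_apply_eq ha)
  have hgraph : ∀ a ∈ I, Tfun (Xf a) = Tt a := fun a ha => by
    simp only [hTfundef]; rw [hginva a ha]
  -- derivative of Tfun at points of the two branches
  have hTfun' : ∀ a ∈ I, a ≠ α₀ → HasDerivAt Tfun (1 / Lm a) (Xf a) := by
    intro a haI hane
    set a1 : ℝ := (a + (α₀ - ε)) / 2 with ha1def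
    set a2 : ℝ := (a + (α₀ + ε)) / 2 with ha2def
    have ha1I : a1 ∈ I := ⟨by simp only [ha1def]; linarith [haI.1],
      by simp only [ha1def]; linarith [haI.1, haI.2, hε]⟩
    have ha2I : a2 ∈ I := ⟨by simp only [ha2def]; linarith [haI.1, hε],
      by simp only [ha2def]; linarith [haI.2]⟩
    have h1a : a1 < a := by simp only [ha1def]; linarith [haI.1]
    have h2a : a < a2 := by simp only [ha2def]; linarith [haI.2]
    have hIccI : Icc a1 a2 ⊆ I := fun z hz =>
      ⟨lt_of_lt_of_le ha1I.1 hz.1, lt_of_le_of_lt hz.2 ha2I.2⟩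
    have himg : Ioo (Xf a2) (Xf a1) ⊆ Xf '' I := by
      intro z hz
      have hsub : Icc (Xf a2) (Xf a1) ⊆ Xf '' Icc a1 a2 :=
        intermediate_value_Icc' (by linarith) hXc.continuousOn
      obtain ⟨c, hc, hcz⟩ := hsub (Ioo_subset_Icc_self hz)
      exact ⟨c, hIccI hc, hcz⟩
    have hXa2 : Xf a2 < Xf a := hXanti haI ha2I h2a
    have hXa1 : Xf a < Xf a1 := hXanti ha1I haI h1a
    have hgp : ginv (Xf a) = a := hginva a haI
    have hgcont : ContinuousAt ginv (Xf a) := by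
      rw [ContinuousAt, hgp, tendsto_order]
      constructor
      · intro u hu
        have hw1 : a1 ≤ max u a1 := le_max_right _ _
        have hw2 : max u a1 < a := max_lt hu h1a
        have hwI : max u a1 ∈ I := ⟨lt_of_lt_of_le ha1I.1 hw1, lt_trans hw2 haI.2⟩
        have hXw : Xf a < Xf (max u a1) := hXanti hwI haI hw2
        have hXwa1 : Xf (max u a1) ≤ Xf a1 := by
          rcases eq_or_lt_of_le hw1 with h3 | h3
          · exact (congrArg Xf h3).ge
          · exact (hXanti ha1I hwI h3).le
        filter_upwards [Ioo_mem_nhds hXa2 hXw] with y hy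
        obtain ⟨c, hcI, hcy⟩ := himg ⟨hy.1, lt_of_lt_of_le hy.2 hXwa1⟩
        have hgy : Xf (ginv y) = y := Function.invFunOn_eq ⟨c, hcI, hcy⟩
        have hgyI : ginv y ∈ I := Function.invFunOn_mem ⟨c, hcI, hcy⟩
        have hlt : Xf (ginv y) < Xf (max u a1) := by rw [hgy]; exact hy.2
        exact lt_of_le_of_lt (le_max_left u a1) ((hXanti.lt_iff_gt hgyI hwI).mp hlt)
      · intro v hv
        have hw1 : min v a2 ≤ a2 := min_le_right _ _
        have hw2 : a < min v a2 := lt_min hv h2a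
        have hwI : min v a2 ∈ I := ⟨lt_trans haI.1 hw2, lt_of_le_of_lt hw1 ha2I.2⟩
        have hXw : Xf (min v a2) < Xf a := hXanti haI hwI hw2
        have hXwa2 : Xf a2 ≤ Xf (min v a2) := by
          rcases eq_or_lt_of_le hw1 with h3 | h3
          · exact (congrArg Xf h3).ge
          · exact (hXanti hwI ha2I h3).le
        filter_upwards [Ioo_mem_nhds hXw hXa1] with y hy
        obtain ⟨c, hcI, hcy⟩ := himg ⟨lt_of_le_of_lt hXwa2 hy.1, hy.2⟩
        have hgy : Xf (ginv y) = y := Function.invFunOn_eq ⟨c, hcI, hcy⟩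
        have hgyI : ginv y ∈ I := Function.invFunOn_mem ⟨c, hcI, hcy⟩
        have hlt : Xf (min v a2) < Xf (ginv y) := by rw [hgy]; exact hy.1
        exact lt_of_lt_of_le ((hXanti.lt_iff_gt hwI hgyI).mp hlt) (min_le_left v a2)
    have hfg : ∀ᶠ y in 𝓝 (Xf a), Xf (ginv y) = y := by
      filter_upwards [Ioo_mem_nhds hXa2 hXa1] with y hy
      obtain ⟨c, hcI, hcy⟩ := himg hy
      exact Function.invFunOn_eq ⟨c, hcI, hcy⟩
    have hxvne : Lm a * tv a ≠ 0 := (hxvneg a haI hane).ne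
    have hXda : HasDerivAt Xf (Lm a * tv a) (ginv (Xf a)) := by rw [hgp]; exact hXd a
    have hinv : HasDerivAt ginv (Lm a * tv a)⁻¹ (Xf a) :=
      HasDerivAt.of_local_left_inverse hgcont hXda hxvne hfg
    have hTta : HasDerivAt Tt (tv a) (ginv (Xf a)) := by rw [hgp]; exact hTd a
    have hcomp : HasDerivAt Tfun (tv a * (Lm a * tv a)⁻¹) (Xf a) := hTta.comp _ hinv
    have htvne : tv a ≠ 0 := by
      rcases lt_or_gt_of_ne hane with h | h
      · exact (htvneg a ⟨haI.1, h⟩).ne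
      · exact (htvpos a ⟨h, haI.2⟩).ne'
    have hLmne : Lm a ≠ 0 := by
      rcases lt_or_gt_of_ne hane with h | h
      · exact (hLmpos a h).ne'
      · exact (hLmneg a h).ne
    convert hcomp using 1
    rw [mul_inv, ← mul_assoc, mul_comm (tv a), mul_assoc, mul_inv_cancel₀ htvne,
      mul_one, one_div]
  -- assembling the five statements
  refine ⟨ε, hε, Tfun, ?_, ?_, ?_, ?_, ?_⟩
  · intro a ha
    exact hgraph a ha
  · rintro p ⟨b1, hb1, rfl⟩ q ⟨b2, hb2, rfl⟩ hpq
    rw [hgraph b1 (hIl hb1), hgraph b2 (hIl hb2)]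
    exact hTL hb2 hb1 ((hXanti.lt_iff_gt (hIl hb1) (hIl hb2)).mp hpq)
  · have hconv : Convex ℝ (Xf '' Ioo (α₀ - ε) α₀) := by
      rw [convex_iff_ordConnected]
      constructor
      rintro p ⟨b1, hb1, rfl⟩ q ⟨b2, hb2, rfl⟩ z hz
      have huIcc : uIcc b1 b2 ⊆ Ioo (α₀ - ε) α₀ :=
        (Set.ordConnected_Ioo).uIcc_subset hb1 hb2
      have hz2 : z ∈ Xf '' uIcc b1 b2 :=
        intermediate_value_uIcc hXc.continuousOn (Icc_subset_uIcc hz)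
      obtain ⟨c, hc, rfl⟩ := hz2
      exact ⟨c, huIcc hc, rfl⟩
    refine AntitoneOn.concaveOn_of_deriv hconv ?_ ?_ ?_
    · rintro z ⟨b, hb, rfl⟩
      exact ((hTfun' b (hIl hb) hb.2.ne).continuousAt).continuousWithinAt
    · intro z hz
      obtain ⟨b, hb, rfl⟩ := interior_subset hz
      exact (hTfun' b (hIl hb) hb.2.ne).differentiableAt.differentiableWithinAt
    · intro z1 hz1 z2 hz2 hle
      obtain ⟨b1, hb1, rfl⟩ := interior_subset hz1
      obtain ⟨b2, hb2, rfl⟩ := interior_subset hz2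
      rw [(hTfun' b1 (hIl hb1) hb1.2.ne).deriv, (hTfun' b2 (hIl hb2) hb2.2.ne).deriv]
      rcases eq_or_lt_of_le hle with h | h
      · rw [hXinj (hIl hb1) (hIl hb2) h]
      · exact one_div_le_one_div_of_le (hLmpos b1 hb1.2)
          (hLmanti ((hXanti.lt_iff_gt (hIl hb1) (hIl hb2)).mp h)).le
  · rintro p ⟨b1, hb1, rfl⟩ q ⟨b2, hb2, rfl⟩ hpq
    rw [hgraph b1 (hIr hb1), hgraph b2 (hIr hb2)]
    exact hTR hb2 hb1 ((hXanti.lt_iff_gt (hIr hb1) (hIr hb2)).mp hpq)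
  · have hconv : Convex ℝ (Xf '' Ioo α₀ (α₀ + ε)) := by
      rw [convex_iff_ordConnected]
      constructor
      rintro p ⟨b1, hb1, rfl⟩ q ⟨b2, hb2, rfl⟩ z hz
      have huIcc : uIcc b1 b2 ⊆ Ioo α₀ (α₀ + ε) :=
        (Set.ordConnected_Ioo).uIcc_subset hb1 hb2
      have hz2 : z ∈ Xf '' uIcc b1 b2 :=
        intermediate_value_uIcc hXc.continuousOn (Icc_subset_uIcc hz)
      obtain ⟨c, hc, rfl⟩ := hz2
      exact ⟨c, huIcc hc, rfl⟩
    refine AntitoneOn.concaveOn_of_deriv hconv ?_ ?_ ?_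
    · rintro z ⟨b, hb, rfl⟩
      exact ((hTfun' b (hIr hb) hb.1.ne').continuousAt).continuousWithinAt
    · intro z hz
      obtain ⟨b, hb, rfl⟩ := interior_subset hz
      exact (hTfun' b (hIr hb) hb.1.ne').differentiableAt.differentiableWithinAt
    · intro z1 hz1 z2 hz2 hle
      obtain ⟨b1, hb1, rfl⟩ := interior_subset hz1
      obtain ⟨b2, hb2, rfl⟩ := interior_subset hz2
      rw [(hTfun' b1 (hIr hb1) hb1.1.ne').deriv, (hTfun' b2 (hIr hb2) hb2.1.ne').deriv]
      rcases eq_or_lt_of_le hle with h | h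
      · rw [hXinj (hIr hb1) (hIr hb2) h]
      · exact one_div_le_one_div_of_neg_of_le (hLmneg b2 hb2.1)
          (hLmanti ((hXanti.lt_iff_gt (hIr hb1) (hIr hb2)).mp h)).le
end
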